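/- arXiv:1606.03829 — 3 statements merged into one kernel-verified Lean document; each statement's English description precedes it below -/
import Mathlib

section
/- Let P be a finite graded poset of rank n+1 with minimum 0̂ and maximum 1̂ such that P ∖ {1̂} is simplicial, and let G be a group of automorphisms of P whose action is good. Then for every S ⊆ {1,…,n−1}, β_P(S) + β_P(S ∪ {n}) = b_n(S) · α_P({n}), where b_n(S) is the number of permutations in 𝔖_n with descent set S. -/
open scoped Classical

noncomputable section

/-! ### Permutation combinatorics -/

/-- The value `w(i)` (1-based, in `{1,…,n}`) of a permutation `w` of `{1,…,n}`,
realized as `Equiv.Perm (Fin n)`. -/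
def permApp {n : ℕ} (w : Equiv.Perm (Fin n)) (i : ℕ) : ℕ :=
  if h : i - 1 < n then (w ⟨i - 1, h⟩ : ℕ) + 1 else 0

/-- The descent set of a permutation, a subset of `{1,…,n-1}`. -/
def descentSet {n : ℕ} (w : Equiv.Perm (Fin n)) : Finset ℕ :=
  (Finset.Icc 1 (n - 1)).filter fun i => permApp w (i + 1) < permApp w i

/-- `numDescentSet m T` is the number of permutations in `𝔖_m` with descent set `T`. -/
def numDescentSet (m : ℕ) (T : Finset ℕ) : ℕ :=
  Nat.card {w : Equiv.Perm (Fin m) // descentSet w = T}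

/-- The Coxeter length (number of inversions) of a permutation. -/
def invCount {n : ℕ} (w : Equiv.Perm (Fin n)) : ℕ :=
  (Finset.univ.filter fun p : Fin n × Fin n => p.1 < p.2 ∧ w p.2 < w p.1).card

/-- For `S = {s_1 < s_2 < ⋯ < s_k} ⊆ {1,…,n-1}`, `sElt n S j = s_j`, with the
conventions `s_0 = 0` and `s_j = n` for `j > k`. -/
def sElt (n : ℕ) (S : Finset ℕ) (j : ℕ) : ℕ :=
  if j = 0 then 0 else if j ≤ S.card then (S.sort (· ≤ ·)).getD (j - 1) 0 else n

lemma sElt_of_gt (n : ℕ) (S : Finset ℕ) (j : ℕ) (h : S.card < j) : sElt n S j = n := by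
  unfold sElt
  rw [if_neg (by omega), if_neg (by omega)]

/-! ### Standard Young tableaux -/

/-- A standard Young tableau of shape `μ`: a filling of the cells of `μ` by the numbers
`1,…,μ.card`, each used once, strictly increasing along rows and columns
(the entry of a non-cell is `0`). -/
structure SYT (μ : YoungDiagram) where
  entry : ℕ → ℕ → ℕ
  entry_eq_zero : ∀ i j, (i, j) ∉ μ → entry i j = 0
  row_strict : ∀ i j1 j2, j1 < j2 → (i, j2) ∈ μ → entry i j1 < entry i j2
  col_strict : ∀ i1 i2 j, i1 < i2 → (i2, j) ∈ μ → entry i1 j < entry i2 j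
  bijOn : Set.BijOn (fun p : ℕ × ℕ => entry p.1 p.2) ↑μ.cells ↑(Finset.Icc 1 μ.card)

/-- The descent set of a standard Young tableau: those `k` such that `k+1` lies in a
strictly lower row than `k`. -/
def SYT.des {μ : YoungDiagram} (Q : SYT μ) : Finset ℕ :=
  (Finset.Icc 1 (μ.card - 1)).filter fun k =>
    ∃ p1 ∈ μ.cells, ∃ p2 ∈ μ.cells,
      Q.entry p1.1 p1.2 = k ∧ Q.entry p2.1 p2.2 = k + 1 ∧ p1.1 < p2.1

/-- `fSYTRow μ t` is the number of standard Young tableaux of shape `μ` whose first row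
contains the numbers `1,…,t`. -/
def fSYTRow (μ : YoungDiagram) (t : ℕ) : ℕ :=
  Nat.card {Q : SYT μ // ∀ k, 1 ≤ k → k ≤ t → ∃ j, (0, j) ∈ μ ∧ Q.entry 0 j = k}

/-! ### Irreducible characters of the symmetric group, via Jacobi–Trudi -/

/-- The number of functions `f : Fin n → Fin k` which are invariant under `g` and whose
fiber over `i` has `c i` elements.  For `c` a composition of `n`, the function
`g ↦ fixedYoungFns n k c g` is the character of the permutation representation of `𝔖_n`
on ordered set partitions of `{1,…,n}` of type `c`, i.e. of the representation induced
from the trivial representation of the corresponding Young subgroup. -/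
def fixedYoungFns (n k : ℕ) (c : Fin k → ℤ) (g : Equiv.Perm (Fin n)) : ℕ :=
  Nat.card {f : Fin n → Fin k //
    (∀ x, f (g x) = f x) ∧ ∀ i, ((Nat.card {x : Fin n // f x = i} : ℕ) : ℤ) = c i}

/-- The irreducible character `χ^μ` of `𝔖_n` associated to a partition `μ` of `n`
(encoded as a Young diagram with `n` cells), defined through the Jacobi–Trudi
determinantal formula `χ^μ = det (h_{μ_i - i + j})`. -/
def chi (n : ℕ) (μ : YoungDiagram) (g : Equiv.Perm (Fin n)) : ℤ :=
  ∑ σ : Equiv.Perm (Fin μ.rowLens.length),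
    ((Equiv.Perm.sign σ : ℤˣ) : ℤ) *
      (fixedYoungFns n μ.rowLens.length
        (fun i => ((μ.rowLen (i : ℕ) : ℕ) : ℤ) - ((i : ℕ) : ℤ) + ((σ i : ℕ) : ℤ)) g : ℤ)

/-! ### Posets, rank selection, maximal chains and characters -/

/-- The maximal chains of the subposet induced on a subset `A` of a poset. -/
def maxChainsIn {P : Type*} [Preorder P] (A : Set P) : Set (Set P) :=
  {C | C ⊆ A ∧ IsChain (· ≤ ·) C ∧
    ∀ D : Set P, D ⊆ A → IsChain (· ≤ ·) D → C ⊆ D → C = D}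

/-- The rank-selected subposet `P_S = {x ∈ P : rk x ∈ S} ∪ {⊥, ⊤}`. -/
def rankSel {P : Type*} [Preorder P] [OrderBot P] [OrderTop P] (rk : P → ℕ)
    (S : Finset ℕ) : Set P :=
  {x | rk x ∈ S} ∪ {⊥, ⊤}

/-- `a_P(S)`: the number of maximal chains of the rank-selected subposet `P_S`. -/
def chainCount {P : Type*} [Preorder P] [OrderBot P] [OrderTop P] (rk : P → ℕ)
    (S : Finset ℕ) : ℕ :=
  Set.ncard (maxChainsIn (rankSel rk S))

/-- `b_P(S) = Σ_{T ⊆ S} (-1)^{|S-T|} a_P(T)`. -/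
def bDim {P : Type*} [Preorder P] [OrderBot P] [OrderTop P] (rk : P → ℕ)
    (S : Finset ℕ) : ℤ :=
  ∑ T ∈ S.powerset, (-1 : ℤ) ^ (S.card - T.card) * (chainCount rk T : ℤ)

/-- The character of the permutation representation `α_P(S)` of a group `G` acting (via
`act`) on the maximal chains of the rank-selected subposet `P_S`: its value at `g` is
the number of maximal chains of `P_S` fixed by `g`. -/
def gAlpha {P G : Type*} [Preorder P] [OrderBot P] [OrderTop P] (rk : P → ℕ)
    (act : G → P → P) (S : Finset ℕ) (g : G) : ℤ :=
  (Set.ncard {C : Set P | C ∈ maxChainsIn (rankSel rk S) ∧ act g '' C = C} : ℤ)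

/-- The character of the virtual representation
`β_P(S) = Σ_{T ⊆ S} (-1)^{|S-T|} α_P(T)`. -/
def gBeta {P G : Type*} [Preorder P] [OrderBot P] [OrderTop P] (rk : P → ℕ)
    (act : G → P → P) (S : Finset ℕ) (g : G) : ℤ :=
  ∑ T ∈ S.powerset, (-1 : ℤ) ^ (S.card - T.card) * gAlpha rk act T g

/-! ### The poset of injective words -/

/-- An injective word over the alphabet `{1,…,n}`. -/
def InjWord (n : ℕ) : Type := {l : List (Fin n) // l.Nodup}

instance (n : ℕ) : PartialOrder (InjWord n) where
  le u v := u.1.Sublist v.1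
  le_refl u := List.Sublist.refl _
  le_trans u v w h1 h2 := List.Sublist.trans h1 h2
  le_antisymm u v h1 h2 := Subtype.ext (List.Sublist.antisymm h1 h2)

instance (n : ℕ) : OrderBot (InjWord n) where
  bot := ⟨[], List.nodup_nil⟩
  bot_le u := List.nil_sublist u.1

/-- The rank function of the poset of injective words (with a maximum adjoined):
the rank of a word is its length, and the rank of `⊤` is `n+1`. -/
def rkInj (n : ℕ) (x : WithTop (InjWord n)) : ℕ :=
  WithTop.recTopCoe (n + 1) (fun u => u.1.length) x

/-- The action of `𝔖_n` on injective words, letter by letter. -/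
def permWord {n : ℕ} (w : Equiv.Perm (Fin n)) (u : InjWord n) : InjWord n :=
  ⟨u.1.map w, u.2.map w.injective⟩

/-- The character of `α_{P_n}(S)` for the `𝔖_n`-action on the poset of injective words. -/
def injAlpha (n : ℕ) (S : Finset ℕ) (g : Equiv.Perm (Fin n)) : ℤ :=
  gAlpha (rkInj n) (fun w : Equiv.Perm (Fin n) => WithTop.map (permWord w)) S g

/-- The character of `β_{P_n}(S)` for the `𝔖_n`-action on the poset of injective words. -/
def injBeta (n : ℕ) (S : Finset ℕ) (g : Equiv.Perm (Fin n)) : ℤ :=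
  gBeta (rkInj n) (fun w : Equiv.Perm (Fin n) => WithTop.map (permWord w)) S g

/-! ### The poset of r-colored injective words -/

/-- An `r`-colored injective word over `{1,…,n}`: a word in the alphabet
`{1,…,n} × ℤ_r` whose letters have pairwise distinct first coordinates. -/
def CInjWord (n r : ℕ) : Type := {l : List (Fin n × ZMod r) // (l.map Prod.fst).Nodup}

instance (n r : ℕ) : PartialOrder (CInjWord n r) where
  le u v := u.1.Sublist v.1
  le_refl u := List.Sublist.refl _
  le_trans u v w h1 h2 := List.Sublist.trans h1 h2
  le_antisymm u v h1 h2 := Subtype.ext (List.Sublist.antisymm h1 h2)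

instance (n r : ℕ) : OrderBot (CInjWord n r) where
  bot := ⟨[], by simp⟩
  bot_le u := List.nil_sublist u.1

/-- The rank function of the poset `P_{n,r}` of `r`-colored injective words
(with a maximum adjoined). -/
def rkC (n r : ℕ) (x : WithTop (CInjWord n r)) : ℕ :=
  WithTop.recTopCoe (n + 1) (fun u => u.1.length) x

/-- The action of `𝔖_n` on `r`-colored injective words: act on the first coordinate
of each letter, leaving colors unchanged. -/
def permCWord {n r : ℕ} (w : Equiv.Perm (Fin n)) (u : CInjWord n r) : CInjWord n r :=
  ⟨u.1.map (fun p => (w p.1, p.2)), by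
    have h := u.2.map w.injective
    rw [List.map_map] at h ⊢
    exact h⟩

/-- The character of `α_{P_{n,r}}(S)`. -/
def cAlpha (n r : ℕ) (S : Finset ℕ) (g : Equiv.Perm (Fin n)) : ℤ :=
  gAlpha (rkC n r) (fun w : Equiv.Perm (Fin n) => WithTop.map (permCWord w)) S g

/-- The character of `β_{P_{n,r}}(S)`. -/
def cBeta (n r : ℕ) (S : Finset ℕ) (g : Equiv.Perm (Fin n)) : ℤ :=
  gBeta (rkC n r) (fun w : Equiv.Perm (Fin n) => WithTop.map (permCWord w)) S g

/-- `b_{P_{n,r}}(S)`, the dimension of `β_{P_{n,r}}(S)`. -/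
def cChainDim (n r : ℕ) (S : Finset ℕ) : ℤ := bDim (rkC n r) S

/-! ### The statistics τ -/

/-- `τ(w,Q)` for a permutation `w` with descent set `S = {s_1 < ⋯ < s_k}` and a standard
Young tableau `Q`: the largest `i ∈ {0,…,k+1}` such that (a) `w(x) = w_S(x)` for
`x > s_{k+1-i}` and (b) no descent of `Q` is smaller than `n - s_{k+1-i}`. -/
def tau (n : ℕ) (S : Finset ℕ) (wS w : Equiv.Perm (Fin n)) {μ : YoungDiagram}
    (Q : SYT μ) : ℕ :=
  ((Finset.range (S.card + 2)).filter
    (fun i => (∀ x, sElt n S (S.card + 1 - i) < x → x ≤ n → permApp w x = permApp wS x) ∧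
      (∀ d ∈ Q.des, n - sElt n S (S.card + 1 - i) ≤ d))).max'
    ⟨0, by
      have hs := sElt_of_gt n S (S.card + 1 - 0) (by omega)
      refine Finset.mem_filter.2 ⟨Finset.mem_range.2 (by omega), ?_, ?_⟩
      · intro x hx hx'
        rw [hs] at hx
        exact absurd hx (not_lt.2 hx')
      · intro d _
        rw [hs]
        omega⟩

/-- The condition that all the numbers `1,…,t` appear in the first row of the `r`-colored
standard Young tableau `(Q, c)` and are colored with the zero color (the color of the
entry `k` being `c (k-1)`). -/
def zeroFirstRow {μ : YoungDiagram} {r : ℕ} (Q : SYT μ) (c : Fin μ.card → ZMod r)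
    (t : ℕ) : Prop :=
  ∀ k : Fin μ.card, (k : ℕ) < t →
    ((∃ j, (0, j) ∈ μ ∧ Q.entry 0 j = (k : ℕ) + 1) ∧ c k = 0)

/-- `τ(w,Q)` for an `r`-colored standard Young tableau `(Q,c)`. -/
def ctau (n : ℕ) {r : ℕ} (S : Finset ℕ) (wS w : Equiv.Perm (Fin n)) {μ : YoungDiagram}
    (Q : SYT μ) (c : Fin μ.card → ZMod r) : ℕ :=
  ((Finset.range (S.card + 2)).filter
    (fun i => (∀ x, sElt n S (S.card + 1 - i) < x → x ≤ n → permApp w x = permApp wS x) ∧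
      zeroFirstRow Q c (n - sElt n S (S.card + 1 - i)))).max'
    ⟨0, by
      have hs := sElt_of_gt n S (S.card + 1 - 0) (by omega)
      refine Finset.mem_filter.2 ⟨Finset.mem_range.2 (by omega), ?_, ?_⟩
      · intro x hx hx'
        rw [hs] at hx
        exact absurd hx (not_lt.2 hx')
      · rw [hs]
        intro k hk
        exact absurd hk (by omega)⟩

/-- The largest `i ∈ {0,…,n}` such that all the numbers `1,…,i` appear in the first row
of the `r`-colored standard Young tableau `(Q,c)` and are colored with the zero color. -/
def mQ (n : ℕ) {r : ℕ} {μ : YoungDiagram} (Q : SYT μ) (c : Fin μ.card → ZMod r) : ℕ :=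
  ((Finset.range (n + 1)).filter (fun i => zeroFirstRow Q c i)).max'
    ⟨0, Finset.mem_filter.2 ⟨Finset.mem_range.2 (by omega),
      fun k hk => absurd hk (by omega)⟩⟩

/-- The condition, for an `r`-colored permutation `(π, c)` (the color of the entry
`π(x)` in one-line notation being `c (x-1)`), that the entries `π(1),…,π(t)` are in
increasing order and all colored with the zero color. -/
def zeroIncreasing {n r : ℕ} (π : Equiv.Perm (Fin n)) (c : Fin n → ZMod r) (t : ℕ) : Prop :=
  (∀ x y, 1 ≤ x → x < y → y ≤ t → permApp π x < permApp π y) ∧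
  ∀ k : Fin n, (k : ℕ) < t → c k = 0

/-- `τ(w,u)` for an `r`-colored permutation `u = (π, c)`. -/
def tauU (n : ℕ) {r : ℕ} (S : Finset ℕ) (wS w : Equiv.Perm (Fin n))
    (π : Equiv.Perm (Fin n)) (c : Fin n → ZMod r) : ℕ :=
  ((Finset.range (S.card + 2)).filter
    (fun i => (∀ x, sElt n S (S.card + 1 - i) < x → x ≤ n → permApp w x = permApp wS x) ∧
      zeroIncreasing π c (n - sElt n S (S.card + 1 - i)))).max'
    ⟨0, by
      have hs := sElt_of_gt n S (S.card + 1 - 0) (by omega)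
      refine Finset.mem_filter.2 ⟨Finset.mem_range.2 (by omega), ?_, ?_, ?_⟩
      · intro x hx hx'
        rw [hs] at hx
        exact absurd hx (not_lt.2 hx')
      · intro x y hx hxy hy
        rw [hs] at hy
        exact absurd hy (by omega)
      · rw [hs]
        intro k hk
        exact absurd hk (by omega)⟩

/-- The largest `i ∈ {0,…,n}` such that the entries `π(1),…,π(i)` of the `r`-colored
permutation `(π,c)` are in increasing order and all colored with the zero color. -/
def mU (n : ℕ) {r : ℕ} (π : Equiv.Perm (Fin n)) (c : Fin n → ZMod r) : ℕ :=
  ((Finset.range (n + 1)).filter (fun i => zeroIncreasing π c i)).max'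
    ⟨0, Finset.mem_filter.2 ⟨Finset.mem_range.2 (by omega),
      fun x y hx hxy hy => absurd hy (by omega),
      fun k hk => absurd hk (by omega)⟩⟩

/-- `a_m(T)`: the number of chains in the Boolean lattice `B_m` whose elements have
set of ranks (cardinalities) equal to `T`. -/
def boolChains (m : ℕ) (T : Finset ℕ) : ℕ :=
  Nat.card {c : Finset (Finset (Fin m)) //
    IsChain (· ⊆ ·) (↑c : Set (Finset (Fin m))) ∧ c.image Finset.card = T}

end

set_option linter.unusedSectionVars false
set_option linter.unusedVariables false
set_option maxHeartbeats 1000000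

noncomputable section AuxiliaryLemmas

section Graded
variable {P : Type*} [Fintype P] [PartialOrder P] {ρ : P → ℕ}

lemma rho_lt_of_lt (hρcov : ∀ a b : P, a ⋖ b → ρ b = ρ a + 1) :
    ∀ x y : P, x < y → ρ x < ρ y := by
  have key : ∀ k (x y : P), (Finset.univ.filter fun w => x < w ∧ w ≤ y).card ≤ k →
      x < y → ρ x < ρ y := by
    intro k
    induction k with
    | zero =>
      intro x y hc hxy
      have : y ∈ (Finset.univ.filter fun w => x < w ∧ w ≤ y) := by simp [hxy]
      have := Finset.card_pos.2 ⟨y, this⟩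
      omega
    | succ k ih =>
      intro x y hc hxy
      obtain ⟨z, hxz, hzy⟩ := hxy.exists_covby_le
      rcases eq_or_lt_of_le hzy with rfl | hlt
      · rw [hρcov _ _ hxz]; omega
      · have hz : ρ z < ρ y := by
          apply ih z y ?_ hlt
          have hsub : (Finset.univ.filter fun w => z < w ∧ w ≤ y) ⊆
              (Finset.univ.filter fun w => x < w ∧ w ≤ y).erase z := by
            intro w hw
            simp only [Finset.mem_filter, Finset.mem_erase, Finset.mem_univ, true_and] at hw ⊢
            refine ⟨fun h => absurd (h ▸ hw.1) (lt_irrefl z), hxz.lt.trans hw.1, hw.2⟩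
          have h1 := Finset.card_le_card hsub
          have hzmem : z ∈ (Finset.univ.filter fun w => x < w ∧ w ≤ y) := by
            simp [hxz.lt, hzy]
          have h2 := Finset.card_erase_of_mem hzmem
          omega
        have := hρcov _ _ hxz; omega
  intro x y hxy; exact key _ x y le_rfl hxy

lemma exists_rho_between (hρcov : ∀ a b : P, a ⋖ b → ρ b = ρ a + 1) :
    ∀ (t : ℕ) (x y : P), x < y → ρ x < t → t ≤ ρ y →
    ∃ z, x < z ∧ z ≤ y ∧ ρ z = t := by
  have key : ∀ k (t : ℕ) (x y : P), t - ρ x ≤ k → x < y → ρ x < t → t ≤ ρ y →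
      ∃ z, x < z ∧ z ≤ y ∧ ρ z = t := by
    intro k
    induction k with
    | zero => intro t x y h1 _ h2 _; omega
    | succ k ih =>
      intro t x y h1 hxy h2 h3
      obtain ⟨z, hxz, hzy⟩ := hxy.exists_covby_le
      have hz := hρcov _ _ hxz
      rcases eq_or_lt_of_le (show ρ x + 1 ≤ t by omega) with heq | hlt
      · exact ⟨z, hxz.lt, hzy, by omega⟩
      · have hzy' : z < y := by
          rcases eq_or_lt_of_le hzy with rfl | h
          · exact absurd h3 (by omega)
          · exact h
        obtain ⟨z', h1', h2', h3'⟩ := ih t z y (by omega) hzy' (by omega) h3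
        exact ⟨z', hxz.lt.trans h1', h2', h3'⟩
  intro t x y; exact key (t - ρ x) t x y le_rfl

variable [BoundedOrder P] {n : ℕ}

lemma eq_bot_of_rho (hρcov : ∀ a b : P, a ⋖ b → ρ b = ρ a + 1) (hρbot : ρ ⊥ = 0)
    {x : P} (hx : ρ x = 0) : x = ⊥ := by
  by_contra h
  have := rho_lt_of_lt hρcov ⊥ x (Ne.bot_lt h)
  omega

lemma ne_top_of_rho (hρcov : ∀ a b : P, a ⋖ b → ρ b = ρ a + 1) (hρtop : ρ ⊤ = n + 1)
    {x : P} (hx : ρ x ≤ n) : x ≠ ⊤ := by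
  intro h; rw [h, hρtop] at hx; omega

lemma eq_of_le_of_rho (hρcov : ∀ a b : P, a ⋖ b → ρ b = ρ a + 1)
    {x y : P} (hxy : x ≤ y) (hr : ρ y ≤ ρ x) : x = y := by
  rcases eq_or_lt_of_le hxy with rfl | h
  · rfl
  · have := rho_lt_of_lt hρcov _ _ h; omega

/-- two elements of a chain with comparable ranks are comparable -/
lemma chain_le_of_rho_le (hρcov : ∀ a b : P, a ⋖ b → ρ b = ρ a + 1)
    {C : Set P} (hch : IsChain (· ≤ ·) C) {c d : P} (hc : c ∈ C) (hd : d ∈ C)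
    (h : ρ c ≤ ρ d) : c ≤ d := by
  rcases eq_or_ne c d with rfl | hne
  · exact le_rfl
  rcases hch hc hd hne with h' | h'
  · exact h'
  · have := rho_lt_of_lt hρcov _ _ (lt_of_le_of_ne h' (Ne.symm hne))
    omega

lemma chain_eq_of_rho_eq (hρcov : ∀ a b : P, a ⋖ b → ρ b = ρ a + 1)
    {C : Set P} (hch : IsChain (· ≤ ·) C) {c d : P} (hc : c ∈ C) (hd : d ∈ C)
    (h : ρ c = ρ d) : c = d :=
  le_antisymm (chain_le_of_rho_le hρcov hch hc hd h.le)
    (chain_le_of_rho_le hρcov hch hd hc h.ge)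

end Graded



section Graded
variable {P : Type*} [Fintype P] [PartialOrder P] {ρ : P → ℕ}



variable [BoundedOrder P] {n : ℕ}

lemma bot_mem_rankSel {U : Finset ℕ} : (⊥ : P) ∈ rankSel ρ U := Or.inr (Or.inl rfl)
lemma top_mem_rankSel {U : Finset ℕ} : (⊤ : P) ∈ rankSel ρ U := Or.inr (Or.inr rfl)

lemma mem_rankSel_of_rho {U : Finset ℕ} {z : P} (h : ρ z ∈ U) : z ∈ rankSel ρ U := Or.inl h

lemma mem_rankSel_iff {U : Finset ℕ} {z : P} :
    z ∈ rankSel ρ U ↔ ρ z ∈ U ∨ z = ⊥ ∨ z = ⊤ := by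
  simp only [rankSel, Set.mem_union, Set.mem_setOf_eq, Set.mem_insert_iff, Set.mem_singleton_iff]

lemma mem_maxChainsIn_iff (hρcov : ∀ a b : P, a ⋖ b → ρ b = ρ a + 1)
    (hρbot : ρ ⊥ = 0) (hρtop : ρ ⊤ = n + 1)
    {U : Finset ℕ} (hU : ∀ t ∈ U, t ≤ n) (C : Set P) :
    C ∈ maxChainsIn (rankSel ρ U) ↔
      C ⊆ rankSel ρ U ∧ IsChain (· ≤ ·) C ∧ ⊥ ∈ C ∧ ⊤ ∈ C ∧
        ∀ t ∈ U, ∃ x ∈ C, ρ x = t := by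
  constructor
  · rintro ⟨hCA, hch, hmax⟩
    have hbot : ⊥ ∈ C := by
      have := hmax (insert ⊥ C) (Set.insert_subset bot_mem_rankSel hCA)
        (hch.insert fun b _ _ => Or.inl bot_le) (Set.subset_insert _ _)
      rw [this]; exact Set.mem_insert _ _
    have htop : ⊤ ∈ C := by
      have := hmax (insert ⊤ C) (Set.insert_subset top_mem_rankSel hCA)
        (hch.insert fun b _ _ => Or.inr le_top) (Set.subset_insert _ _)
      rw [this]; exact Set.mem_insert _ _
    refine ⟨hCA, hch, hbot, htop, fun t ht => ?_⟩
    by_contra hno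
    push_neg at hno
    rcases Nat.eq_zero_or_pos t with rfl | htpos
    · exact hno ⊥ hbot hρbot
    -- a : maximal element of C with rank < t
    obtain ⟨a, ⟨haC, hart⟩, hamax⟩ :=
      Set.Finite.exists_maximalFor ρ {c | c ∈ C ∧ ρ c < t} (Set.toFinite _)
        ⟨⊥, hbot, by omega⟩
    -- b : minimal element of C with rank ≥ t
    obtain ⟨b, ⟨hbC, hbrt⟩, hbmin⟩ :=
      Set.Finite.exists_minimalFor ρ {c | c ∈ C ∧ t ≤ ρ c} (Set.toFinite _)
        ⟨⊤, htop, by have := hU t ht; omega⟩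
    have hab : a < b := by
      have hne : a ≠ b := fun h => by rw [h] at hart; omega
      rcases hch haC hbC hne with h | h
      · exact lt_of_le_of_ne h hne
      · have := rho_lt_of_lt hρcov _ _ (lt_of_le_of_ne h (Ne.symm hne)); omega
    obtain ⟨z, haz, hzb, hzt⟩ := exists_rho_between hρcov t a b hab hart hbrt
    have hzC : z ∉ C := fun h => hno z h hzt
    have hchz : IsChain (· ≤ ·) (insert z C) := by
      refine hch.insert fun c hc hne => ?_
      rcases lt_or_ge (ρ c) t with h | h
      · have hca : c ≤ a := by
          rcases eq_or_ne c a with rfl | hne'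
          · exact le_rfl
          rcases hch hc haC hne' with h' | h'
          · exact h'
          · have h'' : a < c := lt_of_le_of_ne h' (Ne.symm hne')
            have := hamax (j := c) ⟨hc, h⟩ (rho_lt_of_lt hρcov _ _ h'').le
            have := rho_lt_of_lt hρcov _ _ h''
            omega
        exact Or.inr (hca.trans haz.le)
      · have hbc : b ≤ c := by
          rcases eq_or_ne b c with rfl | hne'
          · exact le_rfl
          rcases hch hbC hc hne' with h' | h'
          · exact h'
          · have h'' : c < b := lt_of_le_of_ne h' (Ne.symm hne')
            have := hbmin (j := c) ⟨hc, h⟩ (rho_lt_of_lt hρcov _ _ h'').le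
            have := rho_lt_of_lt hρcov _ _ h''
            omega
        exact Or.inl (hzb.trans hbc)
    have := hmax (insert z C)
      (Set.insert_subset (mem_rankSel_of_rho (hzt ▸ ht)) hCA) hchz (Set.subset_insert _ _)
    exact hzC (this ▸ Set.mem_insert _ _)
  · rintro ⟨h1, h2, hb, ht, hr⟩
    refine ⟨h1, h2, fun D hDA hDch hCD => Set.Subset.antisymm hCD fun d hd => ?_⟩
    rcases (mem_rankSel_iff).1 (hDA hd) with hdU | rfl | rfl
    · obtain ⟨c, hcC, hcr⟩ := hr _ hdU
      rcases eq_or_ne c d with rfl | hne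
      · exact hcC
      rcases hDch (hCD hcC) hd hne with h' | h'
      · have := rho_lt_of_lt hρcov _ _ (lt_of_le_of_ne h' hne); omega
      · have := rho_lt_of_lt hρcov _ _ (lt_of_le_of_ne h' (Ne.symm hne)); omega
    · exact hb
    · exact ht

end Graded


section Action
variable {P : Type*} [Fintype P] [PartialOrder P] [BoundedOrder P]
variable {G : Type*} [Group G] [MulAction G P] {ρ : P → ℕ} {n : ℕ}



variable (hact : ∀ (g : G) (x y : P), x ≤ y ↔ g • x ≤ g • y)
include hact

lemma smul_bot' (g : G) : g • (⊥ : P) = ⊥ := by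
  refine le_bot_iff.1 ((hact g⁻¹ (g • ⊥) ⊥).mpr ?_)
  rw [inv_smul_smul]; exact bot_le

lemma smul_top' (g : G) : g • (⊤ : P) = ⊤ := by
  refine top_le_iff.1 ((hact g⁻¹ ⊤ (g • ⊤)).mpr ?_)
  rw [inv_smul_smul]; exact le_top

lemma smul_lt_iff (g : G) {x y : P} : x < y ↔ g • x < g • y := by
  constructor
  · intro h
    exact lt_of_le_of_ne ((hact g x y).1 h.le)
      (fun he => h.ne (smul_left_cancel g he))
  · intro h
    exact lt_of_le_of_ne ((hact g x y).2 h.le) (fun he => h.ne (he ▸ rfl))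

lemma smul_covBy (g : G) {x y : P} (h : x ⋖ y) : g • x ⋖ g • y := by
  refine ⟨(smul_lt_iff hact g).1 h.1, fun c h1 h2 => ?_⟩
  have h1' : x < g⁻¹ • c := by
    rw [smul_lt_iff hact g, smul_inv_smul]; exact h1
  have h2' : g⁻¹ • c < y := by
    rw [smul_lt_iff hact g, smul_inv_smul]; exact h2
  exact h.2 h1' h2'

lemma smul_rho (hρcov : ∀ a b : P, a ⋖ b → ρ b = ρ a + 1) (hρbot : ρ ⊥ = 0)
    (g : G) : ∀ x : P, ρ (g • x) = ρ x := by
  have key : ∀ k, ∀ x : P, ρ x ≤ k → ρ (g • x) = ρ x := by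
    intro k
    induction k with
    | zero =>
      intro x hx
      have hxb : x = ⊥ := eq_bot_of_rho hρcov hρbot (by omega)
      subst hxb; rw [smul_bot' hact]
    | succ k ih =>
      intro x hx
      rcases eq_or_ne x ⊥ with rfl | hne
      · rw [smul_bot' hact]
      · obtain ⟨z, _, hz2⟩ := (Ne.bot_lt hne).exists_le_covby
        have h1 := hρcov _ _ hz2
        have h2 := ih z (by omega)
        have h3 := hρcov _ _ (smul_covBy hact g hz2)
        omega
  intro x; exact key (ρ x) x le_rfl

lemma chain_fixed_pointwise (hρcov : ∀ a b : P, a ⋖ b → ρ b = ρ a + 1) (hρbot : ρ ⊥ = 0)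
    {g : G} {C : Set P} (hch : IsChain (· ≤ ·) C)
    (himg : (fun x => g • x) '' C = C) {c : P} (hc : c ∈ C) : g • c = c := by
  have hgc : g • c ∈ C := himg ▸ Set.mem_image_of_mem _ hc
  have hr : ρ (g • c) = ρ c := smul_rho hact hρcov hρbot g c
  rcases eq_or_ne (g • c) c with h | h
  · exact h
  rcases hch hgc hc h with h' | h'
  · have := rho_lt_of_lt hρcov _ _ (lt_of_le_of_ne h' h); omega
  · have := rho_lt_of_lt hρcov _ _ (lt_of_le_of_ne h' (Ne.symm h)); omega

omit hact in
lemma image_eq_of_fixed {g : G} {C : Set P} (h : ∀ c ∈ C, g • c = c) :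
    (fun x => g • x) '' C = C := by
  ext z
  constructor
  · rintro ⟨c, hc, rfl⟩; show g • c ∈ C; rw [h c hc]; exact hc
  · intro hz; exact ⟨z, hz, h z hz⟩

end Action


section Iso
variable {P : Type*} [Fintype P] [PartialOrder P] [BoundedOrder P] {ρ : P → ℕ} {n : ℕ}



lemma iic_covBy_iff {x : P} {y z : Set.Iic x} : y ⋖ z ↔ (y : P) ⋖ (z : P) := by
  constructor
  · rintro ⟨h1, h2⟩
    refine ⟨Subtype.coe_lt_coe.2 h1, fun c hc1 hc2 => ?_⟩
    have hcx : c ∈ Set.Iic x := le_trans hc2.le z.2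
    exact @h2 ⟨c, hcx⟩ (Subtype.mk_lt_mk.2 hc1) (Subtype.mk_lt_mk.2 hc2)
  · rintro ⟨h1, h2⟩
    exact ⟨Subtype.coe_lt_coe.1 h1, fun c hc1 hc2 =>
      h2 (Subtype.coe_lt_coe.2 hc1) (Subtype.coe_lt_coe.2 hc2)⟩

lemma card_of_iso (hρcov : ∀ a b : P, a ⋖ b → ρ b = ρ a + 1) (hρbot : ρ ⊥ = 0)
    {x : P} {m : ℕ} (e : Set.Iic x ≃o Finset (Fin m)) :
    ∀ (y : P) (hy : y ≤ x), (e ⟨y, hy⟩).card = ρ y := by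
  have hbot : e ⟨⊥, bot_le⟩ = ∅ := by
    have h1 : e.symm ∅ ≤ (⟨⊥, bot_le⟩ : Set.Iic x) := by
      have h1' : e.symm ∅ ≤ e.symm (e ⟨⊥, bot_le⟩) := e.symm.monotone (Finset.empty_subset _)
      rwa [e.symm_apply_apply] at h1'
    have h2 : ((⟨⊥, bot_le⟩ : Set.Iic x)) ≤ e.symm ∅ := bot_le
    have := le_antisymm h1 h2
    rw [← this, e.apply_symm_apply]
  have key : ∀ k (y : P) (hy : y ≤ x), ρ y ≤ k → (e ⟨y, hy⟩).card = ρ y := by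
    intro k
    induction k with
    | zero =>
      intro y hy h
      have : y = ⊥ := eq_bot_of_rho hρcov hρbot (by omega)
      subst this
      rw [hbot, Finset.card_empty, hρbot]
    | succ k ih =>
      intro y hy h
      rcases eq_or_ne y ⊥ with rfl | hne
      · rw [hbot, Finset.card_empty, hρbot]
      · obtain ⟨z, _, hz2⟩ := (Ne.bot_lt hne).exists_le_covby
        have h1 := hρcov _ _ hz2
        have hzx : z ≤ x := hz2.le.trans hy
        have h2 := ih z hzx (by omega)
        have hcov : (⟨z, hzx⟩ : Set.Iic x) ⋖ ⟨y, hy⟩ := iic_covBy_iff.2 hz2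
        have hcov' : e ⟨z, hzx⟩ ⋖ e ⟨y, hy⟩ := (apply_covBy_apply_iff e).2 hcov
        obtain ⟨a, ha, hins⟩ := Finset.covBy_iff_exists_insert.1 hcov'
        rw [← hins, Finset.card_insert_of_notMem ha]
        omega
  intro y hy; exact key (ρ y) y hy le_rfl

lemma exists_good_iso (hρcov : ∀ a b : P, a ⋖ b → ρ b = ρ a + 1) (hρbot : ρ ⊥ = 0)
    (hsimp : ∀ x : P, x ≠ ⊤ → ∃ m : ℕ, Nonempty (Set.Iic x ≃o Finset (Fin m)))
    {x : P} (hx : ρ x = n) (hxt : x ≠ ⊤) :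
    ∃ e : Set.Iic x ≃o Finset (Fin n), ∀ (y : P) (hy : y ≤ x), (e ⟨y, hy⟩).card = ρ y := by
  obtain ⟨m, ⟨e⟩⟩ := hsimp x hxt
  have hcard := card_of_iso hρcov hρbot e
  have htop : e ⟨x, le_rfl⟩ = Finset.univ := by
    apply Finset.eq_univ_of_forall
    intro a
    by_contra ha
    -- every s satisfies s ≤ e ⟨x⟩
    have : ∀ s : Finset (Fin m), s ⊆ e ⟨x, le_rfl⟩ := by
      intro s
      have : e.symm s ≤ ⟨x, le_rfl⟩ := (e.symm s).2
      have := e.monotone this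
      rwa [e.apply_symm_apply] at this
    exact ha (this Finset.univ (Finset.mem_univ a))
  have hm : m = n := by
    have := hcard x le_rfl
    rw [htop, Finset.card_univ, Fintype.card_fin] at this
    omega
  subst hm
  exact ⟨e, hcard⟩

end Iso



section PermBlocks
variable {n : ℕ}

/-- image of the first `t` positions -/
def phiW (w : Equiv.Perm (Fin n)) (t : ℕ) : Finset (Fin n) :=
  (Finset.univ.filter fun i : Fin n => (i : ℕ) < t).image w

lemma mem_phiW {w : Equiv.Perm (Fin n)} {t : ℕ} {a : Fin n} :
    a ∈ phiW w t ↔ ((w.symm a : Fin n) : ℕ) < t := by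
  simp only [phiW, Finset.mem_image, Finset.mem_filter, Finset.mem_univ, true_and]
  constructor
  · rintro ⟨i, hi, rfl⟩; rwa [Equiv.symm_apply_apply]
  · intro h; exact ⟨w.symm a, h, Equiv.apply_symm_apply _ _⟩

lemma card_filter_lt {t : ℕ} (ht : t ≤ n) :
    (Finset.univ.filter fun i : Fin n => (i : ℕ) < t).card = t := by
  have : (Finset.univ.filter fun i : Fin n => (i : ℕ) < t) =
      (Finset.univ : Finset (Fin t)).map (Fin.castLEEmb ht) := by
    ext a
    simp only [Finset.mem_filter, Finset.mem_univ, true_and, Finset.mem_map]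
    constructor
    · intro h; exact ⟨⟨(a : ℕ), h⟩, by ext; simp [Fin.castLEEmb]⟩
    · rintro ⟨b, rfl⟩; simp [Fin.castLEEmb]
  rw [this, Finset.card_map, Finset.card_univ, Fintype.card_fin]

lemma card_phiW (w : Equiv.Perm (Fin n)) {t : ℕ} (ht : t ≤ n) : (phiW w t).card = t := by
  rw [phiW, Finset.card_image_of_injective _ w.injective, card_filter_lt ht]

lemma phiW_mono (w : Equiv.Perm (Fin n)) {t t' : ℕ} (h : t ≤ t') : phiW w t ⊆ phiW w t' := by
  intro a ha; rw [mem_phiW] at ha ⊢; omega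

lemma phiW_n (w : Equiv.Perm (Fin n)) : phiW w n = Finset.univ := by
  apply Finset.eq_univ_of_forall; intro a; rw [mem_phiW]; exact (w.symm a).isLt

lemma phiW_zero (w : Equiv.Perm (Fin n)) : phiW w 0 = ∅ := by
  ext a; rw [mem_phiW]; simp

/-- block function: the least selected rank whose block contains `a` -/
def fB (T : Finset ℕ) (B : ℕ → Finset (Fin n)) (hBn : B n = Finset.univ) (a : Fin n) : ℕ :=
  ((insert n T).filter fun t => a ∈ B t).min'
    ⟨n, Finset.mem_filter.2 ⟨Finset.mem_insert_self _ _, by rw [hBn]; exact Finset.mem_univ a⟩⟩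

def keyB (T : Finset ℕ) (B : ℕ → Finset (Fin n)) (hBn : B n = Finset.univ) (a : Fin n) : ℕ :=
  (a : ℕ) + fB T B hBn a * n

variable {T : Finset ℕ} {B : ℕ → Finset (Fin n)} {hBn : B n = Finset.univ}

lemma fB_mem (a : Fin n) : fB T B hBn a ∈ insert n T ∧ a ∈ B (fB T B hBn a) := by
  have := Finset.min'_mem ((insert n T).filter fun t => a ∈ B t)
    ⟨n, Finset.mem_filter.2 ⟨Finset.mem_insert_self _ _, by rw [hBn]; exact Finset.mem_univ a⟩⟩
  exact ⟨(Finset.mem_filter.1 this).1, (Finset.mem_filter.1 this).2⟩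

lemma fB_le_of_mem {a : Fin n} {t : ℕ} (ht : t ∈ insert n T) (ha : a ∈ B t) :
    fB T B hBn a ≤ t :=
  Finset.min'_le _ _ (Finset.mem_filter.2 ⟨ht, ha⟩)

lemma mem_B_iff_fB_le
    (hm : ∀ t ∈ insert n T, ∀ t' ∈ insert n T, t ≤ t' → B t ⊆ B t')
    {a : Fin n} {t : ℕ} (ht : t ∈ insert n T) :
    a ∈ B t ↔ fB T B hBn a ≤ t := by
  constructor
  · exact fB_le_of_mem ht
  · intro h
    exact hm _ (fB_mem (T := T) (hBn := hBn) a).1 _ ht h (fB_mem a).2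

lemma keyB_lt_of_fB_lt {a b : Fin n} (h : fB T B hBn a < fB T B hBn b) :
    keyB T B hBn a < keyB T B hBn b := by
  unfold keyB
  have ha := a.isLt
  calc (a : ℕ) + fB T B hBn a * n < (fB T B hBn a + 1) * n := by ring_nf; omega
  _ ≤ fB T B hBn b * n := Nat.mul_le_mul_right n h
  _ ≤ (b : ℕ) + fB T B hBn b * n := by omega

lemma keyB_inj : Function.Injective (keyB T B hBn) := by
  intro a b h
  unfold keyB at h
  have ha := a.isLt; have hb := b.isLt
  have h1 : (a : ℕ) = ((a : ℕ) + fB T B hBn a * n) % n := by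
    rw [Nat.add_mul_mod_self_right, Nat.mod_eq_of_lt ha]
  have h2 : (b : ℕ) = ((b : ℕ) + fB T B hBn b * n) % n := by
    rw [Nat.add_mul_mod_self_right, Nat.mod_eq_of_lt hb]
  apply Fin.ext
  rw [h1, h2, h]

lemma strictMono_of_consec {f : Fin n → ℕ}
    (h : ∀ i j : Fin n, (i : ℕ) + 1 = (j : ℕ) → f i < f j) : StrictMono f := by
  have key : ∀ k (a b : Fin n), (b : ℕ) = (a : ℕ) + k + 1 → f a < f b := by
    intro k
    induction k with
    | zero => intro a b hb; exact h a b (by omega)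
    | succ k ih =>
      intro a b hb
      have hm : (a : ℕ) + k + 1 < n := by have := b.isLt; omega
      exact (ih a ⟨(a : ℕ) + k + 1, hm⟩ rfl).trans (h _ b (by simp; omega))
  intro a b hab
  rw [Fin.lt_def] at hab
  exact key ((b : ℕ) - (a : ℕ) - 1) a b (by omega)

lemma descent_mem {w : Equiv.Perm (Fin n)} {i j : Fin n} (hij : (i : ℕ) + 1 = (j : ℕ))
    (h : w j < w i) : ((j : ℕ)) ∈ descentSet w := by
  have hj := j.isLt
  refine Finset.mem_filter.2 ⟨Finset.mem_Icc.2 ⟨by omega, by omega⟩, ?_⟩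
  unfold permApp
  have h1 : (j : ℕ) + 1 - 1 < n := by omega
  have h2 : (j : ℕ) - 1 < n := by omega
  rw [dif_pos h1, dif_pos h2]
  have e1 : (⟨(j : ℕ) + 1 - 1, h1⟩ : Fin n) = j := by ext; simp
  have e2 : (⟨(j : ℕ) - 1, h2⟩ : Fin n) = i := by ext; simp; omega
  rw [e1, e2]
  have := Fin.lt_def.1 h
  omega

lemma not_descent {w : Equiv.Perm (Fin n)} {i j : Fin n} (hij : (i : ℕ) + 1 = (j : ℕ))
    (h : ((j : ℕ)) ∉ descentSet w) : w i < w j := by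
  have hj := j.isLt
  have hmem : (j : ℕ) ∈ Finset.Icc 1 (n - 1) := Finset.mem_Icc.2 ⟨by omega, by omega⟩
  have hno : ¬ permApp w ((j : ℕ) + 1) < permApp w (j : ℕ) := by
    intro hc; exact h (Finset.mem_filter.2 ⟨hmem, hc⟩)
  unfold permApp at hno
  have h1 : (j : ℕ) + 1 - 1 < n := by omega
  have h2 : (j : ℕ) - 1 < n := by omega
  rw [dif_pos h1, dif_pos h2] at hno
  have e1 : (⟨(j : ℕ) + 1 - 1, h1⟩ : Fin n) = j := by ext; simp
  have e2 : (⟨(j : ℕ) - 1, h2⟩ : Fin n) = i := by ext; simp; omega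
  rw [e1, e2] at hno
  have hne : w i ≠ w j := fun hc => by
    have := congrArg Fin.val (w.injective hc); omega
  rw [Fin.lt_def]
  have := Fin.lt_def (a := w j) (b := w i)
  omega

/-- key composed with a `T`-sorted permutation matching the blocks is strictly monotone -/
lemma keyB_comp_strictMono (hT : T ⊆ Finset.Icc 1 (n - 1))
    (hm : ∀ t ∈ insert n T, ∀ t' ∈ insert n T, t ≤ t' → B t ⊆ B t')
    {w : Equiv.Perm (Fin n)} (hw : descentSet w ⊆ T)
    (hφ : ∀ t ∈ insert n T, phiW w t = B t) :
    StrictMono (fun i : Fin n => keyB T B hBn (w i)) := by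
  apply strictMono_of_consec
  intro i j hij
  set u := fB T B hBn (w i) with hu
  set v := fB T B hBn (w j) with hv
  have humem := fB_mem (T := T) (hBn := hBn) (w i)
  have hvmem := fB_mem (T := T) (hBn := hBn) (w j)
  -- w i ∈ B u = phiW w u hence i < u
  have hiu : (i : ℕ) < u := by
    have := humem.2
    rw [← hφ _ humem.1, mem_phiW, Equiv.symm_apply_apply] at this
    exact this
  have hjv : (j : ℕ) < v := by
    have := hvmem.2
    rw [← hφ _ hvmem.1, mem_phiW, Equiv.symm_apply_apply] at this
    exact this
  -- u ≤ v since w i ∈ phiW w v = B v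
  have huv : u ≤ v := by
    have hwi : w i ∈ B v := by
      rw [← hφ _ hvmem.1, mem_phiW, Equiv.symm_apply_apply]; omega
    exact fB_le_of_mem hvmem.1 hwi
  rcases lt_or_eq_of_le huv with h | h
  · exact keyB_lt_of_fB_lt h
  · -- equal block: no descent at j
    have hnd : ((j : ℕ)) ∉ descentSet w := by
      intro hd
      have hjT : (j : ℕ) ∈ T := hw hd
      have hjmem : (j : ℕ) ∈ insert n T := Finset.mem_insert_of_mem hjT
      have : w i ∈ B (j : ℕ) := by
        rw [← hφ _ hjmem, mem_phiW, Equiv.symm_apply_apply]; omega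
      have := fB_le_of_mem (hBn := hBn) hjmem this
      omega
    have hwij := not_descent hij hnd
    unfold keyB
    rw [← hu, ← hv, h]
    have := Fin.lt_def.1 hwij
    omega

end PermBlocks

section PermBlocks2
variable {n : ℕ} {T : Finset ℕ}

lemma perm_ext_of_blocks (hT : T ⊆ Finset.Icc 1 (n - 1))
    {w w' : Equiv.Perm (Fin n)} (hw : descentSet w ⊆ T) (hw' : descentSet w' ⊆ T)
    (hB : ∀ t ∈ insert n T, phiW w t = phiW w' t) : w = w' := by
  set B : ℕ → Finset (Fin n) := fun t => phiW w t with hBdef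
  have hBn : B n = Finset.univ := phiW_n w
  have hm : ∀ t ∈ insert n T, ∀ t' ∈ insert n T, t ≤ t' → B t ⊆ B t' :=
    fun t _ t' _ h => phiW_mono w h
  have h1 : StrictMono (fun i : Fin n => keyB T B hBn (w i)) :=
    keyB_comp_strictMono hT hm hw (fun t ht => rfl)
  have h2 : StrictMono (fun i : Fin n => keyB T B hBn (w' i)) :=
    keyB_comp_strictMono hT hm hw' (fun t ht => (hB t ht).symm)
  have hrange : Set.range (fun i : Fin n => keyB T B hBn (w i)) =
      Set.range (fun i : Fin n => keyB T B hBn (w' i)) := by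
    have e1 : (fun i : Fin n => keyB T B hBn (w i)) = (keyB T B hBn) ∘ ⇑w := rfl
    have e2 : (fun i : Fin n => keyB T B hBn (w' i)) = (keyB T B hBn) ∘ ⇑w' := rfl
    rw [e1, e2, Set.range_comp, Set.range_comp, w.surjective.range_eq, w'.surjective.range_eq]
  haveI : WellFoundedLT (Fin n) := inferInstance
  have : (fun i : Fin n => keyB T B hBn (w i)) = (fun i : Fin n => keyB T B hBn (w' i)) :=
    Set.range_injOn_strictMono (β := Fin n) (γ := ℕ) h1 h2 hrange
  apply Equiv.ext
  intro i
  exact keyB_inj (congrFun this i)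

lemma exists_perm_of_blocks (hT : T ⊆ Finset.Icc 1 (n - 1)) {B : ℕ → Finset (Fin n)}
    (hc : ∀ t ∈ insert n T, (B t).card = t)
    (hm : ∀ t ∈ insert n T, ∀ t' ∈ insert n T, t ≤ t' → B t ⊆ B t') :
    ∃ w : Equiv.Perm (Fin n), descentSet w ⊆ T ∧ ∀ t ∈ insert n T, phiW w t = B t := by
  have hBn : B n = Finset.univ :=
    Finset.eq_univ_of_card _ (by rw [hc n (Finset.mem_insert_self _ _), Fintype.card_fin])
  set key := keyB T B hBn with hkey
  set w := Tuple.sort key with hwdef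
  have hmono : Monotone (key ∘ ⇑w) := Tuple.monotone_sort key
  have hsm : StrictMono (fun i : Fin n => key (w i)) := by
    apply Monotone.strictMono_of_injective hmono
    exact keyB_inj.comp w.injective
  -- t ≤ n for all t ∈ insert n T
  have htn : ∀ t ∈ insert n T, t ≤ n := by
    intro t ht
    rcases Finset.mem_insert.1 ht with rfl | ht'
    · exact le_rfl
    · have := Finset.mem_Icc.1 (hT ht'); omega
  have hφ : ∀ t ∈ insert n T, phiW w t = B t := by
    intro t ht
    have hcard : (phiW w t).card = (B t).card := by
      rw [card_phiW w (htn t ht), hc t ht]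
    by_contra hne
    have hd1 : (phiW w t \ B t).Nonempty := by
      rw [Finset.sdiff_nonempty]
      intro hsub
      exact hne (Finset.eq_of_subset_of_card_le hsub (le_of_eq hcard.symm))
    obtain ⟨a, ha⟩ := hd1
    have haφ : a ∈ phiW w t := (Finset.mem_sdiff.1 ha).1
    have haB : a ∉ B t := (Finset.mem_sdiff.1 ha).2
    have hd2 : (B t \ phiW w t).Nonempty := by
      rw [Finset.sdiff_nonempty]
      intro hsub
      exact hne ((Finset.eq_of_subset_of_card_le hsub (le_of_eq hcard)).symm)
    obtain ⟨b, hb⟩ := hd2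
    have hbB : b ∈ B t := (Finset.mem_sdiff.1 hb).1
    have hbφ : b ∉ phiW w t := (Finset.mem_sdiff.1 hb).2
    -- positions
    have hia : ((w.symm a : Fin n) : ℕ) < t := mem_phiW.1 haφ
    have hib : ¬ ((w.symm b : Fin n) : ℕ) < t := fun h => hbφ (mem_phiW.2 h)
    have hlt : w.symm a < w.symm b := by rw [Fin.lt_def]; omega
    have hK := hsm hlt
    simp only [Equiv.apply_symm_apply] at hK
    -- but key a ≥ (t+1) * n > key b
    have hfa : ¬ fB T B hBn a ≤ t := fun h => haB ((mem_B_iff_fB_le hm ht).2 h)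
    have hfb : fB T B hBn b ≤ t := fB_le_of_mem ht hbB
    have hbn := b.isLt
    have : key b < key a := by
      rw [hkey]; unfold keyB
      calc (b : ℕ) + fB T B hBn b * n < (t + 1) * n := by
            have : fB T B hBn b * n ≤ t * n := Nat.mul_le_mul_right n hfb
            rw [Nat.succ_mul]; omega
      _ ≤ fB T B hBn a * n := Nat.mul_le_mul_right n (by omega)
      _ ≤ (a : ℕ) + fB T B hBn a * n := by omega
    omega
  refine ⟨w, ?_, hφ⟩
  intro d hd
  have hdIcc := Finset.mem_Icc.1 (Finset.mem_filter.1 hd).1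
  have hdlt : d < n := by omega
  have hd1lt : d - 1 < n := by omega
  set i : Fin n := ⟨d - 1, hd1lt⟩ with hi
  set j : Fin n := ⟨d, hdlt⟩ with hj
  have hij : (i : ℕ) + 1 = (j : ℕ) := by simp [hi, hj]; omega
  -- descent: w j < w i
  have hwd := (Finset.mem_filter.1 hd).2
  unfold permApp at hwd
  have h1 : d + 1 - 1 < n := by omega
  have h2 : d - 1 < n := by omega
  rw [dif_pos h1, dif_pos h2] at hwd
  have e1 : (⟨d + 1 - 1, h1⟩ : Fin n) = j := by ext; simp [hj]
  have e2 : (⟨d - 1, h2⟩ : Fin n) = i := rfl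
  rw [e1, e2] at hwd
  have hwji : w j < w i := by rw [Fin.lt_def]; omega
  have hKij : key (w i) < key (w j) := hsm (by
    rw [Fin.lt_def]; show d - 1 < d; omega)
  -- fB (w i) vs fB (w j)
  have hf : fB T B hBn (w i) < fB T B hBn (w j) := by
    rcases lt_trichotomy (fB T B hBn (w i)) (fB T B hBn (w j)) with h | h | h
    · exact h
    · exfalso
      rw [hkey] at hKij; unfold keyB at hKij
      rw [h] at hKij
      have := Fin.lt_def.1 hwji
      omega
    · exact absurd (keyB_lt_of_fB_lt h) (by rw [hkey] at hKij; omega)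
  set t := fB T B hBn (w i) with ht
  have htmem := (fB_mem (T := T) (hBn := hBn) (w i)).1
  have hwiB : w i ∈ B t := (fB_mem (T := T) (hBn := hBn) (w i)).2
  have hwjB : w j ∉ B t := by
    intro hmem
    have := fB_le_of_mem (hBn := hBn) htmem hmem
    omega
  rw [← hφ _ htmem] at hwiB hwjB
  rw [mem_phiW, Equiv.symm_apply_apply] at hwiB
  have hjt : ¬ ((j : ℕ) < t) := fun h => hwjB (mem_phiW.2 (by rwa [Equiv.symm_apply_apply]))
  have htd : t = d := by
    have hwiB' : d - 1 < t := by simpa using hwiB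
    have hjt' : ¬ (d < t) := by simpa using hjt
    omega
  rcases Finset.mem_insert.1 htmem with h | h
  · omega
  · rwa [← htd]

lemma descentSet_one : descentSet (1 : Equiv.Perm (Fin n)) = ∅ := by
  rw [descentSet, Finset.filter_eq_empty_iff]
  intro d hd
  have h1 := Finset.mem_Icc.1 hd
  unfold permApp
  have ha : d + 1 - 1 < n := by omega
  have hb : d - 1 < n := by omega
  rw [dif_pos ha, dif_pos hb]
  simp only [Equiv.Perm.coe_one, id_eq]
  show ¬ (d + 1 - 1 + 1 < d - 1 + 1)
  omega

/-- the identity is the unique permutation without descents -/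
lemma descentSet_subset_empty_iff {w : Equiv.Perm (Fin n)} :
    descentSet w ⊆ (∅ : Finset ℕ) ↔ w = 1 := by
  constructor
  · intro h
    apply perm_ext_of_blocks (T := (∅ : Finset ℕ)) (by simp) h (by simp [descentSet_one])
    · intro t ht
      simp only [LawfulSingleton.insert_empty_eq, Finset.mem_singleton] at ht
      subst ht
      rw [phiW_n, phiW_n]
  · intro h
    subst h
    rw [descentSet_one]

lemma card_descent_empty : Nat.card {w : Equiv.Perm (Fin n) // descentSet w ⊆ (∅ : Finset ℕ)} = 1 := by
  rw [Nat.card_eq_fintype_card, Fintype.card_eq_one_iff]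
  refine ⟨⟨1, by rw [descentSet_one]⟩, ?_⟩
  rintro ⟨w, hw⟩
  simp only [Subtype.mk.injEq]
  exact descentSet_subset_empty_iff.1 hw

end PermBlocks2

section Assembly
variable {P : Type*} [Fintype P] [PartialOrder P] [BoundedOrder P]
variable {G : Type*} [Group G] [MulAction G P]

/-- rank of a transported subset, via the simplicial iso -/
lemma rho_symm_card {ρ : P → ℕ} {n : ℕ} {x : P} (e : Set.Iic x ≃o Finset (Fin n))
    (he : ∀ (y : P) (hy : y ≤ x), (e ⟨y, hy⟩).card = ρ y) (s : Finset (Fin n)) :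
    ρ ((e.symm s : Set.Iic x) : P) = s.card := by
  have h1 := he ((e.symm s) : Set.Iic x).1 ((e.symm s) : Set.Iic x).2
  have h2 : (⟨((e.symm s) : Set.Iic x).1, ((e.symm s) : Set.Iic x).2⟩ : Set.Iic x) = e.symm s := rfl
  rw [h2, e.apply_symm_apply] at h1
  omega

lemma alpha_insert_eq
    (hact : ∀ (g : G) (x y : P), x ≤ y ↔ g • x ≤ g • y)
    (hgood : ∀ (g : G) (y : P), y ≠ ⊤ → g • y = y → ∀ x : P, x ≤ y → g • x = x)
    {n : ℕ} {ρ : P → ℕ} (hρbot : ρ ⊥ = 0) (hρtop : ρ ⊤ = n + 1)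
    (hρcov : ∀ a b : P, a ⋖ b → ρ b = ρ a + 1)
    (hsimp : ∀ x : P, x ≠ ⊤ → ∃ m : ℕ, Nonempty (Set.Iic x ≃o Finset (Fin m)))
    {T : Finset ℕ} (hT : T ⊆ Finset.Icc 1 (n - 1)) (g : G) :
    gAlpha ρ (fun (g : G) (x : P) => g • x) (insert n T) g =
      (Nat.card {w : Equiv.Perm (Fin n) // descentSet w ⊆ T} : ℤ) *
      (Set.ncard {x : P | ρ x = n ∧ g • x = x} : ℤ) := by
  classical
  set U : Finset ℕ := insert n T with hU
  have htn : ∀ t ∈ U, t ≤ n := by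
    intro t ht
    rcases Finset.mem_insert.1 ht with rfl | h
    · exact le_rfl
    · have := Finset.mem_Icc.1 (hT h); omega
  have htn0 : ∀ t ∈ insert 0 U, t ≤ n := by
    intro t ht
    rcases Finset.mem_insert.1 ht with rfl | h
    · omega
    · exact htn t h
  have hEex : ∀ (x : P), ρ x = n → ∃ e : Set.Iic x ≃o Finset (Fin n),
      ∀ (y : P) (hy : y ≤ x), (e ⟨y, hy⟩).card = ρ y := fun x hx =>
    exists_good_iso hρcov hρbot hsimp hx (ne_top_of_rho hρcov hρtop (by omega))
  choose E hE using hEex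
  set Ψ : Equiv.Perm (Fin n) × P → Set P := fun p =>
    if h : ρ p.2 = n then
      insert ⊤ ((fun t => (((E p.2 h).symm (phiW p.1 t) : Set.Iic p.2) : P)) '' ↑(insert 0 U))
    else ∅
    with hΨdef
  have hΨeq : ∀ (w : Equiv.Perm (Fin n)) (x : P) (hx : ρ x = n),
      Ψ (w, x) = insert ⊤
        ((fun t => (((E x hx).symm (phiW w t) : Set.Iic x) : P)) '' ↑(insert 0 U)) :=
    fun w x hx => dif_pos hx
  set Dom : Set (Equiv.Perm (Fin n) × P) :=
    {w : Equiv.Perm (Fin n) | descentSet w ⊆ T} ×ˢ {x : P | ρ x = n ∧ g • x = x} with hDom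
  set Tgt : Set (Set P) :=
    {C : Set P | C ∈ maxChainsIn (rankSel ρ U) ∧ (fun x => g • x) '' C = C} with hTgt
  -- basic facts about the building blocks
  have hFrank : ∀ (x : P) (hx : ρ x = n) (w : Equiv.Perm (Fin n)) (t : ℕ), t ≤ n →
      ρ (((E x hx).symm (phiW w t) : Set.Iic x) : P) = t := by
    intro x hx w t ht
    rw [rho_symm_card (E x hx) (hE x hx), card_phiW w ht]
  have hFle : ∀ (x : P) (hx : ρ x = n) (w : Equiv.Perm (Fin n)) (t : ℕ),
      (((E x hx).symm (phiW w t) : Set.Iic x) : P) ≤ x := fun x hx w t =>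
    ((E x hx).symm (phiW w t)).2
  have hFmono : ∀ (x : P) (hx : ρ x = n) (w : Equiv.Perm (Fin n)) (t t' : ℕ), t ≤ t' →
      (((E x hx).symm (phiW w t) : Set.Iic x) : P) ≤
        (((E x hx).symm (phiW w t') : Set.Iic x) : P) := by
    intro x hx w t t' h
    exact Subtype.coe_le_coe.2 ((E x hx).symm.monotone (phiW_mono w h))
  have hF0 : ∀ (x : P) (hx : ρ x = n) (w : Equiv.Perm (Fin n)),
      (((E x hx).symm (phiW w 0) : Set.Iic x) : P) = ⊥ := by
    intro x hx w
    exact eq_bot_of_rho hρcov hρbot (hFrank x hx w 0 (by omega))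
  have hFn : ∀ (x : P) (hx : ρ x = n) (w : Equiv.Perm (Fin n)),
      (((E x hx).symm (phiW w n) : Set.Iic x) : P) = x := by
    intro x hx w
    exact eq_of_le_of_rho hρcov (hFle x hx w n) (by rw [hFrank x hx w n le_rfl]; omega)
  have hbij : Set.BijOn Ψ Dom Tgt := by
    refine ⟨?_, ?_, ?_⟩
    · -- MapsTo
      rintro ⟨w, x⟩ hmemD
      simp only [hDom, Set.mem_prod, Set.mem_setOf_eq] at hmemD
      obtain ⟨hw, hx, hgx⟩ := hmemD
      rw [hTgt, Set.mem_setOf_eq, hΨeq w x hx]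
      set F : ℕ → P := fun t => (((E x hx).symm (phiW w t) : Set.Iic x) : P) with hFdef
      have hxt : x ≠ ⊤ := ne_top_of_rho hρcov hρtop (by omega)
      constructor
      · rw [mem_maxChainsIn_iff hρcov hρbot hρtop htn]
        refine ⟨?_, ?_, ?_, ?_, ?_⟩
        · -- subset of rankSel
          intro c hc
          rcases Set.mem_insert_iff.1 hc with rfl | ⟨t, htm, rfl⟩
          · exact top_mem_rankSel
          · have htm' : t ∈ insert 0 U := htm
            rcases Finset.mem_insert.1 htm' with rfl | htU
            · rw [show F 0 = ⊥ from hF0 x hx w]; exact bot_mem_rankSel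
            · exact mem_rankSel_of_rho (by rw [show ρ (F t) = t from hFrank x hx w t (htn t htU)]; exact htU)
        · -- chain
          apply IsChain.insert
          · rintro _ ⟨t, htm, rfl⟩ _ ⟨t', htm', rfl⟩ hne
            rcases le_total t t' with h | h
            · exact Or.inl (hFmono x hx w t t' h)
            · exact Or.inr (hFmono x hx w t' t h)
          · intro b _ _
            exact Or.inr le_top
        · -- ⊥ ∈
          refine Set.mem_insert_of_mem _ ⟨0, ?_, hF0 x hx w⟩
          exact Finset.mem_coe.2 (Finset.mem_insert_self _ _)
        · exact Set.mem_insert _ _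
        · -- all ranks present
          intro t ht
          refine ⟨F t, Set.mem_insert_of_mem _ ⟨t, ?_, rfl⟩, hFrank x hx w t (htn t ht)⟩
          exact Finset.mem_coe.2 (Finset.mem_insert_of_mem ht)
      · -- fixed
        apply image_eq_of_fixed
        intro c hc
        rcases Set.mem_insert_iff.1 hc with rfl | ⟨t, htm, rfl⟩
        · exact smul_top' hact g
        · exact hgood g x hxt hgx _ (hFle x hx w t)
    · -- InjOn
      rintro ⟨w, x⟩ hmemD ⟨w', x'⟩ hmemD' heq
      simp only [hDom, Set.mem_prod, Set.mem_setOf_eq] at hmemD hmemD'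
      obtain ⟨hw, hx, hgx⟩ := hmemD
      obtain ⟨hw', hx', hgx'⟩ := hmemD'
      rw [hΨeq w x hx, hΨeq w' x' hx'] at heq
      have hxt : x ≠ ⊤ := ne_top_of_rho hρcov hρtop (by omega)
      -- x = x'
      have hxx : x = x' := by
        have hmem : x ∈ insert ⊤
            ((fun t => (((E x hx).symm (phiW w t) : Set.Iic x) : P)) '' ↑(insert 0 U)) := by
          refine Set.mem_insert_of_mem _ ⟨n, ?_, hFn x hx w⟩
          exact Finset.mem_coe.2 (Finset.mem_insert_of_mem (Finset.mem_insert_self _ _))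
        rw [heq] at hmem
        rcases Set.mem_insert_iff.1 hmem with h | ⟨t, htm, hFt⟩
        · exact absurd h hxt
        · beta_reduce at hFt
          have ht' : t ≤ n := htn0 t htm
          have hxrho : ρ x = t := by rw [← hFt]; exact hFrank x' hx' w' t ht'
          have htn' : t = n := by omega
          rw [htn'] at hFt
          rw [← hFt, hFn x' hx' w']
      subst hxx
      have hφeq : ∀ t ∈ U, phiW w t = phiW w' t := by
        intro t ht
        have htle : t ≤ n := htn t ht
        have hmem : (((E x hx).symm (phiW w t) : Set.Iic x) : P) ∈ insert ⊤
            ((fun t => (((E x hx).symm (phiW w t) : Set.Iic x) : P)) '' ↑(insert 0 U)) := by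
          refine Set.mem_insert_of_mem _ ⟨t, ?_, rfl⟩
          exact Finset.mem_coe.2 (Finset.mem_insert_of_mem ht)
        rw [heq] at hmem
        rcases Set.mem_insert_iff.1 hmem with h | ⟨t', htm', hFt⟩
        · beta_reduce at h
          exfalso
          have := hFrank x hx w t htle
          rw [h, hρtop] at this
          omega
        · beta_reduce at hFt
          have ht'' : t' ≤ n := htn0 t' htm'
          have h1 : ρ (((E x hx').symm (phiW w' t') : Set.Iic x) : P) = t' :=
            hFrank x hx' w' t' ht''
          have h2 : ρ (((E x hx).symm (phiW w t) : Set.Iic x) : P) = t :=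
            hFrank x hx w t htle
          rw [← hFt] at h2
          have htt : t' = t := by omega
          rw [htt] at hFt
          have hEeq : (E x hx).symm (phiW w t) = (E x hx').symm (phiW w' t) :=
            Subtype.coe_injective hFt.symm
          have : phiW w t = phiW w' t := by
            have := congrArg (E x hx) hEeq
            rwa [(E x hx).apply_symm_apply, show E x hx = E x hx' from rfl,
              (E x hx').apply_symm_apply] at this
          exact this
      have hww : w = w' := perm_ext_of_blocks hT hw hw' hφeq
      rw [hww]
    · -- SurjOn
      intro C hC
      rw [hTgt, Set.mem_setOf_eq] at hC
      obtain ⟨hCmax, hCfix⟩ := hC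
      rw [mem_maxChainsIn_iff hρcov hρbot hρtop htn] at hCmax
      obtain ⟨hsub, hch, hbC, htC, hr⟩ := hCmax
      have hfix : ∀ c ∈ C, g • c = c := fun c hc =>
        chain_fixed_pointwise hact hρcov hρbot hch hCfix hc
      choose y hyC hyr using hr
      set x : P := y n (Finset.mem_insert_self _ _) with hxdef
      have hx : ρ x = n := hyr n (Finset.mem_insert_self _ _)
      have hxC : x ∈ C := hyC n (Finset.mem_insert_self _ _)
      have hgx : g • x = x := hfix x hxC
      have hyle : ∀ t (ht : t ∈ U), y t ht ≤ x := by
        intro t ht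
        apply chain_le_of_rho_le hρcov hch (hyC t ht) hxC
        rw [hyr t ht, hx]
        exact htn t ht
      set B : ℕ → Finset (Fin n) := fun t =>
        if ht : t ∈ U then (E x hx) ⟨y t ht, hyle t ht⟩ else ∅ with hBdef
      have hcB : ∀ t ∈ U, (B t).card = t := by
        intro t ht
        rw [hBdef]
        simp only [dif_pos ht]
        rw [hE x hx (y t ht) (hyle t ht), hyr t ht]
      have hmB : ∀ t ∈ U, ∀ t' ∈ U, t ≤ t' → B t ⊆ B t' := by
        intro t ht t' ht' h
        rw [hBdef]
        simp only [dif_pos ht, dif_pos ht']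
        apply (E x hx).monotone
        show y t ht ≤ y t' ht'
        apply chain_le_of_rho_le hρcov hch (hyC t ht) (hyC t' ht')
        rw [hyr t ht, hyr t' ht']
        exact h
      obtain ⟨w, hwD, hwφ⟩ := exists_perm_of_blocks hT hcB hmB
      refine ⟨(w, x), Set.mem_prod.2 ⟨hwD, hx, hgx⟩, ?_⟩
      rw [hΨeq w x hx]
      have hFt : ∀ t (ht : t ∈ U), (((E x hx).symm (phiW w t) : Set.Iic x) : P) = y t ht := by
        intro t ht
        rw [hwφ t ht, hBdef]
        simp only [dif_pos ht]
        rw [(E x hx).symm_apply_apply]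
      apply Set.Subset.antisymm
      · intro c hc
        rcases Set.mem_insert_iff.1 hc with rfl | ⟨t, htm, rfl⟩
        · exact htC
        · rcases Finset.mem_insert.1 (Finset.mem_coe.1 htm) with rfl | htU
          · beta_reduce; rw [hF0 x hx w]; exact hbC
          · beta_reduce; rw [hFt t htU]; exact hyC t htU
      · intro c hc
        rcases mem_rankSel_iff.1 (hsub hc) with hcU | rfl | rfl
        · have : c = y (ρ c) hcU := chain_eq_of_rho_eq hρcov hch hc (hyC _ hcU)
            (by rw [hyr _ hcU])
          rw [this, ← hFt _ hcU]
          exact Set.mem_insert_of_mem _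
            ⟨ρ c, Finset.mem_coe.2 (Finset.mem_insert_of_mem hcU), rfl⟩
        · refine Set.mem_insert_of_mem _ ⟨0, ?_, hF0 x hx w⟩
          exact Finset.mem_coe.2 (Finset.mem_insert_self _ _)
        · exact Set.mem_insert _ _
  -- counting
  have h1 : gAlpha ρ (fun (g : G) (x : P) => g • x) U g = (Tgt.ncard : ℤ) := rfl
  have h2 : Tgt.ncard = Dom.ncard := by
    rw [← hbij.image_eq, Set.ncard_image_of_injOn hbij.injOn]
  have h3 : Dom.ncard = Nat.card {w : Equiv.Perm (Fin n) // descentSet w ⊆ T} *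
      Set.ncard {x : P | ρ x = n ∧ g • x = x} := by
    rw [hDom, ← Nat.card_coe_set_eq, Nat.card_congr (Equiv.Set.prod _ _), Nat.card_prod,
      Nat.card_coe_set_eq]
    rfl
  rw [h1, h2, h3]
  push_cast
  ring

end Assembly

section AltSum

lemma W_decomp (n : ℕ) (T : Finset ℕ) :
    (Nat.card {w : Equiv.Perm (Fin n) // descentSet w ⊆ T}) =
      ∑ U ∈ T.powerset, numDescentSet n U := by
  classical
  rw [Nat.card_eq_fintype_card, Fintype.card_subtype]
  rw [Finset.card_eq_sum_card_fiberwise (f := fun w => descentSet w) (t := T.powerset)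
    (fun w hw => Finset.mem_powerset.2 (Finset.mem_filter.1 hw).2)]
  apply Finset.sum_congr rfl
  intro U hU
  rw [numDescentSet, Nat.card_eq_fintype_card, Fintype.card_subtype]
  congr 1
  rw [Finset.filter_filter]
  apply Finset.filter_congr
  intro w _
  constructor
  · rintro ⟨_, h⟩; exact h
  · intro h; exact ⟨show descentSet w ⊆ T by rw [h]; exact Finset.mem_powerset.1 hU, h⟩

lemma neg_one_pow_sub {a b : ℕ} (h : b ≤ a) : (-1 : ℤ) ^ (a - b) = (-1) ^ a * (-1) ^ b := by
  have h1 : ((-1 : ℤ)) ^ (2 * b) = 1 := by rw [pow_mul]; norm_num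
  calc (-1 : ℤ) ^ (a - b) = (-1) ^ (a - b) * (-1) ^ (2 * b) := by rw [h1, mul_one]
  _ = (-1) ^ (a - b + 2 * b) := (pow_add _ _ _).symm
  _ = (-1) ^ (a + b) := by congr 1; omega
  _ = (-1) ^ a * (-1) ^ b := pow_add _ _ _

lemma innerAltSum (S U : Finset ℕ) (hU : U ⊆ S) :
    (∑ T ∈ S.powerset.filter (fun T => U ⊆ T), (-1 : ℤ) ^ (S.card - T.card))
      = if U = S then 1 else 0 := by
  classical
  have hbij : (∑ T ∈ S.powerset.filter (fun T => U ⊆ T), (-1 : ℤ) ^ (S.card - T.card))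
      = ∑ V ∈ (S \ U).powerset, (-1 : ℤ) ^ ((S \ U).card - V.card) := by
    apply Finset.sum_bij' (i := fun T _ => T \ U) (j := fun V _ => V ∪ U)
    · intro T hT
      have h1 := Finset.mem_powerset.1 (Finset.mem_filter.1 hT).1
      exact Finset.mem_powerset.2 (Finset.sdiff_subset_sdiff h1 le_rfl)
    · intro V hV
      have h1 := Finset.mem_powerset.1 hV
      refine Finset.mem_filter.2 ⟨Finset.mem_powerset.2 ?_, Finset.subset_union_right⟩
      exact Finset.union_subset (h1.trans Finset.sdiff_subset) hU
    · intro T hT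
      have h2 := (Finset.mem_filter.1 hT).2
      rw [Finset.sdiff_union_self_eq_union]
      exact Finset.union_eq_left.2 h2
    · intro V hV
      have h1 := Finset.mem_powerset.1 hV
      apply Finset.union_sdiff_cancel_right
      exact Finset.disjoint_left.2 fun a haV haU =>
        (Finset.mem_sdiff.1 (h1 haV)).2 haU
    · intro T hT
      have h1 := Finset.mem_powerset.1 (Finset.mem_filter.1 hT).1
      have h2 := (Finset.mem_filter.1 hT).2
      congr 1
      rw [Finset.card_sdiff_of_subset h2, Finset.card_sdiff_of_subset hU]
      have := Finset.card_le_card h2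
      have := Finset.card_le_card h1
      have := Finset.card_le_card hU
      omega
  rw [hbij]
  have hterm : ∀ V ∈ (S \ U).powerset,
      (-1 : ℤ) ^ ((S \ U).card - V.card) = (-1) ^ (S \ U).card * (-1) ^ V.card := by
    intro V hV
    exact neg_one_pow_sub (Finset.card_le_card (Finset.mem_powerset.1 hV))
  rw [Finset.sum_congr rfl hterm, ← Finset.mul_sum, Finset.sum_powerset_neg_one_pow_card]
  by_cases h : U = S
  · subst h
    rw [Finset.sdiff_self]
    simp
  · have hne : S \ U ≠ ∅ := by
      intro hc
      exact h (Finset.Subset.antisymm hU (Finset.sdiff_eq_empty_iff_subset.1 hc))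
    rw [if_neg hne, if_neg h, mul_zero]

lemma alt_sum (n : ℕ) (S : Finset ℕ) :
    (∑ T ∈ S.powerset, (-1 : ℤ) ^ (S.card - T.card) *
      (Nat.card {w : Equiv.Perm (Fin n) // descentSet w ⊆ T} : ℤ))
      = (numDescentSet n S : ℤ) := by
  classical
  have hstep : ∀ T ∈ S.powerset, (-1 : ℤ) ^ (S.card - T.card) *
      (Nat.card {w : Equiv.Perm (Fin n) // descentSet w ⊆ T} : ℤ)
      = ∑ U ∈ S.powerset, (if U ⊆ T then (-1 : ℤ) ^ (S.card - T.card) *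
          (numDescentSet n U : ℤ) else 0) := by
    intro T hT
    have hfil : S.powerset.filter (fun U => U ⊆ T) = T.powerset := by
      ext U
      simp only [Finset.mem_filter, Finset.mem_powerset]
      have hTS := Finset.mem_powerset.1 hT
      exact ⟨fun h => h.2, fun h => ⟨h.trans hTS, h⟩⟩
    rw [W_decomp n T]
    push_cast
    rw [Finset.mul_sum, ← Finset.sum_filter, hfil]
  rw [Finset.sum_congr rfl hstep, Finset.sum_comm]
  have hinner : ∀ U ∈ S.powerset,
      (∑ T ∈ S.powerset, if U ⊆ T then (-1 : ℤ) ^ (S.card - T.card) *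
        (numDescentSet n U : ℤ) else 0)
      = (numDescentSet n U : ℤ) * (if U = S then 1 else 0) := by
    intro U hU
    rw [← Finset.sum_filter, ← innerAltSum S U (Finset.mem_powerset.1 hU), Finset.mul_sum]
    apply Finset.sum_congr rfl
    intro T hT
    ring
  rw [Finset.sum_congr rfl hinner, Finset.sum_eq_single S]
  · rw [if_pos rfl, mul_one]
  · intro U hU hne
    rw [if_neg hne, mul_zero]
  · intro hS
    exact absurd (Finset.mem_powerset.2 le_rfl) hS

end AltSum


end AuxiliaryLemmas

/-- **Theorem 3.1, Eq. (7)**: for a good action of a group `G` on a finite graded poset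
`P` of rank `n+1` such that `P ∖ {⊤}` is simplicial,
`β_P(S) + β_P(S ∪ {n}) = b_n(S) · α_P({n})` for all `S ⊆ {1,…,n-1}`. -/
theorem statement4 {P : Type*} [Fintype P] [PartialOrder P] [BoundedOrder P]
    {G : Type*} [Group G] [MulAction G P]
    (hact : ∀ (g : G) (x y : P), x ≤ y ↔ g • x ≤ g • y)
    (hgood : ∀ (g : G) (y : P), y ≠ ⊤ → g • y = y → ∀ x : P, x ≤ y → g • x = x)
    (n : ℕ) (ρ : P → ℕ) (hρbot : ρ ⊥ = 0) (hρtop : ρ ⊤ = n + 1)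
    (hρcov : ∀ a b : P, a ⋖ b → ρ b = ρ a + 1)
    (hsimp : ∀ x : P, x ≠ ⊤ → ∃ m : ℕ, Nonempty (Set.Iic x ≃o Finset (Fin m)))
    (S : Finset ℕ) (hS : S ⊆ Finset.Icc 1 (n - 1)) :
    ∀ g : G, gBeta ρ (fun g x => g • x) S g + gBeta ρ (fun g x => g • x) (insert n S) g =
      (numDescentSet n S : ℤ) * gAlpha ρ (fun g x => g • x) {n} g := by
  intro g
  classical
  have hnS : n ∉ S := fun h => by have := Finset.mem_Icc.1 (hS h); omega
  set X : ℤ := (Set.ncard {x : P | ρ x = n ∧ g • x = x} : ℤ) with hXdef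
  have hW : ∀ T : Finset ℕ, T ⊆ Finset.Icc 1 (n - 1) →
      gAlpha ρ (fun (g : G) (x : P) => g • x) (insert n T) g =
        (Nat.card {w : Equiv.Perm (Fin n) // descentSet w ⊆ T} : ℤ) * X :=
    fun T hT => alpha_insert_eq hact hgood hρbot hρtop hρcov hsimp hT g
  have hX1 : gAlpha ρ (fun (g : G) (x : P) => g • x) {n} g = X := by
    have h0 : ({n} : Finset ℕ) = insert n (∅ : Finset ℕ) := rfl
    rw [h0, hW ∅ (Finset.empty_subset _), card_descent_empty]
    push_cast
    ring
  have hdisj : Disjoint S.powerset (S.powerset.image (insert n)) := by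
    rw [Finset.disjoint_left]
    intro T hT hT2
    obtain ⟨T', _, rfl⟩ := Finset.mem_image.1 hT2
    exact hnS (Finset.mem_powerset.1 hT (Finset.mem_insert_self n T'))
  have hinj : ∀ T ∈ S.powerset, ∀ T' ∈ S.powerset, insert n T = insert n T' → T = T' := by
    intro T hT T' hT' h
    have hnT : n ∉ T := fun hc => hnS (Finset.mem_powerset.1 hT hc)
    have hnT' : n ∉ T' := fun hc => hnS (Finset.mem_powerset.1 hT' hc)
    rw [← Finset.erase_insert hnT, ← Finset.erase_insert hnT', h]
  have hsplit : gBeta ρ (fun (g : G) (x : P) => g • x) (insert n S) g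
      = (∑ T ∈ S.powerset, (-1 : ℤ) ^ (S.card - T.card) *
          (- gAlpha ρ (fun (g : G) (x : P) => g • x) T g))
        + ∑ T ∈ S.powerset, (-1 : ℤ) ^ (S.card - T.card) *
            gAlpha ρ (fun (g : G) (x : P) => g • x) (insert n T) g := by
    rw [gBeta, Finset.powerset_insert, Finset.sum_union hdisj, Finset.sum_image hinj]
    congr 1
    · apply Finset.sum_congr rfl
      intro T hT
      have hcle : T.card ≤ S.card := Finset.card_le_card (Finset.mem_powerset.1 hT)
      rw [Finset.card_insert_of_notMem hnS]
      have he : S.card + 1 - T.card = (S.card - T.card) + 1 := by omega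
      rw [he, pow_succ]
      ring
    · apply Finset.sum_congr rfl
      intro T hT
      have hnT : n ∉ T := fun hc => hnS (Finset.mem_powerset.1 hT hc)
      rw [Finset.card_insert_of_notMem hnS, Finset.card_insert_of_notMem hnT]
      have he : S.card + 1 - (T.card + 1) = S.card - T.card := by omega
      rw [he]
  have hcancel : (∑ T ∈ S.powerset, (-1 : ℤ) ^ (S.card - T.card) *
        gAlpha ρ (fun (g : G) (x : P) => g • x) T g)
      + (∑ T ∈ S.powerset, (-1 : ℤ) ^ (S.card - T.card) *
        (- gAlpha ρ (fun (g : G) (x : P) => g • x) T g)) = 0 := by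
    rw [← Finset.sum_add_distrib]
    apply Finset.sum_eq_zero
    intro T hT
    ring
  have hmain : gBeta ρ (fun (g : G) (x : P) => g • x) S g
      + gBeta ρ (fun (g : G) (x : P) => g • x) (insert n S) g
      = ∑ T ∈ S.powerset, (-1 : ℤ) ^ (S.card - T.card) *
          gAlpha ρ (fun (g : G) (x : P) => g • x) (insert n T) g := by
    rw [hsplit, gBeta, ← add_assoc, hcancel, zero_add]
  rw [hmain, hX1]
  have hterm : ∀ T ∈ S.powerset, (-1 : ℤ) ^ (S.card - T.card) *
      gAlpha ρ (fun (g : G) (x : P) => g • x) (insert n T) g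
      = ((-1 : ℤ) ^ (S.card - T.card) *
          (Nat.card {w : Equiv.Perm (Fin n) // descentSet w ⊆ T} : ℤ)) * X := by
    intro T hT
    rw [hW T ((Finset.mem_powerset.1 hT).trans hS)]
    ring
  rw [Finset.sum_congr rfl hterm, ← Finset.sum_mul, alt_sum]
end

section
/- Let P be a finite graded poset of rank n+1 with minimum 0̂ and maximum 1̂ such that P ∖ {1̂} is simplicial, and let G be a group of automorphisms of P whose action is good. Then for every nonempty S ⊆ {1,…,n} with maximum element m, α_P(S) = a_m(S ∖ {m}) · α_P({m}), where a_m(T) is the number of chains in the Boolean lattice B_m whose elements have set of ranks equal to T. -/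
open scoped Classical

set_option linter.unusedSectionVars false
section Aux
variable {P : Type*} [Fintype P] [PartialOrder P] [BoundedOrder P]

lemma aux_exists_covBy {x y : P} (h : x < y) : ∃ z, x ⋖ z ∧ z ≤ y := by
  classical
  have hfin : ({z : P | x < z ∧ z ≤ y}).Finite := Set.toFinite _
  have hne : ({z : P | x < z ∧ z ≤ y}).Nonempty := ⟨y, h, le_rfl⟩
  obtain ⟨z, hz, hmin⟩ := Set.Finite.exists_minimalFor id _ hfin hne
  refine ⟨z, ⟨hz.1, ?_⟩, hz.2⟩
  intro c hxc hcz
  have : z = c := le_antisymm (hmin ⟨hxc, hcz.le.trans hz.2⟩ hcz.le) hcz.le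
  exact absurd this (ne_of_gt hcz)

lemma aux_rho_lt (ρ : P → ℕ) (hρcov : ∀ a b : P, a ⋖ b → ρ b = ρ a + 1) :
    ∀ x y : P, x < y → ρ x < ρ y := by
  classical
  intro x
  induction x using WellFoundedGT.induction with
  | _ x ih =>
    intro y hxy
    obtain ⟨z, hz, hzy⟩ := aux_exists_covBy hxy
    have h1 := hρcov _ _ hz
    rcases eq_or_lt_of_le hzy with rfl | hzy'
    · omega
    · have h2 := ih z hz.lt y hzy'
      omega

lemma aux_interp (ρ : P → ℕ) (hρcov : ∀ a b : P, a ⋖ b → ρ b = ρ a + 1) :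
    ∀ (k : ℕ) (j : ℕ) (x y : P), x ≤ y → ρ x ≤ j → j ≤ ρ y → j - ρ x = k →
      ∃ z, x ≤ z ∧ z ≤ y ∧ ρ z = j := by
  intro k
  induction k with
  | zero =>
    intro j x y hxy h1 h2 hk
    exact ⟨x, le_rfl, hxy, by omega⟩
  | succ k ih =>
    intro j x y hxy h1 h2 hk
    have hxlty : x < y := by
      rcases eq_or_lt_of_le hxy with rfl | h
      · omega
      · exact h
    obtain ⟨z, hz, hzy⟩ := aux_exists_covBy hxlty
    have h3 := hρcov _ _ hz
    have h4 : ρ z ≤ j := by omega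
    obtain ⟨w, hw1, hw2, hw3⟩ := ih j z y hzy h4 h2 (by omega)
    exact ⟨w, hz.le.trans hw1, hw2, hw3⟩

lemma aux_rank_unique (ρ : P → ℕ) (hρcov : ∀ a b : P, a ⋖ b → ρ b = ρ a + 1)
    {C : Set P} (hC : IsChain (· ≤ ·) C) {y z : P} (hy : y ∈ C) (hz : z ∈ C)
    (h : ρ y = ρ z) : y = z := by
  by_contra hne
  rcases hC hy hz hne with h1 | h1
  · have := aux_rho_lt ρ hρcov y z (lt_of_le_of_ne h1 hne)
    omega
  · have := aux_rho_lt ρ hρcov z y (lt_of_le_of_ne h1 (Ne.symm hne))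
    omega

variable {G : Type*} [Group G] [MulAction G P]

lemma aux_smul_lt (hact : ∀ (g : G) (x y : P), x ≤ y ↔ g • x ≤ g • y)
    (g : G) {x y : P} (h : x < y) : g • x < g • y := by
  refine lt_of_le_of_ne ((hact g x y).1 h.le) ?_
  intro he
  have : y ≤ x := (hact g y x).2 (le_of_eq he.symm)
  exact absurd (le_antisymm h.le this) h.ne

lemma aux_smul_bot (hact : ∀ (g : G) (x y : P), x ≤ y ↔ g • x ≤ g • y) (g : G) :
    g • (⊥ : P) = ⊥ := by
  have h := (hact g ⊥ (g⁻¹ • ⊥)).1 bot_le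
  rw [smul_inv_smul] at h
  exact le_antisymm h bot_le

lemma aux_smul_top (hact : ∀ (g : G) (x y : P), x ≤ y ↔ g • x ≤ g • y) (g : G) :
    g • (⊤ : P) = ⊤ := by
  have h := (hact g (g⁻¹ • ⊤) ⊤).1 le_top
  rw [smul_inv_smul] at h
  exact le_antisymm le_top h

lemma aux_fix_chain (hact : ∀ (g : G) (x y : P), x ≤ y ↔ g • x ≤ g • y)
    {g : G} {C : Set P} (hC : IsChain (· ≤ ·) C)
    (hfix : (fun x => g • x) '' C = C) : ∀ y ∈ C, g • y = y := by
  intro y hy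
  have hgy : g • y ∈ C := by
    rw [← hfix]; exact ⟨y, hy, rfl⟩
  by_contra hne
  rcases hC hy hgy (fun h => hne h.symm) with h1 | h1
  · -- y < g • y
    have hlt : y < g • y := lt_of_le_of_ne h1 (fun h => hne h.symm)
    have hstep : ∀ i : ℕ, (fun z => g • z)^[i] y < (fun z => g • z)^[i+1] y := by
      intro i
      induction i with
      | zero => simpa using hlt
      | succ i ih =>
        rw [Function.iterate_succ_apply', Function.iterate_succ_apply']
        exact aux_smul_lt hact g ih
    have hmono : StrictMono (fun i : ℕ => (fun z => g • z)^[i] y) :=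
      strictMono_nat_of_lt_succ hstep
    obtain ⟨i, j, hij, hEq⟩ := Finite.exists_ne_map_eq_of_infinite
      (fun i : ℕ => (fun z => g • z)^[i] y)
    exact hij (hmono.injective hEq)
  · have hlt : g • y < y := lt_of_le_of_ne h1 hne
    have hstep : ∀ i : ℕ, (fun z => g • z)^[i+1] y < (fun z => g • z)^[i] y := by
      intro i
      induction i with
      | zero => simpa using hlt
      | succ i ih =>
        have h2 := aux_smul_lt hact g ih
        have e1 : (fun z => g • z)^[i + 1 + 1] y = g • (fun z => g • z)^[i + 1] y :=
          Function.iterate_succ_apply' _ _ _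
        have e2 : (fun z => g • z)^[i + 1] y = g • (fun z => g • z)^[i] y :=
          Function.iterate_succ_apply' _ _ _
        rw [e1]
        nth_rewrite 2 [e2]
        exact h2
    have hmono : StrictAnti (fun i : ℕ => (fun z => g • z)^[i] y) :=
      strictAnti_nat_of_succ_lt hstep
    obtain ⟨i, j, hij, hEq⟩ := Finite.exists_ne_map_eq_of_infinite
      (fun i : ℕ => (fun z => g • z)^[i] y)
    exact hij (hmono.injective hEq)


lemma aux_exists_iso (ρ : P → ℕ) (hρbot : ρ ⊥ = 0)
    (hρcov : ∀ a b : P, a ⋖ b → ρ b = ρ a + 1)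
    {m : ℕ} {x : P} (hx : ρ x = m)
    (hiso : ∃ m₀ : ℕ, Nonempty (Set.Iic x ≃o Finset (Fin m₀))) :
    ∃ e : Set.Iic x ≃o Finset (Fin m), ∀ y : Set.Iic x, ρ (y : P) = (e y).card := by
  classical
  obtain ⟨m₀, ⟨e⟩⟩ := hiso
  -- bottom
  have hbot : ((e.symm ∅ : Set.Iic x) : P) = ⊥ := by
    have h1 : e.symm ∅ ≤ ⟨⊥, bot_le⟩ := by
      have h2 : (∅ : Finset (Fin m₀)) ⊆ e ⟨⊥, bot_le⟩ := Finset.empty_subset _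
      have h3 : e.symm ∅ ≤ e.symm (e ⟨⊥, bot_le⟩) := e.symm.monotone h2
      rwa [e.symm_apply_apply] at h3
    exact le_antisymm h1 bot_le
  -- covers in Iic x are covers in P
  have hcov' : ∀ a b : Set.Iic x, a ⋖ b → (a : P) ⋖ (b : P) := by
    intro a b hab
    refine ⟨Subtype.coe_lt_coe.2 hab.1, ?_⟩
    intro w haw hwb
    have hwx : w ≤ x := hwb.le.trans b.2
    exact hab.2 (c := ⟨w, hwx⟩) (Subtype.coe_lt_coe.1 haw) (Subtype.coe_lt_coe.1 hwb)
  -- rank equals card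
  have key : ∀ (k : ℕ) (A : Finset (Fin m₀)), A.card = k →
      ρ ((e.symm A : Set.Iic x) : P) = A.card := by
    intro k
    induction k with
    | zero =>
      intro A hA
      rw [Finset.card_eq_zero.mp hA, hbot, hρbot, Finset.card_empty]
    | succ k ih =>
      intro A hA
      obtain ⟨a, ha⟩ : A.Nonempty := Finset.card_pos.mp (by omega)
      set B := A.erase a with hB
      have hBcard : B.card = k := by
        rw [hB, Finset.card_erase_of_mem ha]; omega
      have hBA : B ⋖ A := by
        refine ⟨?_, ?_⟩
        · exact Finset.erase_ssubset ha
        · intro Cs hBC hCA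
          have h1 := Finset.card_lt_card hBC
          have h2 := Finset.card_lt_card hCA
          omega
      have hBA' : (e.symm B) ⋖ (e.symm A) := by
        refine ⟨?_, ?_⟩
        · exact e.symm.strictMono hBA.1
        · intro w hw1 hw2
          have h1 : B < e w := by
            have := e.strictMono hw1
            rwa [e.apply_symm_apply] at this
          have h2 : e w < A := by
            have := e.strictMono hw2
            rwa [e.apply_symm_apply] at this
          exact hBA.2 h1 h2
      have h3 := hρcov _ _ (hcov' _ _ hBA')
      rw [h3, ih B hBcard, hA, hBcard]
  -- top
  have htop : ((e.symm Finset.univ : Set.Iic x) : P) = x := by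
    have h1 : (⟨x, le_rfl⟩ : Set.Iic x) ≤ e.symm Finset.univ := by
      have h2 : e ⟨x, le_rfl⟩ ⊆ Finset.univ := Finset.subset_univ _
      have h3 : e.symm (e ⟨x, le_rfl⟩) ≤ e.symm Finset.univ := e.symm.monotone h2
      rwa [e.symm_apply_apply] at h3
    exact le_antisymm (e.symm Finset.univ).2 h1
  have hm₀ : m₀ = m := by
    have := key _ Finset.univ rfl
    rw [htop, hx, Finset.card_univ, Fintype.card_fin] at this
    omega
  subst hm₀
  refine ⟨e, fun y => ?_⟩
  have := key _ (e y) rfl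
  rwa [e.symm_apply_apply] at this


lemma aux_mem_rankSel (ρ : P → ℕ) (S' : Finset ℕ) (y : P) :
    y ∈ rankSel ρ (S' : Finset ℕ) ↔ ρ y ∈ S' ∨ y = ⊥ ∨ y = ⊤ := by
  constructor
  · rintro (h | h | h)
    · exact Or.inl h
    · exact Or.inr (Or.inl h)
    · exact Or.inr (Or.inr h)
  · rintro (h | h | h)
    · exact Or.inl h
    · exact Or.inr (Or.inl h)
    · exact Or.inr (Or.inr h)

lemma aux_maxchain_iff (n : ℕ) (ρ : P → ℕ) (hρbot : ρ ⊥ = 0) (hρtop : ρ ⊤ = n + 1)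
    (hρcov : ∀ a b : P, a ⋖ b → ρ b = ρ a + 1)
    (S' : Finset ℕ) (hS' : S' ⊆ Finset.Icc 1 n) (C : Set P) :
    C ∈ maxChainsIn (rankSel ρ S') ↔
      IsChain (· ≤ ·) C ∧ ⊥ ∈ C ∧ ⊤ ∈ C ∧ (∀ y ∈ C, ρ y ∈ S' ∨ y = ⊥ ∨ y = ⊤) ∧
        ∀ s ∈ S', ∃ y ∈ C, ρ y = s := by
  classical
  have hrange : ∀ s ∈ S', 1 ≤ s ∧ s ≤ n := by
    intro s hs
    have := hS' hs
    rw [Finset.mem_Icc] at this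
    exact this
  constructor
  · rintro ⟨hsub, hch, hmax⟩
    have hbotC : ⊥ ∈ C := by
      have h1 : C = insert ⊥ C := by
        refine hmax (insert ⊥ C) ?_ ?_ (Set.subset_insert _ _)
        · intro y hy
          rcases Set.mem_insert_iff.1 hy with rfl | hy
          · exact Or.inr (Set.mem_insert _ _)
          · exact hsub hy
        · exact hch.insert fun b hb _ => Or.inl bot_le
      rw [h1]; exact Set.mem_insert _ _
    have htopC : ⊤ ∈ C := by
      have h1 : C = insert ⊤ C := by
        refine hmax (insert ⊤ C) ?_ ?_ (Set.subset_insert _ _)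
        · intro y hy
          rcases Set.mem_insert_iff.1 hy with rfl | hy
          · exact Or.inr (Set.mem_insert_of_mem _ rfl)
          · exact hsub hy
        · exact hch.insert fun b hb _ => Or.inr le_top
      rw [h1]; exact Set.mem_insert _ _
    refine ⟨hch, hbotC, htopC, fun y hy => (aux_mem_rankSel ρ S' y).1 (hsub hy), ?_⟩
    intro s hs
    by_contra hno
    push_neg at hno
    obtain ⟨hs1, hsn⟩ := hrange s hs
    have hbotne : (⊥ : P) ≠ ⊤ := by
      intro h
      rw [← h, hρbot] at hρtop
      omega
    have hrkne : ∀ y ∈ C, ρ y ≠ s := by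
      intro y hy h
      exact hno y hy h
    set A : Set P := {y ∈ C | ρ y < s} with hA
    set B : Set P := {y ∈ C | s < ρ y} with hBdef
    have hAne : A.Nonempty := ⟨⊥, hbotC, by rw [hρbot]; omega⟩
    have hBne : B.Nonempty := ⟨⊤, htopC, by rw [hρtop]; omega⟩
    obtain ⟨a, haA, hamax⟩ := Set.Finite.exists_maximalFor ρ A (Set.toFinite A) hAne
    obtain ⟨b, hbB, hbmin⟩ := Set.Finite.exists_minimalFor ρ B (Set.toFinite B) hBne
    have hab : a < b := by
      have hne : a ≠ b := by
        intro h
        rw [h] at haA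
        have := haA.2
        have := hbB.2
        omega
      rcases hch haA.1 hbB.1 hne with h1 | h1
      · exact lt_of_le_of_ne h1 hne
      · exfalso
        have := aux_rho_lt ρ hρcov b a (lt_of_le_of_ne h1 hne.symm)
        have := haA.2
        have := hbB.2
        omega
    obtain ⟨z, hz1, hz2, hz3⟩ := aux_interp ρ hρcov (s - ρ a) s a b hab.le
      (le_of_lt haA.2) (le_of_lt hbB.2) rfl
    have hzC : z ∉ C := fun h => hrkne z h hz3
    have hchz : IsChain (· ≤ ·) (insert z C) := by
      refine hch.insert fun y hy hne => ?_
      have hyne : ρ y ≠ s := hrkne y hy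
      rcases lt_or_gt_of_ne hyne with h1 | h1
      · -- y ∈ A, show y ≤ a hence y ≤ z
        have hyA : y ∈ A := ⟨hy, h1⟩
        have hya : y ≤ a := by
          rcases eq_or_ne y a with rfl | hne2
          · exact le_rfl
          · rcases hch hy haA.1 hne2 with h2 | h2
            · exact h2
            · exfalso
              have h3 := aux_rho_lt ρ hρcov a y (lt_of_le_of_ne h2 hne2.symm)
              have h4 := hamax hyA (le_of_lt h3)
              omega
        exact Or.inr (hya.trans hz1)
      · -- y ∈ B
        have hyB : y ∈ B := ⟨hy, h1⟩
        have hby : b ≤ y := by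
          rcases eq_or_ne b y with rfl | hne2
          · exact le_rfl
          · rcases hch hbB.1 hy hne2 with h2 | h2
            · exact h2
            · exfalso
              have h3 := aux_rho_lt ρ hρcov y b (lt_of_le_of_ne h2 hne2.symm)
              have h4 := hbmin hyB (le_of_lt h3)
              omega
        exact Or.inl (hz2.trans hby)
    have h1 : C = insert z C := by
      refine hmax (insert z C) ?_ hchz (Set.subset_insert _ _)
      intro y hy
      rcases Set.mem_insert_iff.1 hy with rfl | hy
      · exact (aux_mem_rankSel ρ S' y).2 (Or.inl (hz3 ▸ hs))
      · exact hsub hy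
    exact hzC (h1 ▸ Set.mem_insert _ _)
  · rintro ⟨hch, hbotC, htopC, hrk, hex⟩
    refine ⟨?_, hch, ?_⟩
    · intro y hy
      exact (aux_mem_rankSel ρ S' y).2 (hrk y hy)
    · intro D hD hDch hCD
      refine Set.Subset.antisymm hCD ?_
      intro d hd
      rcases (aux_mem_rankSel ρ S' d).1 (hD hd) with h1 | h1 | h1
      · obtain ⟨y, hyC, hyρ⟩ := hex (ρ d) h1
        have : y = d := aux_rank_unique ρ hρcov hDch (hCD hyC) hd hyρ
        exact this ▸ hyC
      · exact h1 ▸ hbotC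
      · exact h1 ▸ htopC

end Aux

/-- **Eq. (9)**: for a good action of a group `G` on a finite graded poset `P` of rank
`n+1` such that `P ∖ {⊤}` is simplicial, for every nonempty `S ⊆ {1,…,n}` with maximum
element `m`, `α_P(S) = a_m(S ∖ {m}) · α_P({m})`. -/
theorem statement5 {P : Type*} [Fintype P] [PartialOrder P] [BoundedOrder P]
    {G : Type*} [Group G] [MulAction G P]
    (hact : ∀ (g : G) (x y : P), x ≤ y ↔ g • x ≤ g • y)
    (hgood : ∀ (g : G) (y : P), y ≠ ⊤ → g • y = y → ∀ x : P, x ≤ y → g • x = x)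
    (n : ℕ) (ρ : P → ℕ) (hρbot : ρ ⊥ = 0) (hρtop : ρ ⊤ = n + 1)
    (hρcov : ∀ a b : P, a ⋖ b → ρ b = ρ a + 1)
    (hsimp : ∀ x : P, x ≠ ⊤ → ∃ m : ℕ, Nonempty (Set.Iic x ≃o Finset (Fin m)))
    (S : Finset ℕ) (hS : S ⊆ Finset.Icc 1 n) (hSne : S.Nonempty) :
    ∀ g : G, gAlpha ρ (fun g x => g • x) S g =
      (boolChains (S.max' hSne) (S.erase (S.max' hSne)) : ℤ) *
        gAlpha ρ (fun g x => g • x) {S.max' hSne} g := by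
  intro g
  classical
  set m := S.max' hSne with hmdef
  set T := S.erase m with hTdef
  have hm_mem : m ∈ S := S.max'_mem hSne
  have hmn : 1 ≤ m ∧ m ≤ n := by
    have := hS hm_mem; rw [Finset.mem_Icc] at this; exact this
  have hT_lt : ∀ t ∈ T, 1 ≤ t ∧ t < m ∧ t ≤ n := by
    intro t ht
    have h1 : t ∈ S := Finset.mem_of_mem_erase ht
    have h2 : t ≠ m := Finset.ne_of_mem_erase ht
    have h3 := hS h1; rw [Finset.mem_Icc] at h3
    have h4 : t ≤ m := S.le_max' t h1
    exact ⟨h3.1, lt_of_le_of_ne h4 h2, h3.2⟩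
  have hmT : m ∉ T := Finset.notMem_erase m S
  have hne_top : ∀ x : P, ρ x = m → x ≠ ⊤ := by
    intro x hx h; rw [h, hρtop] at hx; omega
  have hne_bot : ∀ x : P, ρ x = m → x ≠ ⊥ := by
    intro x hx h; rw [h, hρbot] at hx; omega
  have hiso : ∀ (x : P), ρ x = m → ∃ e : Set.Iic x ≃o Finset (Fin m),
      ∀ y : Set.Iic x, ρ (y : P) = (e y).card :=
    fun x hx => aux_exists_iso ρ hρbot hρcov hx (hsimp x (hne_top x hx))
  choose E hE using hiso
  have hρsymm : ∀ (x : P) (hx : ρ x = m) (A : Finset (Fin m)),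
      ρ (((E x hx).symm A : Set.Iic x) : P) = A.card := by
    intro x hx A
    have := hE x hx ((E x hx).symm A)
    rwa [OrderIso.apply_symm_apply] at this
  -- the sets of fixed maximal chains
  set A₁ : Set (Set P) := {C | C ∈ maxChainsIn (rankSel ρ S) ∧
    (fun x => g • x) '' C = C} with hA₁def
  set A₂ : Set (Set P) := {C | C ∈ maxChainsIn (rankSel ρ ({m} : Finset ℕ)) ∧
    (fun x => g • x) '' C = C} with hA₂def
  have hSm : ({m} : Finset ℕ) ⊆ Finset.Icc 1 n :=
    Finset.singleton_subset_iff.2 (hS hm_mem)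
  -- auxiliary: the T-rank part of the chain built from (c, x)
  have himgT : ∀ (x : P) (hx : ρ x = m) (c : Finset (Finset (Fin m))),
      c.image Finset.card = T →
      {y ∈ ({⊥, x, ⊤} ∪ (fun A => (((E x hx).symm A : Set.Iic x) : P)) '' ↑c : Set P) |
        ρ y ∈ T} = (fun A => (((E x hx).symm A : Set.Iic x) : P)) '' ↑c := by
    intro x hx c hcT
    ext y
    constructor
    · rintro ⟨hy, hyT⟩
      rcases hy with (rfl | rfl | rfl) | hy
      · exact absurd (hT_lt _ hyT).1 (by rw [hρbot]; omega)
      · exact absurd (hT_lt _ hyT).2.1 (by rw [hx]; omega)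
      · exact absurd (hT_lt _ hyT).2.2 (by rw [hρtop]; omega)
      · exact hy
    · rintro ⟨A, hA, rfl⟩
      refine ⟨Or.inr ⟨A, hA, rfl⟩, ?_⟩
      rw [hρsymm x hx A]
      rw [← hcT]
      exact Finset.mem_image_of_mem _ hA
  -- membership of the built chain in A₁
  have hΨmem : ∀ (c : Finset (Finset (Fin m))),
      IsChain (· ⊆ ·) (↑c : Set (Finset (Fin m))) → c.image Finset.card = T →
      ∀ (x : P) (hx : ρ x = m), g • x = x →
      (({⊥, x, ⊤} ∪ (fun A => (((E x hx).symm A : Set.Iic x) : P)) '' ↑c : Set P)) ∈ A₁ := by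
    intro c hcch hcT x hx hxfix
    set e := E x hx with hedef
    have hle : ∀ A : Finset (Fin m), ((e.symm A : Set.Iic x) : P) ≤ x := fun A => (e.symm A).2
    have hxt : x ≠ ⊤ := hne_top x hx
    constructor
    · rw [aux_maxchain_iff n ρ hρbot hρtop hρcov S hS]
      refine ⟨?_, Or.inl (Set.mem_insert _ _),
        Or.inl (Set.mem_insert_of_mem _ (Set.mem_insert_of_mem _ rfl)), ?_, ?_⟩
      · -- chain
        intro u hu v hv huv
        have hcomp : ∀ w : P, w ∈ ({⊥, x, ⊤} ∪
            (fun A => (((e.symm A : Set.Iic x)) : P)) '' ↑c : Set P) →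
            w = ⊥ ∨ w = ⊤ ∨ w ≤ x := by
          rintro w ((rfl | rfl | rfl) | ⟨A, hA, rfl⟩)
          · exact Or.inl rfl
          · exact Or.inr (Or.inr le_rfl)
          · exact Or.inr (Or.inl rfl)
          · exact Or.inr (Or.inr (hle A))
        rcases hu with hu' | hu
        · rcases hu' with rfl | rfl | rfl
          · exact Or.inl bot_le
          · rcases hcomp v hv with rfl | rfl | h
            · exact Or.inr bot_le
            · exact Or.inl le_top
            · exact Or.inr h
          · exact Or.inr le_top
        · rcases hv with hv' | hv
          · rcases hv' with rfl | rfl | rfl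
            · exact Or.inr bot_le
            · rcases hu with ⟨A, hA, rfl⟩
              exact Or.inl (hle A)
            · exact Or.inl le_top
          · obtain ⟨A, hA, rfl⟩ := hu
            obtain ⟨B, hB, rfl⟩ := hv
            have hAB : A ≠ B := fun h => huv (by rw [h])
            rcases hcch hA hB hAB with h | h
            · exact Or.inl (Subtype.coe_le_coe.2 (e.symm.monotone h))
            · exact Or.inr (Subtype.coe_le_coe.2 (e.symm.monotone h))
      · -- ranks
        rintro y ((rfl | rfl | rfl) | ⟨A, hA, rfl⟩)
        · exact Or.inr (Or.inl rfl)
        · exact Or.inl (hx ▸ hm_mem)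
        · exact Or.inr (Or.inr rfl)
        · refine Or.inl ?_
          have : (((e.symm A : Set.Iic x)) : P) = (((E x hx).symm A : Set.Iic x) : P) := rfl
          rw [hρsymm x hx A]
          have hmem : A.card ∈ T := by
            rw [← hcT]; exact Finset.mem_image_of_mem _ hA
          exact Finset.mem_of_mem_erase hmem
      · -- existence of each rank
        intro s hs
        rcases eq_or_ne s m with rfl | hsm
        · exact ⟨x, Or.inl (Set.mem_insert_of_mem _ (Set.mem_insert _ _)), hx⟩
        · have hsT : s ∈ T := Finset.mem_erase.2 ⟨hsm, hs⟩
          rw [← hcT] at hsT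
          obtain ⟨A, hA, hAcard⟩ := Finset.mem_image.1 hsT
          exact ⟨((e.symm A : Set.Iic x) : P), Or.inr ⟨A, hA, rfl⟩,
            by rw [hρsymm x hx A, hAcard]⟩
    · -- fixed by g
      have hfixall : ∀ y ∈ ({⊥, x, ⊤} ∪
          (fun A => (((e.symm A : Set.Iic x)) : P)) '' ↑c : Set P), g • y = y := by
        rintro y ((rfl | rfl | rfl) | ⟨A, hA, rfl⟩)
        · exact aux_smul_bot hact g
        · exact hxfix
        · exact aux_smul_top hact g
        · exact hgood g x hxt hxfix _ (hle A)
      rw [Set.image_congr hfixall, Set.image_id']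
  -- the bijection Ψ
  set BC := {c : Finset (Finset (Fin m)) //
    IsChain (· ⊆ ·) (↑c : Set (Finset (Fin m))) ∧ c.image Finset.card = T} with hBCdef
  set F := {x : P // ρ x = m ∧ g • x = x} with hFdef
  have hΨbij : ∃ Ψ : BC × F → ↥A₁, Function.Bijective Ψ := by
    refine ⟨fun p => ⟨{⊥, p.2.1, ⊤} ∪
      (fun A => (((E p.2.1 p.2.2.1).symm A : Set.Iic p.2.1) : P)) '' ↑p.1.1,
      hΨmem p.1.1 p.1.2.1 p.1.2.2 p.2.1 p.2.2.1 p.2.2.2⟩, ?_, ?_⟩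
    · -- injective
      rintro ⟨⟨c, hcch, hcT⟩, ⟨x, hx, hxfix⟩⟩ ⟨⟨c', hcch', hcT'⟩, ⟨x', hx', hxfix'⟩⟩ h
      rw [Subtype.mk.injEq] at h
      dsimp only at h
      -- first:  x = x'
      have hxx : x = x' := by
        have hxU : x ∈ ({⊥, x', ⊤} ∪
            (fun A => (((E x' hx').symm A : Set.Iic x') : P)) '' ↑c' : Set P) := by
          rw [← h]
          exact Or.inl (Set.mem_insert_of_mem _ (Set.mem_insert _ _))
        rcases hxU with (rfl | h1 | rfl) | ⟨A, hA, hAx⟩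
        · exact absurd rfl (hne_bot _ hx)
        · exact h1
        · exact absurd rfl (hne_top _ hx)
        · exfalso
          have h2 : ρ x = A.card := by rw [← hAx, hρsymm x' hx' A]
          have h3 : A.card ∈ T := by
            rw [← hcT']; exact Finset.mem_image_of_mem _ hA
          rw [hx] at h2
          rw [← h2] at h3
          exact hmT h3
      subst hxx
      -- then: c = c'
      have hcc : c = c' := by
        have h1 := himgT x hx c hcT
        have h2 := himgT x hx' c' hcT'
        have hee : E x hx = E x hx' := rfl
        rw [← hee] at h2
        rw [h] at h1
        rw [h1] at h2
        have hinj : Function.Injective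
            (fun A : Finset (Fin m) => (((E x hx).symm A : Set.Iic x) : P)) := by
          intro A B hAB
          exact (E x hx).symm.injective (Subtype.coe_injective hAB)
        have := Set.image_injective.2 hinj h2.symm
        exact (Finset.coe_injective this).symm
      subst hcc
      rfl
    · -- surjective
      rintro ⟨C, hC1, hC2⟩
      rw [aux_maxchain_iff n ρ hρbot hρtop hρcov S hS] at hC1
      obtain ⟨hch, hbC, htC, hrk, hex⟩ := hC1
      obtain ⟨x, hxC, hxρ⟩ := hex m hm_mem
      have hfixC := aux_fix_chain hact hch hC2
      set e := E x hxρ with hedef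
      set cset : Set P := {y | y ∈ C ∧ ρ y ∈ T} with hcsetdef
      have hcset_le : ∀ y ∈ cset, y ≤ x := by
        rintro y ⟨hyC, hyT⟩
        have hyx : y ≠ x := by
          intro hEq
          rw [hEq, hxρ] at hyT
          exact hmT hyT
        rcases hch hyC hxC hyx with h1 | h1
        · exact h1
        · exfalso
          have := aux_rho_lt ρ hρcov x y (lt_of_le_of_ne h1 (Ne.symm hyx))
          have h2 := (hT_lt _ hyT).2.1
          omega
      set f : P → Finset (Fin m) := fun y => if h : y ≤ x then e ⟨y, h⟩ else ∅ with hfdef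
      have hfy : ∀ y (hy : y ∈ cset), f y = e ⟨y, hcset_le y hy⟩ := by
        intro y hy
        rw [hfdef]
        exact dif_pos (hcset_le y hy)
      have hfcard : ∀ y (hy : y ∈ cset), (f y).card = ρ y := by
        intro y hy
        rw [hfy y hy]
        exact (hE x hxρ ⟨y, hcset_le y hy⟩).symm
      set c0 : Finset (Finset (Fin m)) := ((Set.toFinite cset).toFinset).image f with hc0def
      have hmemc0 : ∀ A : Finset (Fin m), A ∈ c0 ↔ ∃ y ∈ cset, f y = A := by
        intro A
        rw [hc0def]
        simp only [Finset.mem_image, Set.Finite.mem_toFinset]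
      have hc0ch : IsChain (· ⊆ ·) (↑c0 : Set (Finset (Fin m))) := by
        intro a ha b hb hne
        obtain ⟨y1, hy1, rfl⟩ := (hmemc0 a).1 ha
        obtain ⟨y2, hy2, rfl⟩ := (hmemc0 b).1 hb
        have hyne : y1 ≠ y2 := fun hEq => hne (by rw [hEq])
        rcases hch hy1.1 hy2.1 hyne with h1 | h1
        · left
          rw [hfy y1 hy1, hfy y2 hy2]
          exact Finset.le_iff_subset.1 (e.monotone (Subtype.mk_le_mk.2 h1))
        · right
          rw [hfy y1 hy1, hfy y2 hy2]
          exact Finset.le_iff_subset.1 (e.monotone (Subtype.mk_le_mk.2 h1))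
      have hc0T : c0.image Finset.card = T := by
        ext t
        rw [Finset.mem_image]
        constructor
        · rintro ⟨A, hA, rfl⟩
          obtain ⟨y, hy, rfl⟩ := (hmemc0 A).1 hA
          rw [hfcard y hy]
          exact hy.2
        · intro ht
          obtain ⟨y, hyC, hyρ⟩ := hex t (Finset.mem_of_mem_erase ht)
          have hycset : y ∈ cset := ⟨hyC, by rw [hyρ]; exact ht⟩
          refine ⟨f y, (hmemc0 (f y)).2 ⟨y, hycset, rfl⟩, ?_⟩
          rw [hfcard y hycset, hyρ]
      refine ⟨⟨⟨c0, hc0ch, hc0T⟩, ⟨x, hxρ, hfixC x hxC⟩⟩, ?_⟩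
      apply Subtype.ext
      dsimp only
      -- image part equals cset
      have himg : (fun A => (((e.symm A : Set.Iic x)) : P)) '' ↑c0 = cset := by
        rw [hc0def, Finset.coe_image, Set.Finite.coe_toFinset, ← Set.image_comp]
        have : ∀ y ∈ cset, ((fun A => (((e.symm A : Set.Iic x)) : P)) ∘ f) y = y := by
          intro y hy
          simp only [Function.comp_apply]
          rw [hfy y hy, e.symm_apply_apply]
        rw [Set.image_congr this, Set.image_id']
      rw [himg]
      ext y
      constructor
      · rintro ((rfl | rfl | rfl) | hy)
        · exact hbC
        · exact hxC
        · exact htC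
        · exact hy.1
      · intro hy
        rcases hrk y hy with h1 | rfl | rfl
        · rcases eq_or_ne (ρ y) m with hEq | hne
          · have : y = x := aux_rank_unique ρ hρcov hch hy hxC (hEq.trans hxρ.symm)
            exact Or.inl (this ▸ Set.mem_insert_of_mem _ (Set.mem_insert _ _))
          · exact Or.inr ⟨hy, Finset.mem_erase.2 ⟨hne, h1⟩⟩
        · exact Or.inl (Set.mem_insert _ _)
        · exact Or.inl (Set.mem_insert_of_mem _ (Set.mem_insert_of_mem _ rfl))
  -- the bijection Θ : F ≃ A₂
  have hΘbij : ∃ Θ : F → ↥A₂, Function.Bijective Θ := by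
    have hmem : ∀ (x : P), ρ x = m → g • x = x → ({⊥, x, ⊤} : Set P) ∈ A₂ := by
      intro x hx hxfix
      constructor
      · rw [aux_maxchain_iff n ρ hρbot hρtop hρcov {m} hSm]
        refine ⟨?_, Set.mem_insert _ _,
          Set.mem_insert_of_mem _ (Set.mem_insert_of_mem _ rfl), ?_, ?_⟩
        · rintro u (rfl | rfl | rfl) v (rfl | rfl | rfl) huv <;>
            first
              | exact Or.inl bot_le
              | exact Or.inl le_top
              | exact Or.inr bot_le
              | exact Or.inr le_top
              | exact Or.inl le_rfl
        · rintro y (rfl | rfl | rfl)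
          · exact Or.inr (Or.inl rfl)
          · exact Or.inl (by rw [hx]; exact Finset.mem_singleton_self m)
          · exact Or.inr (Or.inr rfl)
        · intro s hs
          rw [Finset.mem_singleton] at hs
          exact ⟨x, Set.mem_insert_of_mem _ (Set.mem_insert _ _), hx ▸ hs ▸ rfl⟩
      · have hfixall : ∀ y ∈ ({⊥, x, ⊤} : Set P), g • y = y := by
          rintro y (rfl | rfl | rfl)
          · exact aux_smul_bot hact g
          · exact hxfix
          · exact aux_smul_top hact g
        rw [Set.image_congr hfixall, Set.image_id']
    refine ⟨fun x => ⟨{⊥, x.1, ⊤}, hmem x.1 x.2.1 x.2.2⟩, ?_, ?_⟩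
    · rintro ⟨x, hx, hxfix⟩ ⟨x', hx', hxfix'⟩ h
      rw [Subtype.mk.injEq] at h
      have hxU : x ∈ ({⊥, x', ⊤} : Set P) := by
        rw [← h]
        exact Set.mem_insert_of_mem _ (Set.mem_insert _ _)
      rcases hxU with rfl | h1 | rfl
      · exact absurd rfl (hne_bot _ hx)
      · exact Subtype.ext h1
      · exact absurd rfl (hne_top _ hx)
    · rintro ⟨D, hD1, hD2⟩
      rw [aux_maxchain_iff n ρ hρbot hρtop hρcov {m} hSm] at hD1
      obtain ⟨hch, hbD, htD, hrk, hex⟩ := hD1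
      obtain ⟨x, hxD, hxρ⟩ := hex m (Finset.mem_singleton_self m)
      have hfixD := aux_fix_chain hact hch hD2
      refine ⟨⟨x, hxρ, hfixD x hxD⟩, ?_⟩
      apply Subtype.ext
      dsimp only
      ext y
      constructor
      · rintro (rfl | rfl | rfl)
        · exact hbD
        · exact hxD
        · exact htD
      · intro hy
        rcases hrk y hy with h1 | rfl | rfl
        · rw [Finset.mem_singleton] at h1
          have : y = x := aux_rank_unique ρ hρcov hch hy hxD (h1.trans hxρ.symm)
          exact this ▸ Set.mem_insert_of_mem _ (Set.mem_insert _ _)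
        · exact Set.mem_insert _ _
        · exact Set.mem_insert_of_mem _ (Set.mem_insert_of_mem _ rfl)
  -- put everything together
  obtain ⟨Ψ, hΨ⟩ := hΨbij
  obtain ⟨Θ, hΘ⟩ := hΘbij
  have key : Set.ncard A₁ = boolChains m T * Set.ncard A₂ := by
    rw [← Nat.card_coe_set_eq, ← Nat.card_coe_set_eq]
    have h1 : Nat.card ↥A₁ = Nat.card (BC × F) :=
      (Nat.card_congr (Equiv.ofBijective Ψ hΨ)).symm
    have h2 : Nat.card ↥A₂ = Nat.card F :=
      (Nat.card_congr (Equiv.ofBijective Θ hΘ)).symm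
    rw [h1, Nat.card_prod, h2]
    rfl
  have e1 : gAlpha ρ (fun g x => g • x) S g = (Set.ncard A₁ : ℤ) := rfl
  have e2 : gAlpha ρ (fun g x => g • x) ({m} : Finset ℕ) g = (Set.ncard A₂ : ℤ) := rfl
  rw [e1, e2, key]
  push_cast
  ring
end

section
/- Let P = P_{n,r} be the poset of r-colored injective words with the natural 𝔖_n-action. Then for every S ⊆ {1,…,n−1}, β_P(S) + β_P(S ∪ {n}) = b_n(S) · r^n · ρ^reg, where ρ^reg is the regular representation of 𝔖_n and b_n(S) is the number of permutations in 𝔖_n with descent set S. -/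
open scoped Classical

noncomputable section Aux
open Finset

/-! ### List lemmas -/

theorem interp_step {α : Type*} {l₁ l₂ : List α} (h : l₁.Sublist l₂)
    (hl : l₁.length < l₂.length) : ∃ l, l₁.Sublist l ∧ l.Sublist l₂ ∧ l.length = l₁.length + 1 := by
  induction h with
  | slnil => simp at hl
  | cons a h ih =>
    rename_i t₁ t₂
    by_cases hc : t₁.length < t₂.length
    · obtain ⟨l, h1, h2, h3⟩ := ih hc
      exact ⟨l, h1, h2.cons a, h3⟩
    · have : t₁ = t₂ := h.eq_of_length (by simp at hl; omega)
      subst this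
      exact ⟨a :: t₁, List.sublist_cons_self a t₁, List.Sublist.refl _, rfl⟩
  | cons_cons a h ih =>
    rename_i t₁ t₂
    obtain ⟨l, h1, h2, h3⟩ := ih (by simpa using hl)
    exact ⟨a :: l, h1.cons₂ a, h2.cons₂ a, by simp [h3]⟩

theorem interp {α : Type*} {l₁ l₂ : List α} (h : l₁.Sublist l₂) :
    ∀ m, l₁.length ≤ m → m ≤ l₂.length → ∃ l, l₁.Sublist l ∧ l.Sublist l₂ ∧ l.length = m := by
  intro m h1 h2
  induction m with
  | zero => exact ⟨l₁, List.Sublist.refl _, h, by omega⟩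
  | succ k ih =>
    rcases Nat.lt_or_ge k l₁.length with hk | hk
    · exact ⟨l₁, List.Sublist.refl _, h, by omega⟩
    · obtain ⟨l, hl1, hl2, hl3⟩ := ih hk (by omega)
      obtain ⟨l', h1', h2', h3'⟩ := interp_step hl2 (by omega)
      exact ⟨l', hl1.trans h1', h2', by omega⟩

theorem filter_mem_sublist {α : Type*} [DecidableEq α] {s l : List α} (hn : l.Nodup)
    (h : s.Sublist l) : l.filter (fun x => x ∈ s) = s := by
  induction h with
  | slnil => rfl
  | cons a h ih =>
    rename_i t₁ t₂
    have hn2 : t₂.Nodup := hn.of_cons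
    have ha : a ∉ t₂ := by simp at hn; exact hn.1
    have has : a ∉ t₁ := fun hx => ha (h.subset hx)
    simp only [List.filter_cons]
    rw [if_neg (by simpa using has)]
    exact ih hn2
  | cons_cons a h ih =>
    rename_i t₁ t₂
    have hn2 : t₂.Nodup := hn.of_cons
    have ha : a ∉ t₂ := by simp at hn; exact hn.1
    simp only [List.filter_cons, if_pos (by simp : (a ∈ a :: t₁))]
    simp only [decide_eq_true_eq]
    rw [if_pos (by simp)]
    have heq : List.filter (fun x => decide (x ∈ a :: t₁)) t₂
        = List.filter (fun x => decide (x ∈ t₁)) t₂ := by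
      apply List.filter_congr
      intro x hx
      have hxa : x ≠ a := fun hxa => ha (hxa ▸ hx)
      simp [List.mem_cons, hxa]
    rw [heq, ih hn2]

theorem length_filter_card {α : Type*} (p : α → Bool) (l : List α) :
    (l.filter p).length
      = (Finset.univ.filter (fun i : Fin l.length => p (l.get i) = true)).card := by
  induction l with
  | nil => simp
  | cons a t ih =>
    rw [Finset.card_filter] at ih ⊢
    simp only [List.length_cons]
    rw [Fin.sum_univ_succ]
    simp only [List.get_cons_zero, List.get_cons_succ, List.filter_cons]
    by_cases hp : p a = true
    · simp [hp, ih]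
      omega
    · simp [hp, ih]

theorem length_filter_card' {α : Type*} (p : α → Bool) (l : List α) {m : ℕ} (h : l.length = m) :
    (l.filter p).length
      = (Finset.univ.filter (fun i : Fin m => p (l.get (Fin.cast h.symm i)) = true)).card := by
  subst h
  simpa using length_filter_card p l

theorem filter_eq_sublist {α : Type*} [DecidableEq α] {s l : List α} (hn : l.Nodup)
    (h : s.Sublist l) (p : α → Bool) (hp : ∀ x ∈ l, (p x = true ↔ x ∈ s)) :
    l.filter p = s := by
  have h1 : l.filter p = l.filter (fun x => x ∈ s) := by
    apply List.filter_congr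
    intro x hx
    have h2 := hp x hx
    by_cases hx2 : x ∈ s
    · simp [hx2, h2.mpr hx2]
    · simp only [hx2, iff_false] at h2
      simp [hx2]
      exact Bool.not_eq_true _ ▸ h2
  rw [h1]
  exact filter_mem_sublist hn h

/-! ### Poset basics -/

variable {n r : ℕ}

lemma word_len_le (u : CInjWord n r) : u.1.length ≤ n := by
  have h := u.2.length_le_card
  simpa using h

lemma le_iff_sub {u v : CInjWord n r} :
    (u : WithTop (CInjWord n r)) ≤ (v : WithTop (CInjWord n r)) ↔ u.1.Sublist v.1 := by
  rw [WithTop.coe_le_coe]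
  exact Iff.rfl

lemma rkC_coe (u : CInjWord n r) : rkC n r (u : WithTop (CInjWord n r)) = u.1.length := rfl

lemma rkC_top : rkC n r (⊤ : WithTop (CInjWord n r)) = n + 1 := rfl

lemma rkC_bot : rkC n r (⊥ : WithTop (CInjWord n r)) = 0 := rfl

lemma rkC_le (x : WithTop (CInjWord n r)) : rkC n r x ≤ n + 1 := by
  cases x with
  | top => exact le_refl _
  | coe u => exact (word_len_le u).trans (by omega)

lemma rk_lt_of_lt {x y : WithTop (CInjWord n r)} (h : x < y) : rkC n r x < rkC n r y := by
  cases x with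
  | top => exact absurd h not_top_lt
  | coe u =>
    cases y with
    | top =>
      rw [rkC_coe, rkC_top]
      exact Nat.lt_succ_of_le (word_len_le u)
    | coe v =>
      have hsub : u.1.Sublist v.1 := le_iff_sub.mp h.le
      have hne : u ≠ v := by
        rintro rfl
        exact lt_irrefl _ h
      have hlen := hsub.length_le
      have hne2 : u.1.length ≠ v.1.length := fun he => hne (Subtype.ext (hsub.eq_of_length he))
      rw [rkC_coe, rkC_coe]
      omega

lemma eq_of_le_rk {x y : WithTop (CInjWord n r)} (h : x ≤ y) (hr : rkC n r x = rkC n r y) :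
    x = y := by
  rcases eq_or_lt_of_le h with h' | h'
  · exact h'
  · exact absurd hr (Nat.ne_of_lt (rk_lt_of_lt h'))

lemma chain_rank_unique {C : Set (WithTop (CInjWord n r))} (hC : IsChain (· ≤ ·) C)
    {x y : WithTop (CInjWord n r)} (hx : x ∈ C) (hy : y ∈ C)
    (h : rkC n r x = rkC n r y) : x = y := by
  rcases eq_or_ne x y with he | hne
  · exact he
  · rcases hC hx hy hne with h' | h'
    · exact eq_of_le_rk h' h
    · exact (eq_of_le_rk h' h.symm).symm

lemma le_of_rk_le {C : Set (WithTop (CInjWord n r))} (hC : IsChain (· ≤ ·) C)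
    {x y : WithTop (CInjWord n r)} (hx : x ∈ C) (hy : y ∈ C)
    (h : rkC n r x ≤ rkC n r y) : x ≤ y := by
  rcases eq_or_ne x y with he | hne
  · exact he.le
  · rcases hC hx hy hne with h' | h'
    · exact h'
    · rcases eq_or_lt_of_le h' with h'' | h''
      · exact h''.ge
      · exact absurd (rk_lt_of_lt h'') (by omega)

lemma mem_rankSel_iff_s6 {A : Finset ℕ} {x : WithTop (CInjWord n r)} :
    x ∈ rankSel (rkC n r) A ↔ rkC n r x ∈ A ∨ x = ⊥ ∨ x = ⊤ := by
  simp only [rankSel, Set.mem_union, Set.mem_insert_iff, Set.mem_singleton_iff, Set.mem_setOf_eq]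


lemma bot_mem_rankSel_s6 {A : Finset ℕ} : (⊥ : WithTop (CInjWord n r)) ∈ rankSel (rkC n r) A :=
  mem_rankSel_iff_s6.mpr (Or.inr (Or.inl rfl))

lemma top_mem_rankSel_s6 {A : Finset ℕ} : (⊤ : WithTop (CInjWord n r)) ∈ rankSel (rkC n r) A :=
  mem_rankSel_iff_s6.mpr (Or.inr (Or.inr rfl))

lemma chain_finite {C : Set (WithTop (CInjWord n r))} (hch : IsChain (· ≤ ·) C) : C.Finite := by
  have hinj : Set.InjOn (rkC n r) C := fun x hx y hy h => chain_rank_unique hch hx hy h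
  have himg : (rkC n r '' C).Finite := by
    apply (Set.finite_Iic (n + 1)).subset
    rintro _ ⟨x, _, rfl⟩
    exact rkC_le x
  exact Set.Finite.of_finite_image himg hinj

lemma bot_top_mem_maxchain {A : Finset ℕ} {C : Set (WithTop (CInjWord n r))}
    (hC : C ∈ maxChainsIn (rankSel (rkC n r) A)) :
    (⊥ : WithTop (CInjWord n r)) ∈ C ∧ (⊤ : WithTop (CInjWord n r)) ∈ C := by
  obtain ⟨hsub, hch, hmax⟩ := hC
  have hch2 : IsChain (· ≤ ·) (insert ⊤ (insert ⊥ C)) := by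
    apply IsChain.insert
    · apply IsChain.insert hch
      intro b _ _
      exact Or.inl bot_le
    · intro b _ _
      exact Or.inr le_top
  have hsub2 : insert ⊤ (insert ⊥ C) ⊆ rankSel (rkC n r) A := by
    intro x hx
    rcases hx with rfl | hx
    · exact top_mem_rankSel_s6
    · rcases hx with rfl | hx
      · exact bot_mem_rankSel_s6
      · exact hsub hx
  have heq : C = insert ⊤ (insert ⊥ C) :=
    hmax _ hsub2 hch2 ((Set.subset_insert _ _).trans (Set.subset_insert _ _))
  constructor
  · rw [heq]; exact Set.mem_insert_iff.mpr (Or.inr (Set.mem_insert _ _))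
  · rw [heq]; exact Set.mem_insert _ _

/-! ### Extension and interpolation for colored words -/

lemma map_self_forall {α : Type*} {f : α → α} :
    ∀ {l : List α}, l.map f = l → ∀ x ∈ l, f x = x := by
  intro l
  induction l with
  | nil => intro _ x hx; simp at hx
  | cons a t ih =>
    intro h x hx
    rw [List.map_cons, List.cons.injEq] at h
    rw [List.mem_cons] at hx
    rcases hx with rfl | hx
    · exact h.1
    · exact ih h.2 x hx

lemma exists_extension (u : CInjWord n r) {t : ℕ} (h1 : u.1.length ≤ t) (h2 : t ≤ n) :
    ∃ w : CInjWord n r, u.1.Sublist w.1 ∧ w.1.length = t := by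
  classical
  set used : List (Fin n) := u.1.map Prod.fst with hused
  have hused_nodup : used.Nodup := u.2
  set unusedF : Finset (Fin n) := Finset.univ \ used.toFinset with hF
  have hcard : unusedF.card = n - u.1.length := by
    rw [hF, Finset.card_sdiff_of_subset (Finset.subset_univ _), Finset.card_univ, Fintype.card_fin,
      List.toFinset_card_of_nodup hused_nodup]
    simp [hused]
  set ext := (unusedF.toList.take (t - u.1.length)).map
    (fun i => (i, (0 : ZMod r))) with hext
  have htake : (unusedF.toList.take (t - u.1.length)).Sublist unusedF.toList :=
    List.take_sublist _ _
  have hexlen : ext.length = t - u.1.length := by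
    rw [hext, List.length_map, List.length_take, Finset.length_toList, hcard]
    omega
  have hfst : ext.map Prod.fst = unusedF.toList.take (t - u.1.length) := by
    rw [hext, List.map_map]
    exact List.map_id _
  refine ⟨⟨u.1 ++ ext, ?_⟩, List.sublist_append_left _ _, by
    simp only [List.length_append, hexlen]; omega⟩
  rw [List.map_append]
  apply List.Nodup.append
  · exact u.2
  · rw [hfst]
    exact unusedF.nodup_toList.sublist htake
  · intro a ha hb
    rw [hfst] at hb
    have : a ∈ unusedF := Finset.mem_toList.mp (htake.subset hb)
    rw [hF, Finset.mem_sdiff] at this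
    exact this.2 (List.mem_toFinset.mpr ha)

lemma exists_rank_mem {A : Finset ℕ} (hA : ∀ t ∈ A, 1 ≤ t ∧ t ≤ n)
    {C : Set (WithTop (CInjWord n r))} (hC : C ∈ maxChainsIn (rankSel (rkC n r) A))
    {t : ℕ} (ht : t ∈ A) : ∃ x ∈ C, rkC n r x = t := by
  by_contra hno
  push_neg at hno
  obtain ⟨hbot, htop⟩ := bot_top_mem_maxchain hC
  obtain ⟨hsub, hch, hmax⟩ := hC
  have hfin := chain_finite hch
  have ht1 : 1 ≤ t := (hA t ht).1
  have ht2 : t ≤ n := (hA t ht).2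
  obtain ⟨a, haL, hamax⟩ := Set.exists_max_image {x ∈ C | rkC n r x < t} (rkC n r)
    (hfin.subset (fun x hx => hx.1)) ⟨⊥, hbot, by rw [rkC_bot]; omega⟩
  obtain ⟨b, hbU, hbmin⟩ := Set.exists_min_image {x ∈ C | t < rkC n r x} (rkC n r)
    (hfin.subset (fun x hx => hx.1)) ⟨⊤, htop, by rw [rkC_top]; omega⟩
  have harit : rkC n r a < t := haL.2
  have hbrit : t < rkC n r b := hbU.2
  have hab : a ≤ b := le_of_rk_le hch haL.1 hbU.1 (by omega)
  have ha_ne_top : a ≠ ⊤ := by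
    intro h
    rw [h, rkC_top] at harit
    omega
  obtain ⟨ua, rfl⟩ := WithTop.ne_top_iff_exists.mp ha_ne_top
  have hua_len : ua.1.length < t := by rw [← rkC_coe]; exact harit
  -- find w of rank t with a ≤ w ≤ b
  have hw : ∃ w : CInjWord n r, ua.1.Sublist w.1 ∧ w.1.length = t ∧ (w : WithTop (CInjWord n r)) ≤ b := by
    cases b with
    | top =>
      obtain ⟨w, hw1, hw2⟩ := exists_extension ua (le_of_lt hua_len) ht2
      exact ⟨w, hw1, hw2, le_top⟩
    | coe ub =>
      have hsubab : ua.1.Sublist ub.1 := le_iff_sub.mp hab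
      have hlenb : t < ub.1.length := by rw [← rkC_coe]; exact hbrit
      obtain ⟨l, hl1, hl2, hl3⟩ := interp hsubab t (le_of_lt hua_len) (le_of_lt hlenb)
      refine ⟨⟨l, ?_⟩, hl1, hl3, le_iff_sub.mpr hl2⟩
      exact ub.2.sublist (hl2.map Prod.fst)
  obtain ⟨w, hw1, hw2, hw3⟩ := hw
  have hwrk : rkC n r (w : WithTop (CInjWord n r)) = t := by rw [rkC_coe]; exact hw2
  have haw : (ua : WithTop (CInjWord n r)) ≤ w := le_iff_sub.mpr hw1
  have hwC : (w : WithTop (CInjWord n r)) ∉ C := fun h => hno _ h hwrk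
  have hcomp : ∀ x ∈ C, x ≠ (w : WithTop (CInjWord n r)) →
      x ≤ (w : WithTop (CInjWord n r)) ∨ (w : WithTop (CInjWord n r)) ≤ x := by
    intro x hx _
    have hrkx : rkC n r x ≠ t := hno x hx
    rcases Nat.lt_or_ge (rkC n r x) t with h' | h'
    · have : rkC n r x ≤ rkC n r (ua : WithTop (CInjWord n r)) := hamax x ⟨hx, h'⟩
      exact Or.inl ((le_of_rk_le hch hx haL.1 this).trans haw)
    · have h'' : t < rkC n r x := by omega
      have : rkC n r b ≤ rkC n r x := hbmin x ⟨hx, h''⟩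
      exact Or.inr (hw3.trans (le_of_rk_le hch hbU.1 hx this))
  have hchain2 : IsChain (· ≤ ·) (insert (w : WithTop (CInjWord n r)) C) := by
    apply hch.insert
    intro x hx hne
    rcases hcomp x hx (Ne.symm hne) with h' | h'
    · exact Or.inr h'
    · exact Or.inl h'
  have hsub2 : insert (w : WithTop (CInjWord n r)) C ⊆ rankSel (rkC n r) A := by
    intro x hx
    rcases hx with rfl | hx
    · exact mem_rankSel_iff_s6.mpr (Or.inl (by rw [hwrk]; exact ht))
    · exact hsub hx
  have heq : C = insert (w : WithTop (CInjWord n r)) C :=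
    hmax _ hsub2 hchain2 (Set.subset_insert _ _)
  exact hwC (heq ▸ Set.mem_insert _ C)

/-! ### Flags and maximal chains -/

def flagCond (A : Finset ℕ) (f : {t // t ∈ A} → CInjWord n r) : Prop :=
  (∀ t : {t // t ∈ A}, (f t).1.length = (t : ℕ)) ∧
  ∀ s t : {t // t ∈ A}, (s : ℕ) ≤ (t : ℕ) → (f s).1.Sublist (f t).1

def Psi (A : Finset ℕ) (f : {t // t ∈ A} → CInjWord n r) : Set (WithTop (CInjWord n r)) :=
  insert ⊥ (insert ⊤ (Set.range fun t => ((f t : CInjWord n r) : WithTop (CInjWord n r))))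

lemma Psi_mem {A : Finset ℕ} (hA : ∀ t ∈ A, 1 ≤ t ∧ t ≤ n)
    {f : {t // t ∈ A} → CInjWord n r} (hf : flagCond A f) :
    Psi A f ∈ maxChainsIn (rankSel (rkC n r) A) := by
  obtain ⟨hlen, hmono⟩ := hf
  refine ⟨?_, ?_, ?_⟩
  · intro x hx
    rcases hx with rfl | hx
    · exact bot_mem_rankSel_s6
    rcases hx with rfl | ⟨t, rfl⟩
    · exact top_mem_rankSel_s6
    · exact mem_rankSel_iff_s6.mpr (Or.inl (by rw [rkC_coe, hlen]; exact t.2))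
  · apply IsChain.insert
    · apply IsChain.insert
      · rintro _ ⟨s, rfl⟩ _ ⟨t, rfl⟩ _
        rcases le_total (s : ℕ) (t : ℕ) with h | h
        · exact Or.inl (le_iff_sub.mpr (hmono s t h))
        · exact Or.inr (le_iff_sub.mpr (hmono t s h))
      · intro b _ _
        exact Or.inr le_top
    · intro b _ _
      exact Or.inl bot_le
  · intro D hD hchD hsubD
    apply Set.Subset.antisymm hsubD
    intro x hxD
    rcases mem_rankSel_iff_s6.mp (hD hxD) with hrk | h | h
    · have hft : ((f ⟨rkC n r x, hrk⟩ : CInjWord n r) : WithTop (CInjWord n r)) ∈ Psi A f :=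
        Set.mem_insert_iff.mpr (Or.inr (Set.mem_insert_iff.mpr (Or.inr ⟨⟨rkC n r x, hrk⟩, rfl⟩)))
      have hx : x = ((f ⟨rkC n r x, hrk⟩ : CInjWord n r) : WithTop (CInjWord n r)) :=
        chain_rank_unique hchD hxD (hsubD hft) (by rw [rkC_coe, hlen])
      rw [hx]
      exact hft
    · rw [h]; exact Set.mem_insert _ _
    · rw [h]; exact Set.mem_insert_iff.mpr (Or.inr (Set.mem_insert _ _))

lemma Psi_inj {A : Finset ℕ} (hA : ∀ t ∈ A, 1 ≤ t ∧ t ≤ n) :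
    Function.Injective
      (fun f : {f : {t // t ∈ A} → CInjWord n r // flagCond A f} => Psi A f.1) := by
  rintro ⟨f, hf⟩ ⟨f', hf'⟩ h
  simp only at h
  apply Subtype.ext
  funext t
  have hmem : ((f t : CInjWord n r) : WithTop (CInjWord n r)) ∈ Psi A f' := by
    rw [← h]
    exact Set.mem_insert_iff.mpr (Or.inr (Set.mem_insert_iff.mpr (Or.inr ⟨t, rfl⟩)))
  rcases Set.mem_insert_iff.mp hmem with h1 | hmem
  · exfalso
    have h2 : rkC n r ((f t : CInjWord n r) : WithTop (CInjWord n r)) = 0 := by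
      rw [h1, rkC_bot]
    rw [rkC_coe, hf.1] at h2
    have := (hA t t.2).1
    omega
  rcases Set.mem_insert_iff.mp hmem with h1 | ⟨s, hs⟩
  · exact absurd h1 WithTop.coe_ne_top
  · have hc : f' s = f t := WithTop.coe_injective hs
    have hval : (s : ℕ) = (t : ℕ) := by rw [← hf'.1 s, ← hf.1 t, hc]
    have hst : s = t := Subtype.ext hval
    show f t = f' t
    rw [hst] at hc
    exact hc.symm

lemma maxchain_eq_Psi {A : Finset ℕ} (hA : ∀ t ∈ A, 1 ≤ t ∧ t ≤ n)
    {C : Set (WithTop (CInjWord n r))} (hC : C ∈ maxChainsIn (rankSel (rkC n r) A)) :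
    ∃ f : {f : {t // t ∈ A} → CInjWord n r // flagCond A f}, Psi A f.1 = C := by
  have hex : ∀ t : {t // t ∈ A}, ∃ u : CInjWord n r,
      (u : WithTop (CInjWord n r)) ∈ C ∧ u.1.length = (t : ℕ) := by
    intro t
    obtain ⟨x, hx, hrk⟩ := exists_rank_mem hA hC t.2
    have hxt : x ≠ ⊤ := by
      intro h
      rw [h, rkC_top] at hrk
      have := (hA t t.2).2
      omega
    obtain ⟨u, rfl⟩ := WithTop.ne_top_iff_exists.mp hxt
    exact ⟨u, hx, by rw [← rkC_coe]; exact hrk⟩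
  choose u hu1 hu2 using hex
  obtain ⟨hbot, htop⟩ := bot_top_mem_maxchain hC
  obtain ⟨hsub, hch, hmax⟩ := hC
  have hflag : flagCond A u := by
    refine ⟨hu2, ?_⟩
    intro s t hst
    apply le_iff_sub.mp
    apply le_of_rk_le hch (hu1 s) (hu1 t)
    rw [rkC_coe, rkC_coe, hu2, hu2]
    exact hst
  refine ⟨⟨u, hflag⟩, ?_⟩
  apply Set.Subset.antisymm
  · intro x hx
    rcases hx with rfl | hx
    · exact hbot
    rcases hx with rfl | ⟨t, rfl⟩
    · exact htop
    · exact hu1 t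
  · intro x hxC
    rcases mem_rankSel_iff_s6.mp (hsub hxC) with hrk | h | h
    · have hx : x = ((u ⟨rkC n r x, hrk⟩ : CInjWord n r) : WithTop (CInjWord n r)) :=
        chain_rank_unique hch hxC (hu1 _) (by rw [rkC_coe, hu2])
      rw [hx]
      exact Set.mem_insert_iff.mpr (Or.inr (Set.mem_insert_iff.mpr (Or.inr ⟨_, rfl⟩)))
    · rw [h]; exact Set.mem_insert _ _
    · rw [h]; exact Set.mem_insert_iff.mpr (Or.inr (Set.mem_insert _ _))

lemma ncard_MC {A : Finset ℕ} (hA : ∀ t ∈ A, 1 ≤ t ∧ t ≤ n) :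
    (maxChainsIn (rankSel (rkC n r) A)).ncard
      = Nat.card {f : {t // t ∈ A} → CInjWord n r // flagCond A f} := by
  have hrange : maxChainsIn (rankSel (rkC n r) A)
      = Set.range (fun f : {f : {t // t ∈ A} → CInjWord n r // flagCond A f} => Psi A f.1) := by
    ext C
    constructor
    · intro hC
      obtain ⟨f, hf⟩ := maxchain_eq_Psi hA hC
      exact ⟨f, hf⟩
    · rintro ⟨f, rfl⟩
      exact Psi_mem hA f.2
  rw [hrange, ← Set.image_univ, Set.ncard_image_of_injective _ (Psi_inj hA), Set.ncard_univ]

/-! ### Group action on chains -/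

lemma rk_act (g : Equiv.Perm (Fin n)) (x : WithTop (CInjWord n r)) :
    rkC n r (WithTop.map (permCWord g) x) = rkC n r x := by
  cases x with
  | top => rw [WithTop.map_top]
  | coe u =>
    rw [WithTop.map_coe, rkC_coe, rkC_coe]
    simp [permCWord]

lemma act_fix {g : Equiv.Perm (Fin n)} {C : Set (WithTop (CInjWord n r))}
    (hch : IsChain (· ≤ ·) C) (hfix : WithTop.map (permCWord g) '' C = C)
    {x : WithTop (CInjWord n r)} (hx : x ∈ C) : WithTop.map (permCWord g) x = x := by
  have hgx : WithTop.map (permCWord g) x ∈ C := by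
    rw [← hfix]
    exact Set.mem_image_of_mem _ hx
  exact chain_rank_unique hch hgx hx (rk_act g x)

lemma fixed_chain_empty {A : Finset ℕ} (hA : ∀ t ∈ A, 1 ≤ t ∧ t ≤ n) (hnA : n ∈ A)
    (hn : 0 < n) {g : Equiv.Perm (Fin n)} (hg : g ≠ 1) :
    {C : Set (WithTop (CInjWord n r)) | C ∈ maxChainsIn (rankSel (rkC n r) A) ∧
      WithTop.map (permCWord g) '' C = C} = ∅ := by
  ext C
  simp only [Set.mem_setOf_eq, Set.mem_empty_iff_false, iff_false, not_and]
  intro hC hfix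
  obtain ⟨x, hx, hrk⟩ := exists_rank_mem hA hC hnA
  have hxt : x ≠ ⊤ := by
    intro h
    rw [h, rkC_top] at hrk
    omega
  obtain ⟨u, rfl⟩ := WithTop.ne_top_iff_exists.mp hxt
  have hulen : u.1.length = n := by rw [← rkC_coe]; exact hrk
  have hfixu : permCWord g u = u := by
    have h2 := act_fix hC.2.1 hfix hx
    rwa [WithTop.map_coe, WithTop.coe_inj] at h2
  have hmap : u.1.map (fun p => (g p.1, p.2)) = u.1 := congrArg Subtype.val hfixu
  have hfixall : ∀ p ∈ u.1, g p.1 = p.1 := by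
    intro p hp
    have h3 : ∀ q ∈ u.1, (fun p : Fin n × ZMod r => (g p.1, p.2)) q = q := by
      intro q hq
      exact map_self_forall hmap q hq
    have := h3 p hp
    exact congrArg Prod.fst this
  apply hg
  apply Equiv.ext
  intro i
  have hi : i ∈ u.1.map Prod.fst := by
    have hcard : (u.1.map Prod.fst).toFinset = Finset.univ := by
      apply Finset.eq_univ_of_card
      rw [List.toFinset_card_of_nodup u.2, List.length_map, hulen, Fintype.card_fin]
    rw [← List.mem_toFinset, hcard]
    exact Finset.mem_univ i
  obtain ⟨p, hp, rfl⟩ := List.mem_map.mp hi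
  rw [hfixall p hp]
  rfl

lemma act_one_image (C : Set (WithTop (CInjWord n r))) :
    WithTop.map (permCWord (1 : Equiv.Perm (Fin n))) '' C = C := by
  have h1 : permCWord (n := n) (r := r) 1 = id := by
    funext u
    apply Subtype.ext
    simp [permCWord]
  rw [h1]
  show Option.map id '' C = C
  rw [Option.map_id]; exact Set.image_id _

/-! ### Position flags -/

def flagSetCond (A : Finset ℕ) (F : {t // t ∈ A} → Finset (Fin n)) : Prop :=
  (∀ t : {t // t ∈ A}, (F t).card = (t : ℕ)) ∧
  ∀ s t : {t // t ∈ A}, (s : ℕ) ≤ (t : ℕ) → F s ⊆ F t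

def baseList (c : Fin n → ZMod r) (π : Equiv.Perm (Fin n)) : List (Fin n × ZMod r) :=
  (List.finRange n).map (fun i => (π i, c i))

lemma baseList_length (c : Fin n → ZMod r) (π : Equiv.Perm (Fin n)) :
    (baseList c π).length = n := by simp [baseList]

lemma get_index_eq {α : Type*} (l : List α) (i j : Fin l.length) (h : (i : ℕ) = (j : ℕ)) :
    l.get i = l.get j := by
  congr 1
  exact Fin.ext h

lemma baseList_get (c : Fin n → ZMod r) (π : Equiv.Perm (Fin n)) (i : Fin n) :
    (baseList c π).get (Fin.cast (baseList_length c π).symm i) = (π i, c i) := by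
  simp [baseList]
  exact ⟨rfl, rfl⟩

lemma baseList_fst_nodup (c : Fin n → ZMod r) (π : Equiv.Perm (Fin n)) :
    ((baseList c π).map Prod.fst).Nodup := by
  have h : (baseList c π).map Prod.fst = (List.finRange n).map π := by
    rw [baseList, List.map_map]
    rfl
  rw [h]
  exact (List.nodup_finRange n).map π.injective

lemma baseList_mem (c : Fin n → ZMod r) (π : Equiv.Perm (Fin n)) (i : Fin n) :
    (π i, c i) ∈ baseList c π := by
  rw [baseList, List.mem_map]
  exact ⟨i, List.mem_finRange i, rfl⟩

def thetaL (c : Fin n → ZMod r) (π : Equiv.Perm (Fin n)) (G : Finset (Fin n)) :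
    List (Fin n × ZMod r) :=
  (baseList c π).filter (fun x => π.symm x.1 ∈ G)

lemma thetaL_sublist (c : Fin n → ZMod r) (π : Equiv.Perm (Fin n)) (G : Finset (Fin n)) :
    (thetaL c π G).Sublist (baseList c π) := List.filter_sublist

lemma thetaL_nodup (c : Fin n → ZMod r) (π : Equiv.Perm (Fin n)) (G : Finset (Fin n)) :
    ((thetaL c π G).map Prod.fst).Nodup :=
  (baseList_fst_nodup c π).sublist ((thetaL_sublist c π G).map Prod.fst)

lemma thetaL_length (c : Fin n → ZMod r) (π : Equiv.Perm (Fin n)) (G : Finset (Fin n)) :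
    (thetaL c π G).length = G.card := by
  rw [thetaL, length_filter_card' _ (baseList c π) (baseList_length c π)]
  have h : (Finset.univ.filter fun i : Fin n =>
      (decide (π.symm ((baseList c π).get (Fin.cast (baseList_length c π).symm i)).1 ∈ G) = true))
      = Finset.univ.filter (fun i => i ∈ G) := by
    apply Finset.filter_congr
    intro i _
    rw [baseList_get]
    simp
  rw [h]
  simp

lemma thetaL_mono (c : Fin n → ZMod r) (π : Equiv.Perm (Fin n)) {G G' : Finset (Fin n)}
    (h : G ⊆ G') : (thetaL c π G).Sublist (thetaL c π G') := by
  apply List.monotone_filter_right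
  intro a ha
  simp only [decide_eq_true_eq] at ha ⊢
  exact h ha

lemma mem_thetaL (c : Fin n → ZMod r) (π : Equiv.Perm (Fin n)) (G : Finset (Fin n))
    (x : Fin n × ZMod r) : x ∈ thetaL c π G ↔ x ∈ baseList c π ∧ π.symm x.1 ∈ G := by
  simp [thetaL, List.mem_filter]

lemma card_flagWord {A : Finset ℕ} (hr : 0 < r) (hA : ∀ t ∈ A, 1 ≤ t ∧ t ≤ n) (hnA : n ∈ A) :
    Nat.card {f : {t // t ∈ A} → CInjWord n r // flagCond A f}
      = r ^ n * n.factorial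
          * Nat.card {F : {t // t ∈ A} → Finset (Fin n) // flagSetCond A F} := by
  classical
  set Θ : ((Fin n → ZMod r) × Equiv.Perm (Fin n))
      × {F : {t // t ∈ A} → Finset (Fin n) // flagSetCond A F}
      → {f : {t // t ∈ A} → CInjWord n r // flagCond A f} :=
    fun x => ⟨fun t => ⟨thetaL x.1.1 x.1.2 (x.2.1 t), thetaL_nodup _ _ _⟩,
      fun t => by rw [show (⟨thetaL x.1.1 x.1.2 (x.2.1 t), thetaL_nodup _ _ _⟩ :
          CInjWord n r).1 = thetaL x.1.1 x.1.2 (x.2.1 t) from rfl, thetaL_length, x.2.2.1 t],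
      fun s t hst => thetaL_mono _ _ (x.2.2.2 s t hst)⟩ with hΘ
  have hbij : Function.Bijective Θ := by
    constructor
    · rintro ⟨⟨c, π⟩, ⟨F, hF⟩⟩ ⟨⟨c', π'⟩, ⟨F', hF'⟩⟩ h
      have h1 : ∀ t, thetaL c π (F t) = thetaL c' π' (F' t) := by
        intro t
        exact congrArg Subtype.val (congrFun (congrArg Subtype.val h) t)
      set t0 : {t // t ∈ A} := ⟨n, hnA⟩
      have hFt0 : F t0 = Finset.univ :=
        Finset.eq_univ_of_card _ (by rw [hF.1 t0]; simp; rfl)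
      have hF't0 : F' t0 = Finset.univ :=
        Finset.eq_univ_of_card _ (by rw [hF'.1 t0]; simp; rfl)
      have hbase : baseList c π = baseList c' π' := by
        have e1 : thetaL c π (F t0) = baseList c π := by
          rw [thetaL, hFt0]
          apply List.filter_eq_self.mpr
          intro x _
          simp
        have e2 : thetaL c' π' (F' t0) = baseList c' π' := by
          rw [thetaL, hF't0]
          apply List.filter_eq_self.mpr
          intro x _
          simp
        rw [← e1, ← e2]
        exact h1 t0
      have hcc : ∀ i : Fin n, (π i, c i) = (π' i, c' i) := by
        intro i
        have h3 : (List.finRange n).map (fun i => (π i, c i))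
            = (List.finRange n).map (fun i => (π' i, c' i)) := hbase
        exact List.map_inj_left.mp h3 i (List.mem_finRange i)
      have hπ : π = π' := Equiv.ext fun i => congrArg Prod.fst (hcc i)
      have hc : c = c' := funext fun i => congrArg Prod.snd (hcc i)
      subst hπ
      subst hc
      have hFF : F = F' := by
        funext t
        ext j
        have hmem : (π j, c j) ∈ thetaL c π (F t) ↔ (π j, c j) ∈ thetaL c π (F' t) := by
          rw [h1 t]
        rw [mem_thetaL, mem_thetaL] at hmem
        simpa [baseList_mem] using hmem
      have : (⟨F, hF⟩ : {F : {t // t ∈ A} → Finset (Fin n) // flagSetCond A F}) = ⟨F', hF'⟩ :=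
        Subtype.ext hFF
      rw [this]
    · rintro ⟨f, hf⟩
      have hlen : (f ⟨n, hnA⟩).1.length = n := hf.1 ⟨n, hnA⟩
      set u : CInjWord n r := f ⟨n, hnA⟩ with hu
      have hnodup : u.1.Nodup := u.2.of_map Prod.fst
      have hflen : (u.1.map Prod.fst).length = n := by rw [List.length_map]; exact hlen
      set π₀ : Fin n → Fin n := fun i => (u.1.map Prod.fst).get (Fin.cast hflen.symm i)
        with hπ₀def
      have hπ₀ : Function.Injective π₀ := by
        intro a b hab
        have h2 := List.nodup_iff_injective_get.mp u.2 hab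
        have h3 : ((Fin.cast hflen.symm a) : ℕ) = ((Fin.cast hflen.symm b) : ℕ) :=
          congrArg Fin.val h2
        exact Fin.ext (by simpa using h3)
      set π : Equiv.Perm (Fin n) :=
        Equiv.ofBijective π₀ (Finite.injective_iff_bijective.mp hπ₀) with hπdef
      set c : Fin n → ZMod r := fun i => (u.1.get (Fin.cast hlen.symm i)).2 with hcdef
      have huget : ∀ i : Fin n, u.1.get (Fin.cast hlen.symm i) = (π i, c i) := by
        intro i
        have hfst : (u.1.get (Fin.cast hlen.symm i)).1 = π₀ i := by
          rw [hπ₀def]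
          simp [List.get_eq_getElem]
        exact Prod.ext hfst rfl
      have hbase : u.1 = baseList c π := by
        apply List.ext_get (by rw [baseList_length]; exact hlen)
        intro k h1 h2
        have hk : k < n := by rw [hlen] at h1; exact h1
        have e1 : u.1.get ⟨k, h1⟩ = (π ⟨k, hk⟩, c ⟨k, hk⟩) := by
          rw [← huget ⟨k, hk⟩]
          apply get_index_eq
          rfl
        have e2 : (baseList c π).get ⟨k, h2⟩ = (π ⟨k, hk⟩, c ⟨k, hk⟩) := by
          rw [← baseList_get c π ⟨k, hk⟩]
          apply get_index_eq
          rfl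
        rw [e1, e2]
      set F : {t // t ∈ A} → Finset (Fin n) :=
        fun t => Finset.univ.filter
          (fun i => decide (u.1.get (Fin.cast hlen.symm i) ∈ (f t).1) = true)
        with hFdef
      have hsubt : ∀ t : {t // t ∈ A}, (f t).1.Sublist u.1 := by
        intro t
        exact hf.2 t ⟨n, hnA⟩ ((hA t t.2).2)
      have hFcard : ∀ t, (F t).card = (t : ℕ) := by
        intro t
        have h3 := length_filter_card' (fun x => decide (x ∈ (f t).1)) u.1 hlen
        rw [filter_eq_sublist hnodup (hsubt t) _ (by intro x _; simp)] at h3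
        have h4 : (F t).card = (f t).1.length := h3.symm
        rw [h4, hf.1 t]
      have hFmono : ∀ s t : {t // t ∈ A}, (s : ℕ) ≤ (t : ℕ) → F s ⊆ F t := by
        intro s t hst
        intro i hi
        rw [hFdef] at hi ⊢
        rw [Finset.mem_filter] at hi ⊢
        refine ⟨hi.1, ?_⟩
        have h5 := of_decide_eq_true hi.2
        exact decide_eq_true ((hf.2 s t hst).subset h5)
      refine ⟨⟨⟨c, π⟩, ⟨F, hFcard, hFmono⟩⟩, ?_⟩
      apply Subtype.ext
      funext t
      apply Subtype.ext
      show thetaL c π (F t) = (f t).1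
      rw [thetaL, ← hbase]
      have hcong : u.1.filter (fun x => decide (π.symm x.1 ∈ F t))
          = u.1.filter (fun x => decide (x ∈ (f t).1)) := by
        apply List.filter_congr
        intro x hx
        obtain ⟨j, hj⟩ := List.mem_iff_get.mp hx
        have hgi : u.1.get (Fin.cast hlen.symm (Fin.cast hlen j)) = x := by
          rw [← hj]
          apply get_index_eq
          rfl
        have hx2 : x = (π (Fin.cast hlen j), c (Fin.cast hlen j)) := by
          rw [← hgi, huget]
        have hsy : π.symm x.1 = Fin.cast hlen j := by
          rw [hx2]
          simp
        have hmemF : (π.symm x.1 ∈ F t) ↔ (x ∈ (f t).1) := by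
          rw [hsy, hFdef]
          rw [Finset.mem_filter]
          simp only [Finset.mem_univ, true_and, decide_eq_true_eq]
          rw [hgi]
        exact decide_eq_decide.mpr hmemF
      rw [hcong, filter_eq_sublist hnodup (hsubt t) _ (by intro x _; simp)]
  haveI : NeZero r := ⟨hr.ne'⟩
  rw [← Nat.card_eq_of_bijective Θ hbij, Nat.card_prod, Nat.card_prod,
    Nat.card_eq_fintype_card (α := Fin n → ZMod r), Nat.card_eq_fintype_card (α := Equiv.Perm (Fin n))]
  simp [Fintype.card_perm, ZMod.card]
  try ring

/-! ### Descents and position flags -/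

lemma permApp_eq {v : Equiv.Perm (Fin n)} {x : ℕ} (hx : x < n) :
    permApp v (x + 1) = (v ⟨x, hx⟩ : ℕ) + 1 := by
  unfold permApp
  rw [dif_pos (show x + 1 - 1 < n by omega)]
  simp only [Nat.add_sub_cancel]

lemma mem_descentSet_iff {v : Equiv.Perm (Fin n)} {x : ℕ} (hx : x + 1 < n) :
    (x + 1) ∈ descentSet v ↔ (v ⟨x + 1, hx⟩ : ℕ) < (v ⟨x, by omega⟩ : ℕ) := by
  unfold descentSet
  rw [Finset.mem_filter, Finset.mem_Icc]
  rw [permApp_eq hx, permApp_eq (show x < n by omega)]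
  constructor
  · rintro ⟨_, h⟩
    omega
  · intro h
    exact ⟨⟨by omega, by omega⟩, by omega⟩

lemma increasing_of_no_descent {v : Equiv.Perm (Fin n)} {T : Finset ℕ}
    (hdes : descentSet v ⊆ T) (p : ℕ) :
    ∀ q, ∀ hq : q < n, p < q → (∀ t ∈ T, ¬(p < t ∧ t ≤ q)) →
      ∀ hp : p < n, (v ⟨p, hp⟩ : ℕ) < (v ⟨q, hq⟩ : ℕ) := by
  intro q
  induction q with
  | zero => intro _ h; omega
  | succ x ih =>
    intro hq hpq hno hp
    have hstep : ∀ hx : x < n, (v ⟨x, hx⟩ : ℕ) < (v ⟨x + 1, hq⟩ : ℕ) := by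
      intro hx
      have hmem : (x + 1) ∉ descentSet v := by
        intro hmem
        exact hno _ (hdes hmem) ⟨by omega, by omega⟩
      have h1 : ¬((v ⟨x + 1, hq⟩ : ℕ) < (v ⟨x, hx⟩ : ℕ)) :=
        fun hlt => hmem ((mem_descentSet_iff hq).mpr hlt)
      have h2 : (v ⟨x + 1, hq⟩ : ℕ) ≠ (v ⟨x, hx⟩ : ℕ) := by
        intro h
        have h3 : (⟨x + 1, hq⟩ : Fin n) = ⟨x, hx⟩ := v.injective (Fin.ext h)
        have h4 := congrArg Fin.val h3
        simp at h4
      omega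
    rcases Nat.lt_or_ge p x with h' | h'
    · have h4 := ih (by omega) h' (fun t ht hc => hno t ht ⟨hc.1, by omega⟩) hp
      have h5 := hstep (by omega)
      omega
    · have hpx : p = x := by omega
      subst hpx
      exact hstep hp

lemma card_filter_coe_lt (t : ℕ) (ht : t ≤ n) :
    (Finset.univ.filter (fun i : Fin n => (i : ℕ) < t)).card = t := by
  have himg : (Finset.univ.filter (fun i : Fin n => (i : ℕ) < t)).image Fin.val
      = Finset.range t := by
    ext a
    simp only [Finset.mem_image, Finset.mem_filter, Finset.mem_univ, true_and,
      Finset.mem_range]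
    constructor
    · rintro ⟨i, hi, rfl⟩
      exact hi
    · intro ha
      exact ⟨⟨a, by omega⟩, ha, rfl⟩
  have h2 := Finset.card_image_of_injective
    (Finset.univ.filter (fun i : Fin n => (i : ℕ) < t)) Fin.val_injective
  rw [himg, Finset.card_range] at h2
  exact h2.symm

lemma card_filter_symm_lt (v : Equiv.Perm (Fin n)) (t : ℕ) (ht : t ≤ n) :
    (Finset.univ.filter (fun j : Fin n => (v.symm j : ℕ) < t)).card = t := by
  have himg : (Finset.univ.filter (fun i : Fin n => (i : ℕ) < t)).image v
      = Finset.univ.filter (fun j : Fin n => (v.symm j : ℕ) < t) := by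
    ext j
    simp only [Finset.mem_image, Finset.mem_filter, Finset.mem_univ, true_and]
    constructor
    · rintro ⟨i, hi, rfl⟩
      simpa using hi
    · intro hj
      exact ⟨v.symm j, hj, by simp⟩
  rw [← himg, Finset.card_image_of_injective _ v.injective, card_filter_coe_lt t ht]

lemma perm_pos_card (σ : Equiv.Perm (Fin n)) (a : Fin n) :
    (Finset.univ.filter (fun b => (σ b : ℕ) < (σ a : ℕ))).card = (σ a : ℕ) := by
  have h := card_filter_symm_lt σ.symm (σ a : ℕ) (le_of_lt (σ a).isLt)
  simpa using h

def Fv (A : Finset ℕ) (v : Equiv.Perm (Fin n)) : {t // t ∈ A} → Finset (Fin n) :=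
  fun t => Finset.univ.filter (fun j => (v.symm j : ℕ) < (t : ℕ))

lemma Fv_cond {A : Finset ℕ} (hA : ∀ t ∈ A, 1 ≤ t ∧ t ≤ n) (v : Equiv.Perm (Fin n)) :
    flagSetCond A (Fv A v) := by
  constructor
  · intro t
    exact card_filter_symm_lt v (t : ℕ) (hA t t.2).2
  · intro s t hst j hj
    simp only [Fv, Finset.mem_filter, Finset.mem_univ, true_and] at hj ⊢
    omega

lemma key_lt_iff {m1 m2 x y : ℕ} (hx : x < n) (hy : y < n) :
    m1 * n + x < m2 * n + y ↔ (m1 < m2 ∨ (m1 = m2 ∧ x < y)) := by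
  constructor
  · intro h
    rcases Nat.lt_trichotomy m1 m2 with h' | h' | h'
    · exact Or.inl h'
    · subst h'
      exact Or.inr ⟨rfl, by omega⟩
    · exfalso
      have h2 : (m2 + 1) * n ≤ m1 * n := Nat.mul_le_mul_right n (Nat.succ_le_of_lt h')
      rw [Nat.succ_mul] at h2
      omega
  · intro h
    rcases h with h | ⟨rfl, h⟩
    · have h2 : (m1 + 1) * n ≤ m2 * n := Nat.mul_le_mul_right n (Nat.succ_le_of_lt h)
      rw [Nat.succ_mul] at h2
      omega
    · omega

def mv (T : Finset ℕ) (v : Equiv.Perm (Fin n)) (j : Fin n) : ℕ :=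
  ((insert n T).filter (fun t => (v.symm j : ℕ) < t)).min'
    ⟨n, Finset.mem_filter.mpr ⟨Finset.mem_insert_self n T, (v.symm j).isLt⟩⟩

lemma mv_spec (T : Finset ℕ) (v : Equiv.Perm (Fin n)) (j : Fin n) :
    mv T v j ∈ insert n T ∧ (v.symm j : ℕ) < mv T v j := by
  have h := Finset.min'_mem ((insert n T).filter (fun t => (v.symm j : ℕ) < t))
    ⟨n, Finset.mem_filter.mpr ⟨Finset.mem_insert_self n T, (v.symm j).isLt⟩⟩
  rw [Finset.mem_filter] at h
  exact h

lemma mv_le (T : Finset ℕ) (v : Equiv.Perm (Fin n)) (j : Fin n) {t : ℕ}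
    (ht : t ∈ insert n T) (h : (v.symm j : ℕ) < t) : mv T v j ≤ t :=
  Finset.min'_le _ _ (Finset.mem_filter.mpr ⟨ht, h⟩)

lemma pos_lt_of_key {T : Finset ℕ}
    {v : Equiv.Perm (Fin n)} (hdes : descentSet v ⊆ T) (a b : Fin n)
    (hab : (v.symm a : ℕ) < (v.symm b : ℕ)) :
    mv T v a < mv T v b ∨ (mv T v a = mv T v b ∧ (a : ℕ) < (b : ℕ)) := by
  have hmono : mv T v a ≤ mv T v b :=
    mv_le T v a (mv_spec T v b).1 (lt_trans hab (mv_spec T v b).2)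
  rcases eq_or_lt_of_le hmono with he | hlt
  · right
    refine ⟨he, ?_⟩
    have hno : ∀ t ∈ T, ¬((v.symm a : ℕ) < t ∧ t ≤ (v.symm b : ℕ)) := by
      rintro t ht ⟨h1, h2⟩
      have h3 : mv T v a ≤ t := mv_le T v a (Finset.mem_insert_of_mem ht) h1
      have h4 : (v.symm b : ℕ) < mv T v b := (mv_spec T v b).2
      omega
    have hinc := increasing_of_no_descent hdes (v.symm a : ℕ) (v.symm b : ℕ)
      (v.symm b).isLt hab hno (v.symm a).isLt
    have e1 : v ⟨(v.symm a : ℕ), (v.symm a).isLt⟩ = a := by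
      have h0 : (⟨(v.symm a : ℕ), (v.symm a).isLt⟩ : Fin n) = v.symm a := Fin.ext rfl
      rw [h0]
      simp
    have e2 : v ⟨(v.symm b : ℕ), (v.symm b).isLt⟩ = b := by
      have h0 : (⟨(v.symm b : ℕ), (v.symm b).isLt⟩ : Fin n) = v.symm b := Fin.ext rfl
      rw [h0]
      simp
    rw [e1, e2] at hinc
    exact hinc
  · exact Or.inl hlt

lemma key_iff_pos {T : Finset ℕ} {v : Equiv.Perm (Fin n)}
    (hdes : descentSet v ⊆ T) (a b : Fin n) :
    ((v.symm a : ℕ) < (v.symm b : ℕ)) ↔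
      (mv T v a * n + (a : ℕ) < mv T v b * n + (b : ℕ)) := by
  constructor
  · intro h
    exact (key_lt_iff a.isLt b.isLt).mpr (pos_lt_of_key hdes a b h)
  · intro h
    by_contra hcon
    push_neg at hcon
    rcases eq_or_lt_of_le hcon with he | hlt
    · have hab : b = a := v.symm.injective (Fin.ext he)
      subst hab
      omega
    · have h2 := (key_lt_iff b.isLt a.isLt).mpr (pos_lt_of_key hdes b a hlt)
      omega

lemma card_flagSet {T : Finset ℕ} (hn : 0 < n) (hT : T ⊆ Finset.Icc 1 (n - 1)) :
    Nat.card {F : {t // t ∈ insert n T} → Finset (Fin n) // flagSetCond (insert n T) F}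
      = Nat.card {v : Equiv.Perm (Fin n) // descentSet v ⊆ T} := by
  classical
  have hA : ∀ t ∈ insert n T, 1 ≤ t ∧ t ≤ n := by
    intro t ht
    rcases Finset.mem_insert.mp ht with rfl | ht
    · omega
    · have h := hT ht
      rw [Finset.mem_Icc] at h
      omega
  have hnA : n ∈ insert n T := Finset.mem_insert_self n T
  set A := insert n T with hAdef
  set Φ : {v : Equiv.Perm (Fin n) // descentSet v ⊆ T}
      → {F : {t // t ∈ A} → Finset (Fin n) // flagSetCond A F} :=
    fun v => ⟨Fv A v.1, Fv_cond hA v.1⟩ with hΦ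
  have hbij : Function.Bijective Φ := by
    constructor
    · -- injectivity
      rintro ⟨v, hv⟩ ⟨v', hv'⟩ h
      have h1 : ∀ (t : ℕ), t ∈ A → ∀ j : Fin n,
          ((v.symm j : ℕ) < t ↔ (v'.symm j : ℕ) < t) := by
        intro t ht j
        have h2 : Fv A v ⟨t, ht⟩ = Fv A v' ⟨t, ht⟩ := by
          have h3 := congrArg Subtype.val h
          exact congrFun h3 ⟨t, ht⟩
        have h3 := Finset.ext_iff.mp h2 j
        simpa [Fv] using h3
      have hmv : ∀ j, mv T v j = mv T v' j := by
        intro j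
        apply le_antisymm
        · exact mv_le T v j (mv_spec T v' j).1
            ((h1 _ (mv_spec T v' j).1 j).mpr (mv_spec T v' j).2)
        · exact mv_le T v' j (mv_spec T v j).1
            ((h1 _ (mv_spec T v j).1 j).mp (mv_spec T v j).2)
      have hsymm : v.symm = v'.symm := by
        apply Equiv.ext
        intro j
        apply Fin.ext
        have e1 := (perm_pos_card v.symm j).symm
        have e2 := (perm_pos_card v'.symm j).symm
        rw [e1, e2]
        congr 1
        apply Finset.filter_congr
        intro b _
        rw [key_iff_pos hv b j, key_iff_pos hv' b j, hmv b, hmv j]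
      have hvv : v = v' := by
        have h5 := congrArg Equiv.symm hsymm
        rwa [Equiv.symm_symm, Equiv.symm_symm] at h5
      exact Subtype.ext hvv
    · -- surjectivity
      rintro ⟨F, hF⟩
      have hFuniv : F ⟨n, hnA⟩ = Finset.univ :=
        Finset.eq_univ_of_card _ (by rw [hF.1 ⟨n, hnA⟩]; simp)
      have hDne : ∀ j : Fin n,
          ((A.filter (fun t => ∃ h : t ∈ A, j ∈ F ⟨t, h⟩))).Nonempty := by
        intro j
        exact ⟨n, Finset.mem_filter.mpr ⟨hnA, hnA, by rw [hFuniv]; exact Finset.mem_univ j⟩⟩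
      set mF : Fin n → ℕ :=
        fun j => (A.filter (fun t => ∃ h : t ∈ A, j ∈ F ⟨t, h⟩)).min' (hDne j) with hmFdef
      have hmF_mem : ∀ j, ∃ h : mF j ∈ A, j ∈ F ⟨mF j, h⟩ := by
        intro j
        have h0 := Finset.min'_mem _ (hDne j)
        rw [Finset.mem_filter] at h0
        exact h0.2
      have hmF_A : ∀ j, mF j ∈ A := by
        intro j
        obtain ⟨h1, _⟩ := hmF_mem j
        exact h1
      have hmF_le : ∀ j t, ∀ h : t ∈ A, j ∈ F ⟨t, h⟩ → mF j ≤ t := by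
        intro j t h hj
        exact Finset.min'_le _ _ (Finset.mem_filter.mpr ⟨h, h, hj⟩)
      have hmF_mono : ∀ j t, ∀ h : t ∈ A, mF j ≤ t → j ∈ F ⟨t, h⟩ := by
        intro j t h hle
        obtain ⟨h1, h2⟩ := hmF_mem j
        exact hF.2 ⟨mF j, h1⟩ ⟨t, h⟩ hle h2
      set key : Fin n → ℕ := fun j => mF j * n + (j : ℕ) with hkeydef
      have hkey_lt : ∀ a b : Fin n,
          (key a < key b ↔ (mF a < mF b ∨ (mF a = mF b ∧ (a : ℕ) < (b : ℕ)))) :=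
        fun a b => key_lt_iff a.isLt b.isLt
      have hkey_inj : ∀ a b : Fin n, key a = key b → a = b := by
        intro a b h
        have h5 : ¬(mF a < mF b ∨ (mF a = mF b ∧ (a : ℕ) < (b : ℕ))) := by
          intro hc
          have := (hkey_lt a b).mpr hc
          omega
        have h6 : ¬(mF b < mF a ∨ (mF b = mF a ∧ (b : ℕ) < (a : ℕ))) := by
          intro hc
          have := (hkey_lt b a).mpr hc
          omega
        have h7 : mF a = mF b := by omega
        have h8 : mF a * n = mF b * n := by rw [h7]
        apply Fin.ext
        have h9 : key a = key b := h
        rw [hkeydef] at h9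
        simp only at h9
        omega
      have hwbound : ∀ j : Fin n,
          (Finset.univ.filter (fun j' => key j' < key j)).card < n := by
        intro j
        have hsub : (Finset.univ.filter (fun j' => key j' < key j))
            ⊆ Finset.univ.erase j := by
          intro x hx
          rw [Finset.mem_filter] at hx
          rw [Finset.mem_erase]
          refine ⟨?_, Finset.mem_univ x⟩
          intro he
          rw [he] at hx
          omega
        have h0 := Finset.card_le_card hsub
        rw [Finset.card_erase_of_mem (Finset.mem_univ j), Finset.card_univ,
          Fintype.card_fin] at h0
        omega
      set w : Fin n → Fin n :=
        fun j => ⟨(Finset.univ.filter (fun j' => key j' < key j)).card, hwbound j⟩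
        with hwdef
      have hw_val : ∀ j, (w j : ℕ) = (Finset.univ.filter (fun j' => key j' < key j)).card :=
        fun j => rfl
      have hw_mono : ∀ a b, key a < key b → (w a : ℕ) < (w b : ℕ) := by
        intro a b h
        rw [hw_val, hw_val]
        apply Finset.card_lt_card
        rw [Finset.ssubset_def]
        constructor
        · intro x hx
          rw [Finset.mem_filter] at hx ⊢
          exact ⟨hx.1, by omega⟩
        · intro hsub
          have ha : a ∈ Finset.univ.filter (fun j' => key j' < key b) :=
            Finset.mem_filter.mpr ⟨Finset.mem_univ a, h⟩
          have h0 := hsub ha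
          rw [Finset.mem_filter] at h0
          omega
      have hw_inj : Function.Injective w := by
        intro a b h
        rcases Nat.lt_trichotomy (key a) (key b) with h' | h' | h'
        · have h0 := hw_mono a b h'
          have h1 := congrArg Fin.val h
          omega
        · exact hkey_inj a b h'
        · have h0 := hw_mono b a h'
          have h1 := congrArg Fin.val h
          omega
      have hw_lt_iff : ∀ a b, ((w a : ℕ) < (w b : ℕ) ↔ key a < key b) := by
        intro a b
        constructor
        · intro h
          rcases Nat.lt_trichotomy (key a) (key b) with h' | h' | h'
          · exact h'
          · exfalso
            rw [hkey_inj a b h'] at h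
            omega
          · have h0 := hw_mono b a h'
            omega
        · exact hw_mono a b
      set vF : Equiv.Perm (Fin n) :=
        (Equiv.ofBijective w (Finite.injective_iff_bijective.mp hw_inj)).symm with hvFdef
      have hvF_symm : ∀ j, vF.symm j = w j := fun j => rfl
      have hK2 : ∀ (t : ℕ) (ht : t ∈ A) (j : Fin n),
          ((vF.symm j : ℕ) < t ↔ j ∈ F ⟨t, ht⟩) := by
        intro t ht j
        rw [hvF_symm]
        constructor
        · intro hlt
          by_contra hj
          have hmFj : t < mF j := by
            rcases Nat.lt_or_ge t (mF j) with h' | h'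
            · exact h'
            · exact absurd (hmF_mono j t ht h') hj
          have hsub : F ⟨t, ht⟩ ⊆ Finset.univ.filter (fun j' => key j' < key j) := by
            intro x hxF
            rw [Finset.mem_filter]
            refine ⟨Finset.mem_univ x, ?_⟩
            have hx : mF x ≤ t := hmF_le x t ht hxF
            exact (hkey_lt x j).mpr (Or.inl (by omega))
          have hcF : (F ⟨t, ht⟩).card = t := hF.1 ⟨t, ht⟩
          have hcard := Finset.card_le_card hsub
          rw [hcF] at hcard
          rw [hw_val] at hlt
          omega
        · intro hjF
          have hmFj : mF j ≤ t := hmF_le j t ht hjF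
          have hsub : Finset.univ.filter (fun j' => key j' < key j)
              ⊆ (F ⟨t, ht⟩).erase j := by
            intro x hx
            rw [Finset.mem_filter] at hx
            rw [Finset.mem_erase]
            have hkx : key x < key j := hx.2
            have hmx : mF x ≤ mF j := by
              rcases (hkey_lt x j).mp hkx with h' | ⟨h', _⟩
              · omega
              · omega
            refine ⟨?_, hmF_mono x t ht (by omega)⟩
            intro he
            rw [he] at hkx
            omega
          have hcF : (F ⟨t, ht⟩).card = t := hF.1 ⟨t, ht⟩
          have hcard := Finset.card_le_card hsub
          rw [Finset.card_erase_of_mem hjF, hcF] at hcard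
          have ht1 : 1 ≤ t := (hA t ht).1
          rw [hw_val]
          omega
      have hK3 : descentSet vF ⊆ T := by
        intro i hi
        have hIcc : 1 ≤ i ∧ i ≤ n - 1 := by
          have h0 := (Finset.mem_filter.mp hi).1
          rwa [Finset.mem_Icc] at h0
        obtain ⟨hi1, hi2⟩ := hIcc
        have hxn : (i - 1) + 1 < n := by omega
        have hin1 : i - 1 < n := by omega
        have hieq : i = (i - 1) + 1 := by omega
        have hdes2 : (vF ⟨(i - 1) + 1, hxn⟩ : ℕ) < (vF ⟨i - 1, hin1⟩ : ℕ) := by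
          rw [hieq] at hi
          exact (mem_descentSet_iff hxn).mp hi
        have hwa : (w (vF ⟨i - 1, hin1⟩) : ℕ) = i - 1 := by
          rw [← hvF_symm]
          simp
        have hwb : (w (vF ⟨(i - 1) + 1, hxn⟩) : ℕ) = i := by
          rw [← hvF_symm]
          simp
          omega
        have hkab : key (vF ⟨i - 1, hin1⟩) < key (vF ⟨(i - 1) + 1, hxn⟩) := by
          apply (hw_lt_iff _ _).mp
          rw [hwa, hwb]
          omega
        have hmab : mF (vF ⟨i - 1, hin1⟩) < mF (vF ⟨(i - 1) + 1, hxn⟩) := by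
          rcases (hkey_lt _ _).mp hkab with h' | ⟨h', hv2⟩
          · exact h'
          · omega
        have htA : mF (vF ⟨i - 1, hin1⟩) ∈ A := hmF_A _
        have hset : F ⟨mF (vF ⟨i - 1, hin1⟩), htA⟩
            = Finset.univ.filter (fun j => (w j : ℕ) < i) := by
          ext j
          rw [Finset.mem_filter]
          constructor
          · intro hjF
            refine ⟨Finset.mem_univ j, ?_⟩
            have hmj : mF j ≤ mF (vF ⟨i - 1, hin1⟩) := hmF_le j _ htA hjF
            by_contra hge
            push_neg at hge
            rcases eq_or_lt_of_le hge with he | hlt2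
            · have hjb : j = vF ⟨(i - 1) + 1, hxn⟩ := hw_inj (Fin.ext (by omega))
              rw [hjb] at hmj
              omega
            · have hk : key (vF ⟨(i - 1) + 1, hxn⟩) < key j := by
                apply (hw_lt_iff _ _).mp
                omega
              have h0 : mF (vF ⟨(i - 1) + 1, hxn⟩) ≤ mF j := by
                rcases (hkey_lt _ _).mp hk with h' | ⟨h', _⟩
                · omega
                · omega
              omega
          · rintro ⟨_, hwj⟩
            rcases Nat.lt_or_ge (w j : ℕ) (w (vF ⟨i - 1, hin1⟩) : ℕ) with h' | h'
            · have hk : key j < key (vF ⟨i - 1, hin1⟩) := (hw_lt_iff _ _).mp h'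
              have h0 : mF j ≤ mF (vF ⟨i - 1, hin1⟩) := by
                rcases (hkey_lt _ _).mp hk with h'' | ⟨h'', _⟩
                · omega
                · omega
              exact hmF_mono j _ htA h0
            · have hja : j = vF ⟨i - 1, hin1⟩ := hw_inj (Fin.ext (by omega))
              rw [hja]
              exact hmF_mono _ _ htA (le_refl _)
        have hc1 : (F ⟨mF (vF ⟨i - 1, hin1⟩), htA⟩).card = mF (vF ⟨i - 1, hin1⟩) :=
          hF.1 ⟨_, htA⟩
        have hc2 : (Finset.univ.filter (fun j => (w j : ℕ) < i)).card = i := by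
          have h0 : (Finset.univ.filter (fun j => (w j : ℕ) < i))
              = (Finset.univ.filter (fun j => (vF.symm j : ℕ) < i)) := by
            apply Finset.filter_congr
            intro j _
            rw [hvF_symm]
          rw [h0, card_filter_symm_lt vF i (by omega)]
        have hti : mF (vF ⟨i - 1, hin1⟩) = i := by
          rw [← hc1, hset, hc2]
        rcases Finset.mem_insert.mp htA with he | hmem
        · omega
        · rw [← hti]
          exact hmem
      refine ⟨⟨vF, hK3⟩, ?_⟩
      apply Subtype.ext
      funext t
      ext j
      have h0 := hK2 (t : ℕ) t.2 j
      simp only [hΦ, Fv, Finset.mem_filter, Finset.mem_univ, true_and]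
      exact h0
  exact (Nat.card_eq_of_bijective Φ hbij).symm

/-! ### Final counting lemmas -/

lemma hA_of {T : Finset ℕ} (hn : 0 < n) (hT : T ⊆ Finset.Icc 1 (n - 1)) :
    ∀ t ∈ insert n T, 1 ≤ t ∧ t ≤ n := by
  intro t ht
  rcases Finset.mem_insert.mp ht with rfl | ht
  · omega
  · have h := hT ht
    rw [Finset.mem_Icc] at h
    omega

lemma cAlpha_eq_ncard (A : Finset ℕ) (g : Equiv.Perm (Fin n)) :
    cAlpha n r A g = ((Set.ncard {C : Set (WithTop (CInjWord n r)) |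
      C ∈ maxChainsIn (rankSel (rkC n r) A) ∧ WithTop.map (permCWord g) '' C = C}) : ℤ) := rfl

lemma cAlpha_zero_of_ne_one (hn : 0 < n) {T : Finset ℕ} (hT : T ⊆ Finset.Icc 1 (n - 1))
    {g : Equiv.Perm (Fin n)} (hg : g ≠ 1) : cAlpha n r (insert n T) g = 0 := by
  rw [cAlpha_eq_ncard, fixed_chain_empty (hA_of hn hT) (Finset.mem_insert_self n T) hn hg]
  simp

lemma cAlpha_one_eq (hn : 0 < n) (hr : 0 < r) {T : Finset ℕ} (hT : T ⊆ Finset.Icc 1 (n - 1)) :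
    cAlpha n r (insert n T) 1
      = (r : ℤ) ^ n * (n.factorial : ℤ)
          * (Nat.card {v : Equiv.Perm (Fin n) // descentSet v ⊆ T} : ℤ) := by
  rw [cAlpha_eq_ncard]
  have hset : {C : Set (WithTop (CInjWord n r)) |
      C ∈ maxChainsIn (rankSel (rkC n r) (insert n T)) ∧ WithTop.map (permCWord 1) '' C = C}
      = maxChainsIn (rankSel (rkC n r) (insert n T)) := by
    ext C
    simp [act_one_image]
  rw [hset, ncard_MC (hA_of hn hT),
    card_flagWord hr (hA_of hn hT) (Finset.mem_insert_self n T), card_flagSet hn hT]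
  push_cast
  ring

lemma dcount_eq {T : Finset ℕ} :
    (Nat.card {v : Equiv.Perm (Fin n) // descentSet v ⊆ T} : ℤ)
      = ∑ U ∈ T.powerset, (numDescentSet n U : ℤ) := by
  classical
  rw [Nat.card_eq_fintype_card, Fintype.card_subtype]
  rw [Finset.card_eq_sum_card_fiberwise
    (f := fun v : Equiv.Perm (Fin n) => descentSet v) (t := T.powerset)
    (fun v hv => Finset.mem_powerset.mpr (Finset.mem_filter.mp hv).2)]
  push_cast
  apply Finset.sum_congr rfl
  intro U hU
  have h1 : numDescentSet n U = Fintype.card {v : Equiv.Perm (Fin n) // descentSet v = U} := by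
    rw [numDescentSet, Nat.card_eq_fintype_card]
  rw [h1, Fintype.card_subtype]
  congr 1
  congr 1
  ext v
  simp only [Finset.mem_filter, Finset.mem_univ, true_and]
  constructor
  · rintro ⟨_, h⟩
    exact h
  · intro h
    exact ⟨by rw [h]; exact Finset.mem_powerset.mp hU, h⟩

lemma sum_incl_excl (S : Finset ℕ) (b : Finset ℕ → ℤ) :
    ∑ T ∈ S.powerset, (-1 : ℤ) ^ (S.card - T.card) * ∑ U ∈ T.powerset, b U = b S := by
  classical
  have h1 : ∀ T ∈ S.powerset, (-1 : ℤ) ^ (S.card - T.card) * ∑ U ∈ T.powerset, b U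
      = ∑ U ∈ T.powerset, (-1 : ℤ) ^ (S.card - T.card) * b U :=
    fun T _ => Finset.mul_sum _ _ _
  rw [Finset.sum_congr rfl h1]
  rw [Finset.sum_comm' (s := S.powerset) (t := fun T => T.powerset)
    (t' := S.powerset) (s' := fun U => S.powerset.filter (fun T => U ⊆ T))
    (by
      intro T U
      simp only [Finset.mem_powerset, Finset.mem_filter]
      constructor
      · rintro ⟨hTS, hUT⟩
        exact ⟨⟨hTS, hUT⟩, hUT.trans hTS⟩
      · rintro ⟨⟨hTS, hUT⟩, _⟩
        exact ⟨hTS, hUT⟩)]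
  have h2 : ∀ U ∈ S.powerset,
      ∑ T ∈ S.powerset.filter (fun T => U ⊆ T), (-1 : ℤ) ^ (S.card - T.card) * b U
        = (if U = S then 1 else 0) * b U := by
    intro U hU
    rw [← Finset.sum_mul]
    congr 1
    have hUS : U ⊆ S := Finset.mem_powerset.mp hU
    have h3 : ∑ T ∈ S.powerset.filter (fun T => U ⊆ T), (-1 : ℤ) ^ (S.card - T.card)
        = ∑ V ∈ (S \ U).powerset, (-1 : ℤ) ^ ((S \ U).card - V.card) := by
      apply Finset.sum_nbij' (i := fun T => T \ U) (j := fun V => U ∪ V)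
      · intro T hT
        rw [Finset.mem_filter, Finset.mem_powerset] at hT
        rw [Finset.mem_powerset]
        exact Finset.sdiff_subset_sdiff hT.1 (Finset.Subset.refl U)
      · intro V hV
        rw [Finset.mem_powerset] at hV
        rw [Finset.mem_filter, Finset.mem_powerset]
        constructor
        · exact Finset.union_subset hUS (hV.trans (Finset.sdiff_subset))
        · exact Finset.subset_union_left
      · intro T hT
        rw [Finset.mem_filter] at hT
        exact Finset.union_sdiff_of_subset hT.2
      · intro V hV
        rw [Finset.mem_powerset] at hV
        apply Finset.union_sdiff_cancel_left
        exact Finset.disjoint_left.mpr (fun a haU haV => (Finset.mem_sdiff.mp (hV haV)).2 haU)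
      · intro T hT
        rw [Finset.mem_filter, Finset.mem_powerset] at hT
        congr 1
        have hc1 : (T \ U).card = T.card - U.card := Finset.card_sdiff_of_subset hT.2
        have hc2 : (S \ U).card = S.card - U.card := Finset.card_sdiff_of_subset hUS
        have hUT : U.card ≤ T.card := Finset.card_le_card hT.2
        have hTS : T.card ≤ S.card := Finset.card_le_card hT.1
        omega
    rw [h3]
    have h4 : ∀ V ∈ (S \ U).powerset,
        (-1 : ℤ) ^ ((S \ U).card - V.card)
          = (-1 : ℤ) ^ (S \ U).card * (-1 : ℤ) ^ V.card := by
      intro V hV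
      have hVc : V.card ≤ (S \ U).card := Finset.card_le_card (Finset.mem_powerset.mp hV)
      have e1 : (-1 : ℤ) ^ ((S \ U).card - V.card) * (-1 : ℤ) ^ V.card
          = (-1 : ℤ) ^ (S \ U).card := by
        rw [← pow_add]
        congr 1
        omega
      have e2 : (-1 : ℤ) ^ V.card * (-1 : ℤ) ^ V.card = 1 := by
        rw [← mul_pow]
        norm_num
      calc (-1 : ℤ) ^ ((S \ U).card - V.card)
          = (-1 : ℤ) ^ ((S \ U).card - V.card) * ((-1 : ℤ) ^ V.card * (-1 : ℤ) ^ V.card) := by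
            rw [e2, mul_one]
        _ = ((-1 : ℤ) ^ ((S \ U).card - V.card) * (-1 : ℤ) ^ V.card) * (-1 : ℤ) ^ V.card := by
            ring
        _ = (-1 : ℤ) ^ (S \ U).card * (-1 : ℤ) ^ V.card := by rw [e1]
    rw [Finset.sum_congr rfl h4, ← Finset.mul_sum, Finset.sum_powerset_neg_one_pow_card]
    by_cases hUSeq : U = S
    · subst hUSeq
      rw [if_pos rfl, if_pos (Finset.sdiff_self U)]
      simp
    · rw [if_neg hUSeq,
        if_neg (fun he => hUSeq (Finset.Subset.antisymm hUS
          (Finset.sdiff_eq_empty_iff_subset.mp he)))]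
      simp
  rw [Finset.sum_congr rfl h2]
  have h5 : ∀ U ∈ S.powerset, (if U = S then 1 else 0) * b U = if U = S then b U else 0 := by
    intro U _
    by_cases h : U = S <;> simp [h]
  rw [Finset.sum_congr rfl h5, Finset.sum_ite_eq' S.powerset S b,
    if_pos (Finset.mem_powerset_self S)]

end Aux

/-- **Eq. (10)**: for the `𝔖_n`-action on the poset of `r`-colored injective words,
`β_P(S) + β_P(S ∪ {n}) = b_n(S) · r^n · ρ^reg` for all `S ⊆ {1,…,n-1}`
(an identity of characters; the character of the regular representation of `𝔖_n`
takes the value `n!` at the identity and `0` elsewhere). -/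
theorem statement6 (n r : ℕ) (hn : 0 < n) (hr : 0 < r)
    (S : Finset ℕ) (hS : S ⊆ Finset.Icc 1 (n - 1)) :
    ∀ g : Equiv.Perm (Fin n),
      cBeta n r S g + cBeta n r (insert n S) g =
        (numDescentSet n S : ℤ) * (r : ℤ) ^ n *
          (if g = 1 then (n.factorial : ℤ) else 0) := by
  intro g
  have hSn : n ∉ S := fun h => by
    have h2 := hS h
    rw [Finset.mem_Icc] at h2
    omega
  have hexp : ∀ X : Finset ℕ, cBeta n r X g
      = ∑ T ∈ X.powerset, (-1 : ℤ) ^ (X.card - T.card) * cAlpha n r T g := fun X => rfl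
  have hdisj : Disjoint S.powerset (Finset.image (insert n) S.powerset) := by
    rw [Finset.disjoint_right]
    intro T hT hT2
    obtain ⟨U, hU, rfl⟩ := Finset.mem_image.mp hT
    exact hSn (Finset.mem_powerset.mp hT2 (Finset.mem_insert_self n U))
  have himg : ∀ x ∈ S.powerset, ∀ y ∈ S.powerset, insert n x = insert n y → x = y := by
    intro x hx y hy he
    have hnx : n ∉ x := fun h => hSn (Finset.mem_powerset.mp hx h)
    have hny : n ∉ y := fun h => hSn (Finset.mem_powerset.mp hy h)
    rw [← Finset.erase_insert hnx, ← Finset.erase_insert hny, he]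
  have hcS : (insert n S).card = S.card + 1 := Finset.card_insert_of_notMem hSn
  have hmain : cBeta n r S g + cBeta n r (insert n S) g
      = ∑ T ∈ S.powerset, (-1 : ℤ) ^ (S.card - T.card) * cAlpha n r (insert n T) g := by
    rw [hexp S, hexp (insert n S), Finset.powerset_insert, Finset.sum_union hdisj,
      Finset.sum_image himg]
    have e1 : ∀ T ∈ S.powerset, (-1 : ℤ) ^ ((insert n S).card - T.card) * cAlpha n r T g
        = -((-1 : ℤ) ^ (S.card - T.card) * cAlpha n r T g) := by
      intro T hT
      have hTc : T.card ≤ S.card := Finset.card_le_card (Finset.mem_powerset.mp hT)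
      rw [hcS, show S.card + 1 - T.card = (S.card - T.card) + 1 by omega, pow_succ]
      ring
    have e2 : ∀ T ∈ S.powerset,
        (-1 : ℤ) ^ ((insert n S).card - (insert n T).card) * cAlpha n r (insert n T) g
          = (-1 : ℤ) ^ (S.card - T.card) * cAlpha n r (insert n T) g := by
      intro T hT
      have hnT : n ∉ T := fun h => hSn (Finset.mem_powerset.mp hT h)
      rw [hcS, Finset.card_insert_of_notMem hnT,
        show S.card + 1 - (T.card + 1) = S.card - T.card by omega]
    rw [Finset.sum_congr rfl e1, Finset.sum_congr rfl e2, Finset.sum_neg_distrib]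
    ring
  by_cases hg : g = 1
  · subst hg
    rw [if_pos rfl, hmain]
    have hα : ∀ T ∈ S.powerset, (-1 : ℤ) ^ (S.card - T.card) * cAlpha n r (insert n T) 1
        = (r : ℤ) ^ n * (n.factorial : ℤ)
            * ((-1 : ℤ) ^ (S.card - T.card) * ∑ U ∈ T.powerset, (numDescentSet n U : ℤ)) := by
      intro T hT
      have hTsub : T ⊆ Finset.Icc 1 (n - 1) := (Finset.mem_powerset.mp hT).trans hS
      rw [cAlpha_one_eq hn hr hTsub, dcount_eq]
      ring
    rw [Finset.sum_congr rfl hα, ← Finset.mul_sum,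
      sum_incl_excl S (fun U => (numDescentSet n U : ℤ))]
    ring
  · rw [if_neg hg, hmain]
    have hα : ∀ T ∈ S.powerset, (-1 : ℤ) ^ (S.card - T.card) * cAlpha n r (insert n T) g = 0 := by
      intro T hT
      rw [cAlpha_zero_of_ne_one hn ((Finset.mem_powerset.mp hT).trans hS) hg, mul_zero]
    rw [Finset.sum_congr rfl hα, Finset.sum_const_zero]
    ring
end
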